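/- arXiv:1702.01277 — 3 statements merged into one kernel-verified Lean document; each statement's English description precedes it below -/
import Mathlib

section
/- For every N ∈ ℕ there exist a set S of at least N points in the plane in general position and a triangulation T = (S,E) of S that is 4-connected, such that for every triangulation T' = (S,E') of S, the biplane graph (S, E ∪ E') is not 5-connected. -/
set_option maxHeartbeats 1000000
set_option linter.unusedVariables false
set_option linter.unusedTactic false


/-- A point in the plane. -/
abbrev Pt : Type := ℝ × ℝ

/-- A finite point set is in *general position* if no three of its points are collinear. -/
def InGenPos (S : Set Pt) : Prop :=
  ∀ p ∈ S, ∀ q ∈ S, ∀ r ∈ S, p ≠ q → p ≠ r → q ≠ r → ¬ Collinear ℝ ({p, q, r} : Set Pt)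

/-- A point set is in *convex position* if no point lies in the convex hull of the others. -/
def InConvexPos (S : Set Pt) : Prop :=
  ∀ p ∈ S, p ∉ convexHull ℝ (S \ {p})

/-- `E` is a set of unordered pairs of distinct points of `S`. -/
def IsEdgeSetOn (S : Set Pt) (E : Set (Sym2 Pt)) : Prop :=
  ∀ e ∈ E, ¬ e.IsDiag ∧ ∀ p ∈ e, p ∈ S

/-- The open segment spanned by an unordered pair of points. -/
def openSeg : Sym2 Pt → Set Pt :=
  Sym2.lift ⟨fun a b => openSegment ℝ a b, fun a b => openSegment_symm ℝ a b⟩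

/-- Two edges *cross* if their open segments intersect. -/
def Cross (e f : Sym2 Pt) : Prop := (openSeg e ∩ openSeg f).Nonempty

/-- A *plane graph* on `S`: a geometric graph whose edges are pairwise noncrossing. -/
def IsPlaneGraph (S : Set Pt) (E : Set (Sym2 Pt)) : Prop :=
  IsEdgeSetOn S E ∧ ∀ e ∈ E, ∀ f ∈ E, e ≠ f → ¬ Cross e f

/-- A *biplane graph* on `S`: the edge set splits into two plane graphs. -/
def IsBiplaneGraph (S : Set Pt) (E : Set (Sym2 Pt)) : Prop :=
  IsEdgeSetOn S E ∧ ∃ E₁ E₂ : Set (Sym2 Pt), E = E₁ ∪ E₂ ∧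
    IsPlaneGraph S E₁ ∧ IsPlaneGraph S E₂

/-- The geometric graph `(S, E)` is `k`-connected: more than `k` vertices, and deleting
any fewer than `k` vertices leaves a connected graph. -/
def KConnected (k : ℕ) (S : Set Pt) (E : Set (Sym2 Pt)) : Prop :=
  k < S.ncard ∧ ∀ C ⊆ S, C.ncard < k →
    ((SimpleGraph.fromEdgeSet E).induce (S \ C)).Connected

/-- A *triangulation* of `S`: an edge-maximal plane graph on `S`. -/
def IsTriangulation (S : Set Pt) (E : Set (Sym2 Pt)) : Prop :=
  IsPlaneGraph S E ∧ ∀ p ∈ S, ∀ q ∈ S, p ≠ q → s(p, q) ∉ E →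
    ¬ IsPlaneGraph S (insert s(p, q) E)

/-- `{u,v}` is a *hull edge* of `S`: all other points of `S` lie strictly on one side
of the line through `u` and `v`. -/
def IsHullEdge (S : Set Pt) (u v : Pt) : Prop :=
  u ≠ v ∧ ((∀ p ∈ S \ {u, v},
      0 < (v.1 - u.1) * (p.2 - u.2) - (v.2 - u.2) * (p.1 - u.1)) ∨
    (∀ p ∈ S \ {u, v},
      (v.1 - u.1) * (p.2 - u.2) - (v.2 - u.2) * (p.1 - u.1) < 0))

/-- A *fan* on a set `S` of at least 3 points in convex position. -/
def IsFan (S : Set Pt) (E : Set (Sym2 Pt)) : Prop :=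
  InConvexPos S ∧ 3 ≤ S.ncard ∧ ∃ v₀ ∈ S,
    E = {e | ∃ u ∈ S, ∃ v ∈ S, e = s(u, v) ∧ IsHullEdge S u v} ∪
        {e | ∃ p ∈ S, p ≠ v₀ ∧ e = s(v₀, p)}

/-- A *wheel*: one point in the interior of the convex hull, joined to all other points,
which are in convex position and joined along the hull. -/
def IsWheel (S : Set Pt) (E : Set (Sym2 Pt)) : Prop :=
  ∃ c ∈ S, c ∈ interior (convexHull ℝ S) ∧
    (∀ p ∈ S, p ∈ interior (convexHull ℝ S) → p = c) ∧
    InConvexPos (S \ {c}) ∧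
    E = {e | ∃ u ∈ S, ∃ v ∈ S, e = s(u, v) ∧ IsHullEdge S u v} ∪
        {e | ∃ p ∈ S, p ≠ c ∧ e = s(c, p)}

/-- `{u,v,w}` is a *triangle* of the triangulation `(S,E)`. -/
def IsTriangleOf (S : Set Pt) (E : Set (Sym2 Pt)) (u v w : Pt) : Prop :=
  u ≠ v ∧ u ≠ w ∧ v ≠ w ∧ s(u, v) ∈ E ∧ s(v, w) ∈ E ∧ s(u, w) ∈ E ∧
  ∀ p ∈ S, p ∉ interior (convexHull ℝ ({u, v, w} : Set Pt))

/-- The edge `{u,v}` is *flippable* in the triangulation `(S,E)`. -/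
def Flippable (S : Set Pt) (E : Set (Sym2 Pt)) (u v : Pt) : Prop :=
  s(u, v) ∈ E ∧ ∃ w ∈ S, ∃ x ∈ S, IsTriangleOf S E u v w ∧ IsTriangleOf S E u v x ∧
    (openSegment ℝ u v ∩ openSegment ℝ w x).Nonempty

/-- A biplane graph is *maximal* if no proper edge-superset is biplane. -/
def IsMaximalBiplane (S : Set Pt) (E : Set (Sym2 Pt)) : Prop :=
  IsBiplaneGraph S E ∧ ∀ E'' : Set (Sym2 Pt), IsBiplaneGraph S E'' → ¬ E ⊂ E''

/-- There are arbitrarily large point sets in general position with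
4-connected triangulations that cannot be augmented by a second triangulation into a
5-connected biplane graph. -/
-- ===================== auxiliary development =====================


noncomputable def ee (j : ℕ) : ℝ := if Even j then 0 else 3/8

noncomputable def qpt (j : ℕ) : Pt := ((j : ℝ)/2, ((j : ℝ)/2)^2 + ee j)

def ori (A B C : Pt) : ℝ := (B.1 - A.1) * (C.2 - A.2) - (C.1 - A.1) * (B.2 - A.2)

lemma ori_cyc (A B C : Pt) : ori B C A = ori A B C := by unfold ori; ring

lemma ori_swap (A B C : Pt) : ori A C B = - ori A B C := by unfold ori; ring

lemma ori_swap12 (A B C : Pt) : ori B A C = - ori A B C := by unfold ori; ring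

lemma ori_q (a b d : ℕ) : ori (qpt a) (qpt b) (qpt d) =
    ((b:ℝ)-a)/2 * (((d:ℝ)-a)/2) * (((d:ℝ)-b)/2)
      + ((b:ℝ)-a)/2 * (ee d - ee a) - ((d:ℝ)-a)/2 * (ee b - ee a) := by
  simp only [ori, qpt]; ring

lemma ee_even {j : ℕ} (h : Even j) : ee j = 0 := by simp [ee, h]
lemma ee_odd {j : ℕ} (h : Odd j) : ee j = 3/8 := by
  simp [ee, Nat.not_even_iff_odd.2 h]

/-- Master orientation lemma. -/
lemma master {a b d : ℕ} (h1 : a < b) (h2 : b < d)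
    (h3 : ¬(Even a ∧ b = a+1 ∧ d = a+2)) :
    0 < ori (qpt a) (qpt b) (qpt d) := by
  rw [ori_q]
  have hba : (1:ℝ) ≤ (b:ℝ) - a := by
    have h := (Nat.cast_le (α := ℝ)).2 (Nat.succ_le_of_lt h1); push_cast at h; linarith
  have hdb : (1:ℝ) ≤ (d:ℝ) - b := by
    have h := (Nat.cast_le (α := ℝ)).2 (Nat.succ_le_of_lt h2); push_cast at h; linarith
  have hda : (2:ℝ) ≤ (d:ℝ) - a := by linarith
  have pba : (0:ℝ) < (b:ℝ) - a := by linarith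
  have pdb : (0:ℝ) < (d:ℝ) - b := by linarith
  have pda : (0:ℝ) < (d:ℝ) - a := by linarith
  rcases Nat.even_or_odd a with ha | ha <;> rcases Nat.even_or_odd b with hbp | hbp <;>
    rcases Nat.even_or_odd d with hdp | hdp
  · rw [ee_even ha, ee_even hbp, ee_even hdp]
    nlinarith [mul_pos (mul_pos pba pda) pdb]
  · rw [ee_even ha, ee_even hbp, ee_odd hdp]
    nlinarith [mul_pos (mul_pos pba pda) pdb]
  · -- even a, odd b, even d : the exception parity class
    rw [ee_even ha, ee_odd hbp, ee_even hdp]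
    have key : 2 ≤ (b - a) * (d - b) := by
      rcases Nat.lt_or_ge (a+1) b with h | h
      · have l1 : 2 ≤ b - a := by omega
        have l2 : 1 ≤ d - b := by omega
        calc 2 = 2 * 1 := by norm_num
        _ ≤ (b-a) * (d-b) := Nat.mul_le_mul l1 l2
      · have hb1 : b = a + 1 := by omega
        have hd2 : d ≠ a + 2 := fun hc => h3 ⟨ha, hb1, hc⟩
        have l1 : 1 ≤ b - a := by omega
        have l2 : 2 ≤ d - b := by omega
        calc 2 = 1 * 2 := by norm_num
        _ ≤ (b-a) * (d-b) := Nat.mul_le_mul l1 l2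
    have keyR : (2:ℝ) ≤ ((b:ℝ)-a) * ((d:ℝ)-b) := by
      have h := (Nat.cast_le (α := ℝ)).2 key
      push_cast [Nat.cast_sub h1.le, Nat.cast_sub h2.le] at h
      nlinarith
    nlinarith [mul_le_mul_of_nonneg_left keyR pda.le]
  · -- even a, odd b, odd d
    rw [ee_even ha, ee_odd hbp, ee_odd hdp]
    have h4 : a + 3 ≤ d := by
      rcases ha with ⟨m, hm⟩; rcases hdp with ⟨l, hl⟩; omega
    have hda3 : (3:ℝ) ≤ (d:ℝ) - a := by
      have h := (Nat.cast_le (α := ℝ)).2 h4; push_cast at h; linarith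
    have k1 : (3:ℝ) ≤ ((b:ℝ)-a) * ((d:ℝ)-a) := by nlinarith
    nlinarith [mul_le_mul_of_nonneg_left k1 pdb.le]
  · rw [ee_odd ha, ee_even hbp, ee_even hdp]
    nlinarith [mul_pos (mul_pos pba pda) pdb]
  · rw [ee_odd ha, ee_even hbp, ee_odd hdp]
    nlinarith [mul_pos (mul_pos pba pda) pdb]
  · -- odd a, odd b, even d
    rw [ee_odd ha, ee_odd hbp, ee_even hdp]
    have h4 : a + 3 ≤ d := by
      rcases ha with ⟨m, hm⟩; rcases hdp with ⟨l, hl⟩; omega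
    have hda3 : (3:ℝ) ≤ (d:ℝ) - a := by
      have h := (Nat.cast_le (α := ℝ)).2 h4; push_cast at h; linarith
    have k1 : (3:ℝ) ≤ ((d:ℝ)-b) * ((d:ℝ)-a) := by nlinarith
    nlinarith [mul_le_mul_of_nonneg_left k1 pba.le]
  · rw [ee_odd ha, ee_odd hbp, ee_odd hdp]
    nlinarith [mul_pos (mul_pos pba pda) pdb]

lemma master_exc {a : ℕ} (ha : Even a) :
    ori (qpt a) (qpt (a+1)) (qpt (a+2)) = -(1/8) := by
  have h1 : Odd (a+1) := ha.add_one
  have h2 : Even (a+2) := by rcases ha with ⟨m, hm⟩; exact ⟨m+1, by omega⟩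
  rw [ori_q, ee_even ha, ee_odd h1, ee_even h2]
  push_cast; ring


lemma openSeg_mk (A B : Pt) : openSeg s(A, B) = openSegment ℝ A B := rfl

lemma mem_openSegment_iff {A B X : Pt} :
    X ∈ openSegment ℝ A B ↔ ∃ u v : ℝ, 0 < u ∧ 0 < v ∧ u + v = 1 ∧ u • A + v • B = X :=
  Iff.rfl

lemma smul_fst (r : ℝ) (A : Pt) : (r • A).1 = r * A.1 := rfl
lemma smul_snd (r : ℝ) (A : Pt) : (r • A).2 = r * A.2 := rfl
lemma add_fst (A B : Pt) : (A + B).1 = A.1 + B.1 := rfl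
lemma add_snd (A B : Pt) : (A + B).2 = A.2 + B.2 := rfl

lemma ori_comb (A B C D : Pt) (u v : ℝ) (huv : u + v = 1) :
    ori A B (u • C + v • D) = u * ori A B C + v * ori A B D := by
  have hv : v = 1 - u := by linarith
  subst hv
  simp only [ori, add_fst, add_snd, smul_fst, smul_snd]
  ring

lemma cross_comm {e f : Sym2 Pt} (h : Cross e f) : Cross f e := by
  obtain ⟨X, h1, h2⟩ := h; exact ⟨X, h2, h1⟩

lemma noncross_same_side {A B C D : Pt} (h : 0 < ori A B C * ori A B D) :
    ¬ Cross s(A, B) s(C, D) := by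
  rintro ⟨X, hX1, hX2⟩
  rw [openSeg_mk, mem_openSegment_iff] at hX1 hX2
  obtain ⟨u, v, hu, hv, huv, hX⟩ := hX1
  obtain ⟨u', v', hu', hv', huv', hX'⟩ := hX2
  have e0 : ori A B X = 0 := by
    rw [← hX, ori_comb A B A B u v huv]
    simp only [ori]; ring
  have e1 : ori A B X = u' * ori A B C + v' * ori A B D := by
    rw [← hX', ori_comb A B C D u' v' huv']
  rcases mul_pos_iff.1 h with ⟨hc, hd⟩ | ⟨hc, hd⟩
  · nlinarith
  · nlinarith

lemma noncross_share {A B D : Pt} (h : ori A B D ≠ 0) : ¬ Cross s(A, B) s(A, D) := by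
  rintro ⟨X, hX1, hX2⟩
  rw [openSeg_mk, mem_openSegment_iff] at hX1 hX2
  obtain ⟨u, v, hu, hv, huv, hX⟩ := hX1
  obtain ⟨u', v', hu', hv', huv', hX'⟩ := hX2
  have hXe : u • A + v • B = u' • A + v' • D := by rw [hX, hX']
  have c1 : u * A.1 + v * B.1 = u' * A.1 + v' * D.1 := congrArg Prod.fst hXe
  have c2 : u * A.2 + v * B.2 = u' * A.2 + v' * D.2 := congrArg Prod.snd hXe
  have hu1 : u = 1 - v := by linarith
  have hu1' : u' = 1 - v' := by linarith
  subst hu1 hu1'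
  have e1 : v * (B.1 - A.1) = v' * (D.1 - A.1) := by linarith [c1]; 
  have e2 : v * (B.2 - A.2) = v' * (D.2 - A.2) := by linarith [c2]
  have key : v * v' * ori A B D = 0 := by
    simp only [ori]
    linear_combination (v' * (D.2 - A.2)) * e1 - (v' * (D.1 - A.1)) * e2
  have : ori A B D = 0 := by
    rcases mul_eq_zero.1 key with h' | h'
    · exact absurd h' (ne_of_gt (mul_pos hv hv'))
    · exact h'
  exact h this

lemma cross_construct {A B C D : Pt} (hAC : A ≠ C)
    (h1 : ori A C B < 0) (h2 : 0 < ori A C D)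
    (h3 : 0 < ori B D A) (h4 : ori B D C < 0) :
    Cross s(A, C) s(B, D) := by
  set fB := ori A C B with hfB
  set fD := ori A C D with hfD
  have hden : 0 < fD - fB := by linarith
  set τ := (-fB) / (fD - fB) with hτdef
  have hτ0 : 0 < τ := div_pos (by linarith) hden
  have hτ1 : τ < 1 := by
    rw [hτdef, div_lt_one hden]; linarith
  set X := (1 - τ) • B + τ • D with hXdef
  have hXBD : X ∈ openSegment ℝ B D :=
    ⟨1 - τ, τ, by linarith, hτ0, by ring, rfl⟩
  have hfX : ori A C X = 0 := by
    rw [hXdef, ori_comb A C B D (1 - τ) τ (by ring)]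
    rw [← hfB, ← hfD, hτdef]
    field_simp
    ring
  -- decompose X on the line A C
  set u1 : ℝ := C.1 - A.1
  set u2 : ℝ := C.2 - A.2
  have hu : u1 ≠ 0 ∨ u2 ≠ 0 := by
    by_contra hc
    push_neg at hc
    apply hAC
    have : C.1 = A.1 := by simp [u1] at hc; linarith [hc.1]
    have : C.2 = A.2 := by simp [u2] at hc; linarith [hc.2]
    exact Prod.ext (by linarith [hc.1, hc.2]) (by linarith [hc.1, hc.2])
  have hcrossz : u1 * (X.2 - A.2) - (X.1 - A.1) * u2 = 0 := hfX
  obtain ⟨σ, hσ1, hσ2⟩ : ∃ σ : ℝ, X.1 - A.1 = σ * u1 ∧ X.2 - A.2 = σ * u2 := by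
    rcases hu with h | h
    · refine ⟨(X.1 - A.1) / u1, by field_simp, ?_⟩
      field_simp
      nlinarith [hcrossz]
    · refine ⟨(X.2 - A.2) / u2, ?_, by field_simp⟩
      field_simp
      nlinarith [hcrossz]
  have hXrep : (1 - σ) • A + σ • C = X := by
    apply Prod.ext
    · show (1 - σ) * A.1 + σ * C.1 = X.1
      have : X.1 = A.1 + σ * u1 := by linarith
      rw [this]; simp [u1]; ring
    · show (1 - σ) * A.2 + σ * C.2 = X.2
      have : X.2 = A.2 + σ * u2 := by linarith
      rw [this]; simp [u2]; ring
  have hgX : ori B D X = 0 := by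
    rw [hXdef, ori_comb B D B D (1 - τ) τ (by ring)]
    simp only [ori]; ring
  have hgcomb : ori B D X = (1 - σ) * ori B D A + σ * ori B D C := by
    rw [← hXrep, ori_comb B D A C (1 - σ) σ (by ring)]
  have hlin : (1 - σ) * ori B D A + σ * ori B D C = 0 := by
    rw [← hgcomb]; exact hgX
  have hσpos : 0 < σ := by nlinarith [hlin]
  have hσlt : σ < 1 := by nlinarith [hlin]
  exact ⟨X, ⟨1 - σ, σ, by linarith, hσpos, by ring, hXrep⟩, hXBD⟩

noncomputable def wpt (L : ℕ) : Pt := ((L : ℝ)/4, (L : ℝ)^2/8 - 1/8)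

lemma oriW_eq (L a b : ℕ) : ori (qpt a) (qpt b) (wpt L) =
    ((b:ℝ)-a)/16 * (((L:ℝ)-a)*((L:ℝ)-b) + (a:ℝ)*b - 1 - 8 * ee a)
      - ((L:ℝ)-2*a)/4 * (ee b - ee a) := by
  simp only [ori, qpt, wpt]; ring

/-- W lies strictly left of every directed chord a→b except the top edge (0,L). -/
lemma masterW {L a b : ℕ} (hL : 14 ≤ L) (hLe : Even L) (h1 : a < b) (h2 : b ≤ L)
    (h3 : ¬(a = 0 ∧ b = L)) : 0 < ori (qpt a) (qpt b) (wpt L) := by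
  rw [oriW_eq]
  have hLr : (14:ℝ) ≤ (L:ℝ) := by exact_mod_cast hL
  have hba : (1:ℝ) ≤ (b:ℝ) - a := by
    have h := (Nat.cast_le (α := ℝ)).2 (Nat.succ_le_of_lt h1); push_cast at h; linarith
  have hbL : (b:ℝ) ≤ L := by exact_mod_cast h2
  have ha0 : (0:ℝ) ≤ (a:ℝ) := Nat.cast_nonneg a
  have hb0 : (1:ℝ) ≤ (b:ℝ) := by
    have : 1 ≤ b := by omega
    exact_mod_cast this
  rcases Nat.even_or_odd a with ha | ha <;> rcases Nat.even_or_odd b with hb | hb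
  · -- both even
    rw [ee_even ha, ee_even hb]
    rcases Nat.lt_or_ge b L with hblt | hbge
    · have hb2 : (b:ℝ) + 2 ≤ L := by
        have : b + 2 ≤ L := by
          rcases hLe with ⟨u, hu⟩; rcases hb with ⟨v, hv⟩; omega
        exact_mod_cast this
      rcases Nat.eq_zero_or_pos a with rfl | hapos
      · have hY : (0:ℝ) < ((L:ℝ)-0)*((L:ℝ)-b) + (0:ℝ)*b - 1 - 8*0 := by nlinarith
        push_cast
        nlinarith [mul_pos (show (0:ℝ) < (b:ℝ) - 0 by push_cast; linarith) hY]
      · have ha1 : (1:ℝ) ≤ (a:ℝ) := by exact_mod_cast hapos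
        have haL : (a:ℝ) + 3 ≤ L := by nlinarith
        have hY : (0:ℝ) < ((L:ℝ)-a)*((L:ℝ)-b) + (a:ℝ)*b - 1 := by
          nlinarith [mul_nonneg ha0 (by linarith : (0:ℝ) ≤ (b:ℝ))]
        nlinarith [mul_pos (show (0:ℝ) < (b:ℝ) - a by linarith) hY]
    · have hbeq : (b:ℝ) = L := by
        have : b = L := le_antisymm h2 hbge
        exact_mod_cast this
      have hane : a ≠ 0 := fun hc => h3 ⟨hc, le_antisymm h2 hbge⟩
      have ha1 : (1:ℝ) ≤ (a:ℝ) := by exact_mod_cast Nat.one_le_iff_ne_zero.2 hane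
      have hY : (0:ℝ) < ((L:ℝ)-a)*((L:ℝ)-b) + (a:ℝ)*b - 1 := by
        nlinarith [mul_nonneg (by linarith : (0:ℝ) ≤ (L:ℝ)-a) (by linarith : (0:ℝ) ≤ (L:ℝ)-b)]
      nlinarith [mul_pos (show (0:ℝ) < (b:ℝ) - a by linarith) hY]
  · -- a even, b odd : b ≤ L-1
    rw [ee_even ha, ee_odd hb]
    have hb1 : (b:ℝ) + 1 ≤ L := by
      have : b + 1 ≤ L := by
        rcases hLe with ⟨u, hu⟩; rcases hb with ⟨v, hv⟩; omega
      exact_mod_cast this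
    rcases Nat.eq_zero_or_pos a with rfl | hapos
    · push_cast
      have f1 : (0:ℝ) ≤ ((b:ℝ)-1)*((L:ℝ)-1-b) := by
        nlinarith [mul_nonneg (by linarith : (0:ℝ) ≤ (b:ℝ)-1) (by linarith : (0:ℝ) ≤ (L:ℝ)-1-b)]
      have f2 : (0:ℝ) ≤ 2*(L:ℝ)*(((b:ℝ)-1)*((L:ℝ)-1-b)) := by positivity
      nlinarith [f2]
    · have ha2 : (2:ℝ) ≤ (a:ℝ) := by
        have : 2 ≤ a := by rcases ha with ⟨u, hu⟩; omega
        exact_mod_cast this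
      have hb3 : (3:ℝ) ≤ (b:ℝ) := by
        have : 3 ≤ b := by rcases ha with ⟨u, hu⟩; rcases hb with ⟨v, hv⟩; omega
        exact_mod_cast this
      -- g := (L-a)(L-b) + ab ≥ 3L - 4
      have hg : 3*(L:ℝ) - 4 ≤ ((L:ℝ)-a)*((L:ℝ)-b) + (a:ℝ)*b := by
        rcases le_or_gt (2*(b:ℝ)) (L:ℝ) with hc | hc
        · have t1 : ((b:ℝ)-3)*(2*(b:ℝ)-L) ≤ ((a:ℝ)-2)*(2*(b:ℝ)-L) := by
            nlinarith [mul_nonneg (by linarith : (0:ℝ) ≤ (b:ℝ)-a-1) (by linarith : (0:ℝ) ≤ (L:ℝ)-2*b)]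
          nlinarith [t1, sq_nonneg ((L:ℝ)-1-b),
            mul_nonneg (by linarith : (0:ℝ) ≤ (b:ℝ)-3) (by linarith : (0:ℝ) ≤ (b:ℝ)-1)]
        · nlinarith [mul_nonneg (by linarith : (0:ℝ) ≤ (a:ℝ)-2) (by linarith : (0:ℝ) ≤ 2*(b:ℝ)-L)]
      set G : ℝ := ((L:ℝ)-a)*((L:ℝ)-b) + (a:ℝ)*b with hGdef
      have hgpos : (0:ℝ) ≤ G - 1 := by linarith
      have hmul : G - 1 ≤ ((b:ℝ)-a) * (G - 1) := by
        nlinarith [mul_nonneg (by linarith : (0:ℝ) ≤ (b:ℝ)-a-1) hgpos]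
      nlinarith [hmul, hg]
  · -- a odd, b even
    rw [ee_odd ha, ee_even hb]
    have ha1 : (1:ℝ) ≤ (a:ℝ) := by
      have : 1 ≤ a := ha.pos; exact_mod_cast this
    have hY : (0:ℝ) < ((L:ℝ)-a)*((L:ℝ)-b) + (a:ℝ)*b - 1 - 8*(3/8) := by
      rcases Nat.lt_or_ge b L with hblt | hbge
      · have hb2 : (b:ℝ) + 2 ≤ L := by
          have : b + 2 ≤ L := by
            rcases hLe with ⟨u, hu⟩; rcases hb with ⟨v, hv⟩; omega
          exact_mod_cast this
        have ha3 : (a:ℝ) + 3 ≤ (L:ℝ) := by linarith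
        nlinarith [mul_nonneg ha0 (by linarith : (0:ℝ) ≤ (b:ℝ))]
      · have hbeq : (b:ℝ) = L := by
          have : b = L := le_antisymm h2 hbge
          exact_mod_cast this
        nlinarith
    set G : ℝ := ((L:ℝ)-a)*((L:ℝ)-b) + (a:ℝ)*b with hGdef
    rcases le_or_gt (2*(a:ℝ)) (L:ℝ) with hc | hc
    · nlinarith [mul_pos (show (0:ℝ) < (b:ℝ) - a by linarith) hY]
    · have f : (L:ℝ)*L < 4*((a:ℝ)*b) := by nlinarith
      have h5 : (0:ℝ) ≤ ((L:ℝ)-a)*((L:ℝ)-b) :=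
        mul_nonneg (by linarith) (by linarith)
      have hL2 : (196:ℝ) ≤ (L:ℝ)*L := by nlinarith
      have h6 : (0:ℝ) ≤ G - 4 := by
        rw [hGdef]; nlinarith
      have hmul : G - 4 ≤ ((b:ℝ)-a) * (G - 4) := by
        nlinarith [mul_nonneg (by linarith : (0:ℝ) ≤ (b:ℝ)-a-1) h6]
      have h7 : 3*(2*(a:ℝ) - L) ≤ 2*(G-4) := by
        rw [hGdef]; nlinarith
      nlinarith [hmul, h7]
  · -- both odd
    rw [ee_odd ha, ee_odd hb]
    have ha1 : (1:ℝ) ≤ (a:ℝ) := by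
      have : 1 ≤ a := ha.pos; exact_mod_cast this
    have hb1 : (b:ℝ) + 1 ≤ L := by
      have : b + 1 ≤ L := by
        rcases hLe with ⟨u, hu⟩; rcases hb with ⟨v, hv⟩; omega
      exact_mod_cast this
    have hab2 : (a:ℝ) + 2 ≤ b := by
      have : a + 2 ≤ b := by rcases ha with ⟨u, hu⟩; rcases hb with ⟨v, hv⟩; omega
      exact_mod_cast this
    have hb3 : (3:ℝ) ≤ (b:ℝ) := by linarith
    have hY : (0:ℝ) < ((L:ℝ)-a)*((L:ℝ)-b) + (a:ℝ)*b - 1 - 8*(3/8) := by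
      nlinarith [mul_nonneg (by linarith : (0:ℝ) ≤ (L:ℝ)-a-2) (by linarith : (0:ℝ) ≤ (L:ℝ)-b-1)]
    nlinarith [mul_pos (show (0:ℝ) < (b:ℝ) - a by linarith) hY]

lemma masterW_exc {L : ℕ} (hL : 14 ≤ L) (hLe : Even L) :
    ori (qpt 0) (qpt L) (wpt L) < 0 := by
  rw [oriW_eq]
  rw [ee_even (by decide), ee_even hLe]
  have hLr : (14:ℝ) ≤ (L:ℝ) := by exact_mod_cast hL
  push_cast
  nlinarith



lemma sym2_comm (A B : Pt) : s(A,B) = s(B,A) := Sym2.eq_swap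

lemma qpt_ne {a b : ℕ} (h : a ≠ b) : qpt a ≠ qpt b := by
  intro hc
  apply h
  have h1 : ((a:ℝ))/2 = (b:ℝ)/2 := congrArg Prod.fst hc
  have : (a:ℝ) = (b:ℝ) := by linarith
  exact_mod_cast this

lemma wpt_ne_qpt {L j : ℕ} (hL : 14 ≤ L) : wpt L ≠ qpt j := by
  intro hc
  have h1 : ((L:ℝ))/4 = (j:ℝ)/2 := congrArg Prod.fst hc
  have h2 : ((L:ℝ))^2/8 - 1/8 = ((j:ℝ)/2)^2 + ee j := congrArg Prod.snd hc
  have hLr : (14:ℝ) ≤ (L:ℝ) := by exact_mod_cast hL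
  have hee : ee j = 0 ∨ ee j = 3/8 := by
    rcases Nat.even_or_odd j with h | h
    · exact Or.inl (ee_even h)
    · exact Or.inr (ee_odd h)
  rcases hee with h | h <;> rw [h] at h2 <;> nlinarith

lemma ori_q_ne_sorted {a b d : ℕ} (h1 : a < b) (h2 : b < d) :
    ori (qpt a) (qpt b) (qpt d) ≠ 0 := by
  by_cases h : Even a ∧ b = a+1 ∧ d = a+2
  · obtain ⟨he, hb, hd⟩ := h
    subst hb; subst hd
    rw [master_exc he]; norm_num
  · exact (master h1 h2 h).ne'

lemma ori_q_ne {a b d : ℕ} (h1 : a ≠ b) (h2 : a ≠ d) (h3 : b ≠ d) :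
    ori (qpt a) (qpt b) (qpt d) ≠ 0 := by
  rcases lt_trichotomy a b with hab | hab | hab
  · rcases lt_trichotomy b d with hbd | hbd | hbd
    · exact ori_q_ne_sorted hab hbd
    · exact absurd hbd h3
    · rcases lt_trichotomy a d with had | had | had
      · -- a < d < b
        have := ori_q_ne_sorted had hbd
        intro hc; apply this
        rw [show ori (qpt a) (qpt d) (qpt b) = - ori (qpt a) (qpt b) (qpt d) from ori_swap _ _ _, hc]
        ring
      · exact absurd had h2
      · -- d < a < b
        have hne := ori_q_ne_sorted had hab
        intro hc; apply hne
        rw [show ori (qpt d) (qpt a) (qpt b) = ori (qpt a) (qpt b) (qpt d) from (ori_cyc _ _ _).symm, hc]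
  · exact absurd hab h1
  · -- b < a
    rcases lt_trichotomy a d with had | had | had
    · -- b < a < d
      have := ori_q_ne_sorted hab had
      intro hc; apply this
      rw [show ori (qpt b) (qpt a) (qpt d) = - ori (qpt a) (qpt b) (qpt d) from ori_swap12 _ _ _, hc]
      ring
    · exact absurd had h2
    · rcases lt_trichotomy b d with hbd | hbd | hbd
      · -- b < d < a
        have := ori_q_ne_sorted hbd had
        intro hc; apply this
        have e1 : ori (qpt b) (qpt d) (qpt a) = - ori (qpt a) (qpt d) (qpt b) := by
          rw [← ori_cyc (qpt a) (qpt d) (qpt b)]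
          exact ori_swap12 _ _ _
        have e2 : ori (qpt a) (qpt d) (qpt b) = - ori (qpt a) (qpt b) (qpt d) := ori_swap _ _ _
        rw [e1, e2, hc]; ring
      · exact absurd hbd h3
      · -- d < b < a
        have := ori_q_ne_sorted hbd hab
        intro hc; apply this
        have e1 : ori (qpt d) (qpt b) (qpt a) = ori (qpt a) (qpt d) (qpt b) := ori_cyc _ _ _
        have e2 : ori (qpt a) (qpt d) (qpt b) = - ori (qpt a) (qpt b) (qpt d) := ori_swap _ _ _
        rw [e1, e2, hc]; ring

lemma oriW_ne {L a b : ℕ} (hL : 14 ≤ L) (hLe : Even L) (h1 : a < b) (h2 : b ≤ L) :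
    ori (qpt a) (qpt b) (wpt L) ≠ 0 := by
  by_cases h : a = 0 ∧ b = L
  · obtain ⟨rfl, rfl⟩ := h
    exact (masterW_exc hL hLe).ne
  · exact (masterW hL hLe h1 h2 h).ne'

lemma noncross_nested {a x y b : ℕ} (h1 : a < x) (h2 : x < y) (h3 : y < b) :
    ¬ Cross s(qpt a, qpt b) s(qpt x, qpt y) := by
  apply noncross_same_side
  have m1 : 0 < ori (qpt a) (qpt x) (qpt b) := master h1 (h2.trans h3) (by rintro ⟨_, _, _⟩; omega)
  have m2 : 0 < ori (qpt a) (qpt y) (qpt b) := master (h1.trans h2) h3 (by rintro ⟨_, _, _⟩; omega)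
  have e1 : ori (qpt a) (qpt b) (qpt x) = - ori (qpt a) (qpt x) (qpt b) := ori_swap _ _ _
  have e2 : ori (qpt a) (qpt b) (qpt y) = - ori (qpt a) (qpt y) (qpt b) := ori_swap _ _ _
  rw [e1, e2]
  nlinarith

lemma noncross_disjoint {a b x y : ℕ} (h1 : a < b) (h2 : b < x) (h3 : x < y) :
    ¬ Cross s(qpt a, qpt b) s(qpt x, qpt y) := by
  by_cases hexc : Even a ∧ b = a+1 ∧ x = a+2
  · intro hc
    have m3 : 0 < ori (qpt a) (qpt x) (qpt y) := master (h1.trans h2) h3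
      (by rintro ⟨_, h5, _⟩; omega)
    have m4 : 0 < ori (qpt b) (qpt x) (qpt y) := master h2 h3
      (by rintro ⟨hEb, _, _⟩; rcases hexc.1 with ⟨u, hu⟩; rcases hEb with ⟨v, hv⟩; omega)
    refine noncross_same_side (A := qpt x) (B := qpt y) (C := qpt a) (D := qpt b) ?_ (cross_comm hc)
    have e1 : ori (qpt x) (qpt y) (qpt a) = ori (qpt a) (qpt x) (qpt y) := ori_cyc _ _ _
    have e2 : ori (qpt x) (qpt y) (qpt b) = ori (qpt b) (qpt x) (qpt y) := ori_cyc _ _ _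
    rw [e1, e2]
    positivity
  · apply noncross_same_side
    have m1 : 0 < ori (qpt a) (qpt b) (qpt x) := master h1 h2 hexc
    have m2 : 0 < ori (qpt a) (qpt b) (qpt y) := master h1 (h2.trans h3)
      (by rintro ⟨_, _, h6⟩; omega)
    positivity

lemma cross_interleaved {a x b y : ℕ} (h1 : a < x) (h2 : x < b) (h3 : b < y)
    (hA : ¬(Even a ∧ x = a+1 ∧ b = a+2)) (hB : ¬(Even x ∧ b = x+1 ∧ y = x+2)) :
    Cross s(qpt a, qpt b) s(qpt x, qpt y) := by
  apply cross_construct (qpt_ne (by omega))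
  · rw [show ori (qpt a) (qpt b) (qpt x) = - ori (qpt a) (qpt x) (qpt b) from ori_swap _ _ _]
    have := master h1 h2 hA
    linarith
  · exact master (h1.trans h2) h3 (by rintro ⟨_, h5, _⟩; omega)
  · rw [show ori (qpt x) (qpt y) (qpt a) = ori (qpt a) (qpt x) (qpt y) from ori_cyc _ _ _]
    exact master h1 (h2.trans h3) (by rintro ⟨_, _, h6⟩; omega)
  · have e1 : ori (qpt x) (qpt y) (qpt b) = ori (qpt b) (qpt x) (qpt y) := ori_cyc _ _ _
    have e2 : ori (qpt b) (qpt x) (qpt y) = - ori (qpt x) (qpt b) (qpt y) := ori_swap12 _ _ _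
    rw [e1, e2]
    have := master h2 h3 hB
    linarith

lemma hull_side {v w : ℕ} (hv : Even v) (hw1 : w ≠ v) (hw2 : w ≠ v+2) :
    0 < ori (qpt v) (qpt (v+2)) (qpt w) := by
  rcases lt_trichotomy w v with h | h | h
  · rw [show ori (qpt v) (qpt (v+2)) (qpt w) = ori (qpt w) (qpt v) (qpt (v+2)) from ori_cyc _ _ _]
    exact master h (by omega) (by rintro ⟨_, _, _⟩; omega)
  · exact absurd h hw1
  · rcases Nat.lt_or_ge w (v+2) with h' | h'
    · have hw : w = v+1 := by omega
      subst hw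
      rw [show ori (qpt v) (qpt (v+2)) (qpt (v+1)) = - ori (qpt v) (qpt (v+1)) (qpt (v+2)) from ori_swap _ _ _]
      rw [master_exc hv]; norm_num
    · have h'' : v + 2 < w := by omega
      exact master (by omega) h'' (by rintro ⟨_, h5, _⟩; omega)

lemma hull_sideW {L v : ℕ} (hL : 14 ≤ L) (hLe : Even L) (h : v+2 ≤ L) :
    0 < ori (qpt v) (qpt (v+2)) (wpt L) :=
  masterW hL hLe (by omega) h (by rintro ⟨_, _⟩; omega)

lemma noncross_hull {v x y : ℕ} (hv : Even v) (hx1 : x ≠ v) (hx2 : x ≠ v+2)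
    (hy1 : y ≠ v) (hy2 : y ≠ v+2) :
    ¬ Cross s(qpt v, qpt (v+2)) s(qpt x, qpt y) :=
  noncross_same_side (mul_pos (hull_side hv hx1 hx2) (hull_side hv hy1 hy2))

lemma noncross_hull_W {L v x : ℕ} (hL : 14 ≤ L) (hLe : Even L) (hv : Even v)
    (hvL : v+2 ≤ L) (hx1 : x ≠ v) (hx2 : x ≠ v+2) :
    ¬ Cross s(qpt v, qpt (v+2)) s(qpt x, wpt L) :=
  noncross_same_side (mul_pos (hull_side hv hx1 hx2) (hull_sideW hL hLe hvL))

lemma top_side {L w : ℕ} (hL : 14 ≤ L) (h1 : 0 < w) (h2 : w < L) :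
    ori (qpt 0) (qpt L) (qpt w) < 0 := by
  rw [show ori (qpt 0) (qpt L) (qpt w) = - ori (qpt 0) (qpt w) (qpt L) from ori_swap _ _ _]
  have := master h1 h2 (by rintro ⟨_, _, h6⟩; omega)
  linarith

lemma noncross_top_qq {L x y : ℕ} (hL : 14 ≤ L) (hx1 : 0 < x) (hx2 : x < L)
    (hy1 : 0 < y) (hy2 : y < L) :
    ¬ Cross s(qpt 0, qpt L) s(qpt x, qpt y) :=
  noncross_same_side (mul_pos_of_neg_of_neg (top_side hL hx1 hx2) (top_side hL hy1 hy2))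

lemma noncross_top_qW {L x : ℕ} (hL : 14 ≤ L) (hLe : Even L) (hx1 : 0 < x) (hx2 : x < L) :
    ¬ Cross s(qpt 0, qpt L) s(qpt x, wpt L) :=
  noncross_same_side (mul_pos_of_neg_of_neg (top_side hL hx1 hx2) (masterW_exc hL hLe))

lemma noncrossW_right {L a b x : ℕ} (hL : 14 ≤ L) (hLe : Even L) (hab : a < b)
    (hbx : b < x) (hxL : x ≤ L) (h3 : ¬(a = 0 ∧ x = L)) :
    ¬ Cross s(qpt x, wpt L) s(qpt a, qpt b) := by
  apply noncross_same_side
  have m1 : 0 < ori (qpt a) (qpt x) (wpt L) := masterW hL hLe (by omega) hxL h3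
  have m2 : 0 < ori (qpt b) (qpt x) (wpt L) := masterW hL hLe hbx hxL (by rintro ⟨h4, _⟩; omega)
  have e1 : ori (qpt x) (wpt L) (qpt a) = ori (qpt a) (qpt x) (wpt L) := ori_cyc _ _ _
  have e2 : ori (qpt x) (wpt L) (qpt b) = ori (qpt b) (qpt x) (wpt L) := ori_cyc _ _ _
  rw [e1, e2]; positivity

lemma noncrossW_left {L a b x : ℕ} (hL : 14 ≤ L) (hLe : Even L) (hxa : x < a)
    (hab : a < b) (hbL : b ≤ L) (h3 : ¬(x = 0 ∧ b = L)) :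
    ¬ Cross s(qpt x, wpt L) s(qpt a, qpt b) := by
  apply noncross_same_side
  have m1 : 0 < ori (qpt x) (qpt a) (wpt L) := masterW hL hLe hxa (by omega) (by rintro ⟨_, h5⟩; omega)
  have m2 : 0 < ori (qpt x) (qpt b) (wpt L) := masterW hL hLe (hxa.trans hab) hbL h3
  have e1 : ori (qpt x) (wpt L) (qpt a) = - ori (qpt x) (qpt a) (wpt L) := ori_swap _ _ _
  have e2 : ori (qpt x) (wpt L) (qpt b) = - ori (qpt x) (qpt b) (wpt L) := ori_swap _ _ _
  rw [e1, e2]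
  nlinarith

lemma noncrossW_left0L {L a : ℕ} (hL : 14 ≤ L) (hLe : Even L) (h0a : 0 < a) (haL : a < L) :
    ¬ Cross s(qpt 0, wpt L) s(qpt a, qpt L) := by
  intro hc
  have m1 : 0 < ori (qpt a) (qpt L) (qpt 0) := by
    rw [show ori (qpt a) (qpt L) (qpt 0) = ori (qpt 0) (qpt a) (qpt L) from ori_cyc _ _ _]
    exact master h0a haL (by rintro ⟨_, _, h6⟩; omega)
  have m2 : 0 < ori (qpt a) (qpt L) (wpt L) := masterW hL hLe haL le_rfl (by rintro ⟨h4, _⟩; omega)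
  exact noncross_same_side (mul_pos m1 m2) (cross_comm hc)

lemma noncrossW_topright {L b : ℕ} (hL : 14 ≤ L) (hLe : Even L) (h0b : 0 < b) (hbL : b < L) :
    ¬ Cross s(qpt L, wpt L) s(qpt 0, qpt b) := by
  intro hc
  have m1 : 0 < ori (qpt 0) (qpt b) (qpt L) := master h0b hbL (by rintro ⟨_, _, h6⟩; omega)
  have m2 : 0 < ori (qpt 0) (qpt b) (wpt L) := masterW hL hLe h0b (by omega) (by rintro ⟨_, h5⟩; omega)
  exact noncross_same_side (mul_pos m1 m2) (cross_comm hc)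

lemma crossW {L a x b : ℕ} (hL : 14 ≤ L) (hLe : Even L) (h1 : a < x) (h2 : x < b)
    (h3 : b ≤ L) (h4 : ¬(a = 0 ∧ b = L)) (h5 : ¬(Even a ∧ x = a+1 ∧ b = a+2)) :
    Cross s(qpt a, qpt b) s(qpt x, wpt L) := by
  apply cross_construct (qpt_ne (by omega))
  · rw [show ori (qpt a) (qpt b) (qpt x) = - ori (qpt a) (qpt x) (qpt b) from ori_swap _ _ _]
    have := master h1 h2 h5
    linarith
  · exact masterW hL hLe (h1.trans h2) h3 h4
  · rw [show ori (qpt x) (wpt L) (qpt a) = ori (qpt a) (qpt x) (wpt L) from ori_cyc _ _ _]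
    exact masterW hL hLe h1 (by omega) (by rintro ⟨_, h6⟩; omega)
  · have e1 : ori (qpt x) (wpt L) (qpt b) = ori (qpt b) (qpt x) (wpt L) := ori_cyc _ _ _
    have e2 : ori (qpt b) (qpt x) (wpt L) = - ori (qpt x) (qpt b) (wpt L) := ori_swap12 _ _ _
    rw [e1, e2]
    have := masterW hL hLe h2 h3 (by rintro ⟨h6, _⟩; omega)
    linarith

lemma oriWq_ne {L x d : ℕ} (hL : 14 ≤ L) (hLe : Even L) (hx : x ≤ L) (hd : d ≤ L)
    (hxd : x ≠ d) : ori (qpt x) (wpt L) (qpt d) ≠ 0 := by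
  rcases lt_or_gt_of_ne hxd with h | h
  · have := oriW_ne hL hLe h hd
    rw [show ori (qpt x) (wpt L) (qpt d) = - ori (qpt x) (qpt d) (wpt L) from ori_swap _ _ _]
    simpa using this
  · have := oriW_ne hL hLe h hx
    rw [show ori (qpt x) (wpt L) (qpt d) = ori (qpt d) (qpt x) (wpt L) from ori_cyc _ _ _]
    exact this

lemma oriW_first_ne {L x y : ℕ} (hL : 14 ≤ L) (hLe : Even L) (hx : x ≤ L) (hy : y ≤ L)
    (hxy : x ≠ y) : ori (wpt L) (qpt x) (qpt y) ≠ 0 := by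
  rw [show ori (wpt L) (qpt x) (qpt y) = ori (qpt x) (qpt y) (wpt L) from (ori_cyc _ _ _).symm]
  rcases lt_or_gt_of_ne hxy with h | h
  · exact oriW_ne hL hLe h hy
  · rw [ori_swap12 (qpt y) (qpt x) (wpt L)]
    simpa using oriW_ne hL hLe h hx



/-- edge (a,b) of the triangulation T, among q-points (a<b expected). -/
def TPq (L a b : ℕ) : Prop :=
  (b = a+1 ∧ b ≤ L) ∨ (b = a+2 ∧ a % 2 = 0 ∧ b ≤ L) ∨ (a = 0 ∧ b = L) ∨
  (b = a+2 ∧ a % 2 = 1 ∧ b + 1 ≤ L) ∨ (a = 1 ∧ b % 2 = 1 ∧ 5 ≤ b ∧ b + 1 ≤ L)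

/-- base (forced) edges among q-points. -/
def BPq (L a b : ℕ) : Prop :=
  (b = a+1 ∧ b ≤ L) ∨ (b = a+2 ∧ a % 2 = 0 ∧ b ≤ L) ∨ (a = 0 ∧ b = L)

/-- edges of T from q-point x to W. -/
def TPw (L x : ℕ) : Prop := x = 0 ∨ x = L ∨ x = 1 ∨ x + 1 = L

def BPw (L x : ℕ) : Prop := x = 0 ∨ x = L

def SS (L : ℕ) : Set Pt := (qpt '' Set.Iic L) ∪ {wpt L}

def TEdges (L : ℕ) : Set (Sym2 Pt) :=
  {e | ∃ a b, a < b ∧ TPq L a b ∧ e = s(qpt a, qpt b)} ∪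
  {e | ∃ x, x ≤ L ∧ TPw L x ∧ e = s(qpt x, wpt L)}

lemma TPq_lt {L a b : ℕ} (hL : 14 ≤ L) (h : TPq L a b) : a < b ∧ b ≤ L := by
  rcases h with ⟨h1, h2⟩ | ⟨h1, h2, h3⟩ | ⟨h1, h2⟩ | ⟨h1, h2, h3⟩ | ⟨h1, h2, h3, h4⟩ <;> omega

lemma oriW_ne' {L a b : ℕ} (hL : 14 ≤ L) (hLe : Even L) (ha : a ≤ L) (hb : b ≤ L)
    (hab : a ≠ b) : ori (qpt a) (qpt b) (wpt L) ≠ 0 := by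
  rcases lt_or_gt_of_ne hab with h | h
  · exact oriW_ne hL hLe h hb
  · intro hc
    apply oriW_ne hL hLe h ha
    have : ori (qpt b) (qpt a) (wpt L) = - ori (qpt a) (qpt b) (wpt L) := by
      unfold ori; ring
    rw [this, hc]; ring

/-- share-a-point noncrossing for two q-pairs -/
lemma noncross_share_qq {a b x y : ℕ} (hab : a ≠ b) (hxy : x ≠ y)
    (h : a = x ∨ a = y ∨ b = x ∨ b = y)
    (hne1 : ¬(a = x ∧ b = y)) (hne2 : ¬(a = y ∧ b = x)) :
    ¬ Cross s(qpt a, qpt b) s(qpt x, qpt y) := by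
  rcases h with h | h | h | h
  · rw [show (s(qpt x, qpt y) : Sym2 Pt) = s(qpt a, qpt y) from by rw [h]]
    exact noncross_share (ori_q_ne hab (by omega) (by omega))
  · rw [show (s(qpt x, qpt y) : Sym2 Pt) = s(qpt x, qpt a) from by rw [h],
      sym2_comm (qpt x) (qpt a)]
    exact noncross_share (ori_q_ne hab (by omega) (by omega))
  · rw [sym2_comm (qpt a) (qpt b),
      show (s(qpt x, qpt y) : Sym2 Pt) = s(qpt b, qpt y) from by rw [h]]
    exact noncross_share (ori_q_ne (by omega) (by omega) (by omega))
  · rw [sym2_comm (qpt a) (qpt b),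
      show (s(qpt x, qpt y) : Sym2 Pt) = s(qpt x, qpt b) from by rw [h],
      sym2_comm (qpt x) (qpt b)]
    exact noncross_share (ori_q_ne (by omega) (by omega) (by omega))

lemma noncross_share_qW {L a b x : ℕ} (hL : 14 ≤ L) (hLe : Even L)
    (ha : a ≤ L) (hb : b ≤ L) (hab : a ≠ b) (h : x = a ∨ x = b) :
    ¬ Cross s(qpt a, qpt b) s(qpt x, wpt L) := by
  rcases h with h | h
  · rw [show (s(qpt x, wpt L) : Sym2 Pt) = s(qpt a, wpt L) from by rw [h]]
    exact noncross_share (oriW_ne' hL hLe ha hb hab)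
  · rw [show (s(qpt x, wpt L) : Sym2 Pt) = s(qpt b, wpt L) from by rw [h],
      sym2_comm (qpt a) (qpt b)]
    exact noncross_share (oriW_ne' hL hLe hb ha (Ne.symm hab))

/-- Any two distinct q-pairs of T that interleave: one of them is a hull edge. -/
lemma TPq_interleave {L a b x y : ℕ} (h1 : TPq L a b) (h2 : TPq L x y)
    (o1 : a < x) (o2 : x < b) (o3 : b < y) :
    (a % 2 = 0 ∧ b = a+2) ∨ (x % 2 = 0 ∧ y = x+2) := by
  rcases h1 with ⟨e1, e2⟩ | ⟨e1, e2, e3⟩ | ⟨e1, e2⟩ | ⟨e1, e2, e3⟩ | ⟨e1, e2, e3, e4⟩ <;>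
    rcases h2 with ⟨f1, f2⟩ | ⟨f1, f2, f3⟩ | ⟨f1, f2⟩ | ⟨f1, f2, f3⟩ | ⟨f1, f2, f3, f4⟩ <;>
      omega

/-- two distinct q-pairs of T do not cross -/
lemma TE_noncross_qq {L a b x y : ℕ} (hL : 14 ≤ L) (hab : a < b) (hxy : x < y)
    (h1 : TPq L a b) (h2 : TPq L x y) (hne : ¬(a = x ∧ b = y)) :
    ¬ Cross s(qpt a, qpt b) s(qpt x, qpt y) := by
  have hbL := (TPq_lt hL h1).2
  have hyL := (TPq_lt hL h2).2
  by_cases hsh : a = x ∨ a = y ∨ b = x ∨ b = y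
  · exact noncross_share_qq (by omega) (by omega) hsh hne (by omega)
  · push_neg at hsh
    obtain ⟨s1, s2, s3, s4⟩ := hsh
    -- all indices distinct; classify
    rcases Nat.lt_or_ge b x with hbx | hbx
    · exact noncross_disjoint hab hbx hxy
    · rcases Nat.lt_or_ge y a with hya | hya
      · intro hc; exact noncross_disjoint hxy (by omega) hab (cross_comm hc)
      · rcases Nat.lt_or_ge a x with hax | hax
        · rcases Nat.lt_or_ge y b with hyb | hyb
          · exact noncross_nested hax hxy hyb
          · -- interleaved a < x < b < y
            have hint : a < x ∧ x < b ∧ b < y := by omega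
            rcases TPq_interleave h1 h2 hint.1 hint.2.1 hint.2.2 with ⟨he, hb2⟩ | ⟨he, hy2⟩
            · subst hb2
              exact noncross_hull (Nat.even_iff.2 he) (by omega) (by omega) (by omega) (by omega)
            · subst hy2
              intro hc
              exact noncross_hull (Nat.even_iff.2 he) (by omega) (by omega) (by omega)
                (by omega) (cross_comm hc)
        · rcases Nat.lt_or_ge b y with hby | hby
          · -- nested : x < a < b < y
            intro hc
            exact noncross_nested (by omega) hab hby (cross_comm hc)
          · -- interleaved x < a < y < b
            have hint : x < a ∧ a < y ∧ y < b := by omega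
            rcases TPq_interleave h2 h1 hint.1 hint.2.1 hint.2.2 with ⟨he, hy2⟩ | ⟨he, hb2⟩
            · subst hy2
              intro hc
              exact noncross_hull (Nat.even_iff.2 he) (by omega) (by omega) (by omega)
                (by omega) (cross_comm hc)
            · subst hb2
              exact noncross_hull (Nat.even_iff.2 he) (by omega) (by omega) (by omega) (by omega)

/-- a q-pair of T and a W-pair of T do not cross -/
lemma TE_noncross_qW {L a b x : ℕ} (hL : 14 ≤ L) (hLe : Even L) (hab : a < b)
    (hxL : x ≤ L) (h1 : TPq L a b) (h2 : TPw L x) :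
    ¬ Cross s(qpt a, qpt b) s(qpt x, wpt L) := by
  have hbL := (TPq_lt hL h1).2
  by_cases hsh : x = a ∨ x = b
  · exact noncross_share_qW hL hLe (by omega) hbL (by omega) hsh
  · push_neg at hsh
    obtain ⟨s1, s2⟩ := hsh
    rcases Nat.lt_or_ge x a with hxa | hxa
    · -- x < a
      by_cases hbig : x = 0 ∧ b = L
      · obtain ⟨rfl, rfl⟩ := hbig
        intro hc
        exact noncrossW_left0L hL hLe (by omega) (by omega) (cross_comm hc)
      · intro hc
        exact noncrossW_left hL hLe (by omega) hab hbL hbig (cross_comm hc)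
    · rcases Nat.lt_or_ge b x with hbx | hbx
      · -- b < x
        by_cases hbig : a = 0 ∧ x = L
        · obtain ⟨rfl, rfl⟩ := hbig
          intro hc
          exact noncrossW_topright hL hLe (by omega) (by omega) (cross_comm hc)
        · intro hc
          exact noncrossW_right hL hLe hab hbx hxL hbig (cross_comm hc)
      · -- a < x < b : must be hull or top
        have hax : a < x := by omega
        have hxb : x < b := by omega
        have hcase : (a % 2 = 0 ∧ b = a + 2) ∨ (a = 0 ∧ b = L) := by
          rcases h1 with ⟨e1, e2⟩ | ⟨e1, e2, e3⟩ | ⟨e1, e2⟩ | ⟨e1, e2, e3⟩ | ⟨e1, e2, e3, e4⟩ <;>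
            rcases h2 with f | f | f | f <;> omega
        rcases hcase with ⟨he, hb2⟩ | ⟨ha0, hbL'⟩
        · subst hb2
          exact noncross_hull_W hL hLe (Nat.even_iff.2 he) hbL (by omega) (by omega)
        · subst ha0; subst hbL'
          exact noncross_top_qW hL hLe (by omega) (by omega)

/-- two W-pairs of T do not cross -/
lemma TE_noncross_WW {L x y : ℕ} (hL : 14 ≤ L) (hLe : Even L) (hx : x ≤ L) (hy : y ≤ L)
    (hxy : x ≠ y) : ¬ Cross s(qpt x, wpt L) s(qpt y, wpt L) := by
  rw [show s(qpt x, wpt L) = s(wpt L, qpt x) from sym2_comm _ _,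
    show s(qpt y, wpt L) = s(wpt L, qpt y) from sym2_comm _ _]
  exact noncross_share (oriW_first_ne hL hLe hx hy hxy)

-- === membership / eq helpers ===

lemma qpt_inj {a b : ℕ} (h : qpt a = qpt b) : a = b := by
  by_contra hc; exact qpt_ne hc h

lemma mem_TE_qq {L a b : ℕ} (h : a < b) (hq : TPq L a b) :
    s(qpt a, qpt b) ∈ TEdges L := Or.inl ⟨a, b, h, hq, rfl⟩

lemma mem_TE_qW {L x : ℕ} (hx : x ≤ L) (hw : TPw L x) :
    s(qpt x, wpt L) ∈ TEdges L := Or.inr ⟨x, hx, hw, rfl⟩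

lemma sym2_qq_eq {a b x y : ℕ} (h : s(qpt a, qpt b) = s(qpt x, qpt y)) :
    (a = x ∧ b = y) ∨ (a = y ∧ b = x) := by
  rcases Sym2.eq_iff.1 h with ⟨h1, h2⟩ | ⟨h1, h2⟩
  · exact Or.inl ⟨qpt_inj h1, qpt_inj h2⟩
  · exact Or.inr ⟨qpt_inj h1, qpt_inj h2⟩

lemma sym2_qq_ne_qW {L a b x : ℕ} (hL : 14 ≤ L) :
    s(qpt a, qpt b) ≠ s(qpt x, wpt L) := by
  intro h
  rcases Sym2.eq_iff.1 h with ⟨h1, h2⟩ | ⟨h1, h2⟩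
  · exact wpt_ne_qpt hL h2.symm
  · exact wpt_ne_qpt hL h1.symm

lemma sym2_qW_eq {L x y : ℕ} (hL : 14 ≤ L) (h : s(qpt x, wpt L) = s(qpt y, wpt L)) :
    x = y := by
  rcases Sym2.eq_iff.1 h with ⟨h1, _⟩ | ⟨h1, _⟩
  · exact qpt_inj h1
  · exact absurd h1.symm (wpt_ne_qpt hL)

-- === general noncrossing for non-interleaved pairs ===

lemma noncross_nonint_qq {a b x y : ℕ} (hab : a < b) (hxy : x < y)
    (hne : ¬(a = x ∧ b = y))
    (hni1 : ¬(a < x ∧ x < b ∧ b < y)) (hni2 : ¬(x < a ∧ a < y ∧ y < b)) :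
    ¬ Cross s(qpt a, qpt b) s(qpt x, qpt y) := by
  by_cases hsh : a = x ∨ a = y ∨ b = x ∨ b = y
  · exact noncross_share_qq (by omega) (by omega) hsh hne (by omega)
  · push_neg at hsh
    obtain ⟨s1, s2, s3, s4⟩ := hsh
    rcases Nat.lt_or_ge b x with hbx | hbx
    · exact noncross_disjoint hab hbx hxy
    · rcases Nat.lt_or_ge y a with hya | hya
      · intro hc; exact noncross_disjoint hxy (by omega) hab (cross_comm hc)
      · rcases Nat.lt_or_ge a x with hax | hax
        · have : y < b := by omega
          exact noncross_nested hax hxy this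
        · intro hc
          exact noncross_nested (by omega) hab (by omega) (cross_comm hc)

-- === maximality witnesses ===

lemma max_witness_qq {L a b : ℕ} (hL : 14 ≤ L) (hLe : Even L) (hab : a < b) (hbL : b ≤ L)
    (hnot : ¬ TPq L a b) : ∃ e' ∈ TEdges L, Cross s(qpt a, qpt b) e' := by
  have hL2 : L % 2 = 0 := Nat.even_iff.1 hLe
  have hb1 : b ≠ a + 1 := by intro h; exact hnot (Or.inl ⟨h, by omega⟩)
  by_cases hc1 : a % 2 = 0 ∧ 2 ≤ a
  · -- pocket (a-1, a+1) straddles a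
    have hb2 : b ≠ a + 2 := by
      intro h; exact hnot (Or.inr (Or.inl ⟨h, hc1.1, by omega⟩))
    refine ⟨s(qpt (a-1), qpt (a+1)), mem_TE_qq (by omega) (Or.inr (Or.inr (Or.inr (Or.inl
      ⟨by omega, by omega, by omega⟩)))), ?_⟩
    have := cross_interleaved (a := a-1) (x := a) (b := a+1) (y := b)
      (by omega) (by omega) (by omega)
      (by rintro ⟨he, _, _⟩; rw [Nat.even_iff] at he; omega)
      (by rintro ⟨he, _, h6⟩; omega)
    exact cross_comm this
  · by_cases hc2 : b % 2 = 0 ∧ b + 2 ≤ L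
    · -- pocket (b-1, b+1) straddles b
      have hab2 : a ≠ b - 2 := by
        intro h
        exact hnot (Or.inr (Or.inl ⟨by omega, by omega, by omega⟩))
      refine ⟨s(qpt (b-1), qpt (b+1)), mem_TE_qq (by omega) (Or.inr (Or.inr (Or.inr (Or.inl
        ⟨by omega, by omega, by omega⟩)))), ?_⟩
      exact cross_interleaved (a := a) (x := b-1) (b := b) (y := b+1)
        (by omega) (by omega) (by omega)
        (by rintro ⟨he, h5, h6⟩; omega)
        (by rintro ⟨he, _, _⟩; rw [Nat.even_iff] at he; omega)
    · -- remaining : (a = 0 ∨ a odd) ∧ (b odd ∨ b = L)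
      have hrem : (a = 0 ∨ a % 2 = 1) ∧ (b % 2 = 1 ∨ b = L) := by
        constructor
        · omega
        · rcases Nat.lt_or_ge b L with h | h
          · left; omega
          · right; omega
      rcases Nat.eq_zero_or_pos a with rfl | hapos
      · -- a = 0
        have hbodd : b % 2 = 1 ∨ b = L := hrem.2
        rcases hbodd with hbo | hbeqL
        · have hb3 : 3 ≤ b := by omega
          rcases Nat.lt_or_ge b (L-1) with hblt | hbge
          · -- b ≤ L-3 : fan (1, b+2)
            refine ⟨s(qpt 1, qpt (b+2)), mem_TE_qq (by omega) (Or.inr (Or.inr (Or.inr (Or.inr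
              ⟨rfl, by omega, by omega, by omega⟩)))), ?_⟩
            exact cross_interleaved (a := 0) (x := 1) (b := b) (y := b+2)
              (by omega) (by omega) (by omega)
              (by rintro ⟨_, _, h6⟩; omega)
              (by rintro ⟨he, _, _⟩; rw [Nat.even_iff] at he; omega)
          · -- b = L-1 : use the W-chord (1, W)
            have hbeq : b = L - 1 := by omega
            refine ⟨s(qpt 1, wpt L), mem_TE_qW (by omega) (Or.inr (Or.inr (Or.inl rfl))), ?_⟩
            exact crossW hL hLe (a := 0) (x := 1) (b := b) (by omega) (by omega) (by omega)
              (by rintro ⟨_, h5⟩; omega) (by rintro ⟨_, _, h6⟩; omega)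
        · -- (0, L) is the top edge, contradiction
          exact absurd (Or.inr (Or.inr (Or.inl ⟨rfl, hbeqL⟩))) hnot
      · -- a ≥ 1 odd
        have hao : a % 2 = 1 := by omega
        rcases Nat.eq_or_lt_of_le hapos with h1 | h1'
        · -- a = 1
          have ha1 : a = 1 := h1.symm
          subst ha1
          have hbL' : b = L := by
            rcases hrem.2 with hbo | h
            · exfalso
              rcases Nat.lt_or_ge b 5 with h5 | h5
              · have : b = 3 := by omega
                exact hnot (Or.inr (Or.inr (Or.inr (Or.inl ⟨by omega, by omega, by omega⟩))))
              · exact hnot (Or.inr (Or.inr (Or.inr (Or.inr ⟨rfl, hbo, h5, by omega⟩))))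
            · exact h
          refine ⟨s(qpt (L-1), wpt L), mem_TE_qW (by omega) (Or.inr (Or.inr (Or.inr (by omega)))), ?_⟩
          exact crossW hL hLe (a := 1) (x := L-1) (b := b) (by omega) (by omega) (by omega)
            (by rintro ⟨h4, _⟩; omega) (by rintro ⟨he, _, _⟩; rw [Nat.even_iff] at he; omega)
        · -- a ≥ 3 odd : fan (1, a+2) straddles a
          have ha3 : 3 ≤ a := by omega
          have haL3 : a + 3 ≤ L := by
            rcases hrem.2 with hbo | hbeq <;> omega
          have hba2' : a + 2 < b := by
            rcases hrem.2 with hbo | hbeq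
            · have hne2 : b ≠ a + 2 := fun h =>
                hnot (Or.inr (Or.inr (Or.inr (Or.inl ⟨h, hao, by omega⟩))))
              omega
            · omega
          refine ⟨s(qpt 1, qpt (a+2)), mem_TE_qq (by omega) (Or.inr (Or.inr (Or.inr (Or.inr
            ⟨rfl, by omega, by omega, by omega⟩)))), ?_⟩
          have := cross_interleaved (a := 1) (x := a) (b := a+2) (y := b)
            (by omega) (by omega) (by omega)
            (by rintro ⟨he, _, _⟩; rw [Nat.even_iff] at he; omega)
            (by rintro ⟨he, _, _⟩; rw [Nat.even_iff] at he; omega)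
          exact cross_comm this

lemma max_witness_qW {L x : ℕ} (hL : 14 ≤ L) (hLe : Even L) (hx : x ≤ L)
    (hnot : ¬ TPw L x) : ∃ e' ∈ TEdges L, Cross s(qpt x, wpt L) e' := by
  have hL2 : L % 2 = 0 := Nat.even_iff.1 hLe
  have h0 : x ≠ 0 := fun h => hnot (Or.inl h)
  have hxL : x ≠ L := fun h => hnot (Or.inr (Or.inl h))
  have h1 : x ≠ 1 := fun h => hnot (Or.inr (Or.inr (Or.inl h)))
  have hL1 : x + 1 ≠ L := fun h => hnot (Or.inr (Or.inr (Or.inr h)))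
  rcases Nat.even_or_odd x with hxe | hxo
  · -- x even, 2 ≤ x ≤ L-2 : pocket (x-1, x+1)
    have hxe2 : x % 2 = 0 := Nat.even_iff.1 hxe
    refine ⟨s(qpt (x-1), qpt (x+1)), mem_TE_qq (by omega) (Or.inr (Or.inr (Or.inr (Or.inl
      ⟨by omega, by omega, by omega⟩)))), ?_⟩
    have := crossW hL hLe (a := x-1) (x := x) (b := x+1) (by omega) (by omega) (by omega)
      (by rintro ⟨h4, h5⟩; omega) (by rintro ⟨he, _, _⟩; rw [Nat.even_iff] at he; omega)
    exact cross_comm this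
  · -- x odd, 3 ≤ x ≤ L-3 : fan (1, x+2)
    have hxo2 : x % 2 = 1 := Nat.odd_iff.1 hxo
    refine ⟨s(qpt 1, qpt (x+2)), mem_TE_qq (by omega) (Or.inr (Or.inr (Or.inr (Or.inr
      ⟨rfl, by omega, by omega, by omega⟩)))), ?_⟩
    have := crossW hL hLe (a := 1) (x := x) (b := x+2) (by omega) (by omega) (by omega)
      (by rintro ⟨h4, _⟩; omega) (by rintro ⟨he, _, _⟩; rw [Nat.even_iff] at he; omega)
    exact cross_comm this

-- === S facts ===

lemma qpt_mem_SS {L j : ℕ} (hj : j ≤ L) : qpt j ∈ SS L :=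
  Or.inl ⟨j, Set.mem_Iic.2 hj, rfl⟩

lemma wpt_mem_SS {L : ℕ} : wpt L ∈ SS L := Or.inr rfl

lemma SS_cases {L : ℕ} {p : Pt} (h : p ∈ SS L) : (∃ j, j ≤ L ∧ p = qpt j) ∨ p = wpt L := by
  rcases h with ⟨j, hj, rfl⟩ | h
  · exact Or.inl ⟨j, Set.mem_Iic.1 hj, rfl⟩
  · exact Or.inr h

lemma SS_finite (L : ℕ) : (SS L).Finite :=
  (((Set.finite_Iic L).image qpt).union (Set.finite_singleton _))

lemma qpt_injective : Function.Injective qpt := fun _ _ h => qpt_inj h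

lemma SS_ncard {L : ℕ} (hL : 14 ≤ L) : (SS L).ncard = L + 2 := by
  have h1 : (SS L) = insert (wpt L) (qpt '' Set.Iic L) := by
    rw [SS, Set.union_singleton]
  rw [h1, Set.ncard_insert_of_notMem, Set.ncard_image_of_injective _ qpt_injective]
  · have h2 : (Set.Iic L) = ↑(Finset.Iic L) := (Finset.coe_Iic L).symm
    rw [h2, Set.ncard_coe_finset, Nat.card_Iic]
  · rintro ⟨j, _, hj⟩
    exact wpt_ne_qpt hL hj.symm

lemma collinear_ori {A B C : Pt} (h : Collinear ℝ ({A, B, C} : Set Pt)) : ori A B C = 0 := by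
  obtain ⟨p₀, v, hv⟩ := (collinear_iff_exists_forall_eq_smul_vadd _).1 h
  obtain ⟨r1, h1⟩ := hv A (by simp)
  obtain ⟨r2, h2⟩ := hv B (by simp)
  obtain ⟨r3, h3⟩ := hv C (by simp)
  subst h1 h2 h3
  simp only [ori, vadd_eq_add, Prod.fst_add, Prod.snd_add, Prod.smul_fst, Prod.smul_snd,
    smul_eq_mul]
  ring

lemma SS_genpos {L : ℕ} (hL : 14 ≤ L) (hLe : Even L) : InGenPos (SS L) := by
  intro p hp q hq r hr hpq hpr hqr hcol
  have h0 := collinear_ori hcol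
  rcases SS_cases hp with ⟨i, hi, rfl⟩ | rfl
  · rcases SS_cases hq with ⟨j, hj, rfl⟩ | heq
    · rcases SS_cases hr with ⟨k, hk, rfl⟩ | heq2
      · exact ori_q_ne (fun h => hpq (by rw [h])) (fun h => hpr (by rw [h]))
          (fun h => hqr (by rw [h])) h0
      · subst heq2
        exact oriW_ne' hL hLe hi hj (fun h => hpq (by rw [h])) h0
    · subst heq
      rcases SS_cases hr with ⟨k, hk, rfl⟩ | heq2
      · exact oriWq_ne hL hLe hi hk (fun h => hpr (by rw [h])) h0
      · exact hqr heq2.symm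
  · rcases SS_cases hq with ⟨j, hj, rfl⟩ | heq
    · rcases SS_cases hr with ⟨k, hk, rfl⟩ | heq2
      · exact oriW_first_ne hL hLe hj hk (fun h => hqr (by rw [h])) h0
      · exact hpr heq2.symm
    · exact hpq heq.symm

lemma TE_edgeset {L : ℕ} (hL : 14 ≤ L) : IsEdgeSetOn (SS L) (TEdges L) := by
  rintro e (⟨a, b, hab, hq, rfl⟩ | ⟨x, hx, hw, rfl⟩)
  · constructor
    · rw [Sym2.isDiag_iff_proj_eq]
      exact fun h => (qpt_ne (Nat.ne_of_lt hab) h).elim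
    · intro p hp
      have hbL := (TPq_lt hL hq).2
      rcases Sym2.mem_iff.1 hp with rfl | rfl
      · exact qpt_mem_SS (by omega)
      · exact qpt_mem_SS hbL
  · constructor
    · rw [Sym2.isDiag_iff_proj_eq]
      exact fun h => (wpt_ne_qpt hL h.symm).elim
    · intro p hp
      rcases Sym2.mem_iff.1 hp with rfl | rfl
      · exact qpt_mem_SS hx
      · exact wpt_mem_SS

lemma TE_plane {L : ℕ} (hL : 14 ≤ L) (hLe : Even L) : IsPlaneGraph (SS L) (TEdges L) := by
  refine ⟨TE_edgeset hL, ?_⟩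
  rintro e (⟨a, b, hab, hq, rfl⟩ | ⟨x, hx, hw, rfl⟩) f
    (⟨a', b', hab', hq', rfl⟩ | ⟨x', hx', hw', rfl⟩) hne
  · refine TE_noncross_qq hL hab hab' hq hq' ?_
    rintro ⟨rfl, rfl⟩; exact hne rfl
  · exact TE_noncross_qW hL hLe hab hx' hq hw'
  · intro hc
    exact TE_noncross_qW hL hLe hab' hx hq' hw (cross_comm hc)
  · refine TE_noncross_WW hL hLe hx hx' ?_
    intro h; exact hne (by rw [h])

lemma TE_max {L : ℕ} (hL : 14 ≤ L) (hLe : Even L) :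
    ∀ p ∈ SS L, ∀ q ∈ SS L, p ≠ q → s(p, q) ∉ TEdges L →
      ¬ IsPlaneGraph (SS L) (insert s(p, q) (TEdges L)) := by
  intro p hp q hq hpq hnot hplane
  obtain ⟨-, hpw⟩ := hplane
  have key : ∃ e' ∈ TEdges L, Cross s(p, q) e' := by
    rcases SS_cases hp with ⟨i, hi, rfl⟩ | rfl
    · rcases SS_cases hq with ⟨j, hj, rfl⟩ | heq
      · rcases lt_trichotomy i j with h | h | h
        · refine max_witness_qq hL hLe h hj ?_
          intro hTP; exact hnot (mem_TE_qq h hTP)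
        · exact absurd (by rw [h]) hpq
        · rw [sym2_comm (qpt i) (qpt j)]
          refine max_witness_qq hL hLe h hi ?_
          intro hTP
          exact hnot (by rw [sym2_comm (qpt i) (qpt j)]; exact mem_TE_qq h hTP)
      · subst heq
        refine max_witness_qW hL hLe hi ?_
        intro hTP; exact hnot (mem_TE_qW hi hTP)
    · rcases SS_cases hq with ⟨j, hj, rfl⟩ | heq
      · rw [sym2_comm (wpt L) (qpt j)]
        refine max_witness_qW hL hLe hj ?_
        intro hTP
        exact hnot (by rw [sym2_comm (wpt L) (qpt j)]; exact mem_TE_qW hj hTP)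
      · subst heq; exact absurd rfl hpq
  obtain ⟨e', he', hcr⟩ := key
  exact hpw s(p, q) (Set.mem_insert _ _) e' (Set.mem_insert_of_mem _ he')
    (fun h => hnot (h ▸ he')) hcr

lemma TE_triangulation {L : ℕ} (hL : 14 ≤ L) (hLe : Even L) :
    IsTriangulation (SS L) (TEdges L) :=
  ⟨TE_plane hL hLe, TE_max hL hLe⟩

-- === E' analysis ===

/-- Shape of any edge over SS L. -/
lemma edge_shape {L : ℕ} (hL : 14 ≤ L) {E' : Set (Sym2 Pt)} (hE : IsEdgeSetOn (SS L) E')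
    {e : Sym2 Pt} (he : e ∈ E') :
    (∃ a b, a < b ∧ b ≤ L ∧ e = s(qpt a, qpt b)) ∨ (∃ x, x ≤ L ∧ e = s(qpt x, wpt L)) := by
  induction e using Sym2.ind with
  | _ u v =>
    obtain ⟨hdiag, hmem⟩ := hE _ he
    have hu : u ∈ SS L := hmem u (Sym2.mem_mk_left u v)
    have hv : v ∈ SS L := hmem v (Sym2.mem_mk_right u v)
    have huv : u ≠ v := by
      intro h; exact hdiag (by rw [h]; exact Sym2.isDiag_iff_proj_eq |>.2 rfl)
    rcases SS_cases hu with ⟨i, hi, rfl⟩ | rfl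
    · rcases SS_cases hv with ⟨j, hj, rfl⟩ | rfl
      · rcases lt_trichotomy i j with h | h | h
        · exact Or.inl ⟨i, j, h, hj, rfl⟩
        · exact absurd (by rw [h]) huv
        · exact Or.inl ⟨j, i, h, hi, sym2_comm _ _⟩
      · exact Or.inr ⟨i, hi, rfl⟩
    · rcases SS_cases hv with ⟨j, hj, rfl⟩ | rfl
      · exact Or.inr ⟨j, hj, sym2_comm _ _⟩
      · exact absurd rfl huv

/-- base q-pair vs arbitrary q-pair never cross -/
lemma base_noncross_qq {L a b x y : ℕ} (hL : 14 ≤ L) (hB : BPq L a b) (hab : a < b)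
    (hxy : x < y) (hyL : y ≤ L) (hne : ¬(a = x ∧ b = y)) :
    ¬ Cross s(qpt a, qpt b) s(qpt x, qpt y) := by
  rcases hB with ⟨h1, h2⟩ | ⟨h1, h2, h3⟩ | ⟨h1, h2⟩
  · -- consecutive: never interleaved
    exact noncross_nonint_qq hab hxy hne (by omega) (by omega)
  · -- hull
    subst h1
    by_cases hsh : x = a ∨ x = a+2 ∨ y = a ∨ y = a+2
    · refine noncross_share_qq (by omega) (by omega) ?_ hne (by omega)
      rcases hsh with h | h | h | h
      · exact Or.inl h.symm
      · exact Or.inr (Or.inr (Or.inl h.symm))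
      · exact Or.inr (Or.inl h.symm)
      · exact Or.inr (Or.inr (Or.inr h.symm))
    · push_neg at hsh
      exact noncross_hull (Nat.even_iff.2 h2) (by omega) (by omega) (by omega) (by omega)
  · -- top
    subst h1
    by_cases hsh : x = 0 ∨ x = b ∨ y = 0 ∨ y = b
    · refine noncross_share_qq (by omega) (by omega) ?_ hne (by omega)
      rcases hsh with h | h | h | h
      · exact Or.inl h.symm
      · exact Or.inr (Or.inr (Or.inl h.symm))
      · exact Or.inr (Or.inl h.symm)
      · exact Or.inr (Or.inr (Or.inr h.symm))
    · push_neg at hsh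
      have hres := noncross_top_qq hL (y := y) (show 0 < x by omega)
        (show x < L by omega) (show 0 < y by omega) (show y < L by omega)
      rw [h2]
      exact hres

/-- base q-pair vs arbitrary W-pair never cross -/
lemma base_noncross_qW {L a b x : ℕ} (hL : 14 ≤ L) (hLe : Even L) (hB : BPq L a b)
    (hab : a < b) (hxL : x ≤ L) :
    ¬ Cross s(qpt a, qpt b) s(qpt x, wpt L) := by
  have hbL : b ≤ L := by rcases hB with ⟨h1, h2⟩ | ⟨h1, h2, h3⟩ | ⟨h1, h2⟩ <;> omega
  by_cases hsh : x = a ∨ x = b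
  · exact noncross_share_qW hL hLe (by omega) hbL (by omega) hsh
  · push_neg at hsh
    obtain ⟨s1, s2⟩ := hsh
    rcases Nat.lt_or_ge x a with hxa | hxa
    · by_cases hbig : x = 0 ∧ b = L
      · obtain ⟨rfl, rfl⟩ := hbig
        intro hc
        exact noncrossW_left0L hL hLe (by omega) (by omega) (cross_comm hc)
      · intro hc
        exact noncrossW_left hL hLe (by omega) hab hbL hbig (cross_comm hc)
    · rcases Nat.lt_or_ge b x with hbx | hbx
      · by_cases hbig : a = 0 ∧ x = L
        · obtain ⟨rfl, rfl⟩ := hbig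
          intro hc
          exact noncrossW_topright hL hLe (by omega) (by omega) (cross_comm hc)
        · intro hc
          exact noncrossW_right hL hLe hab hbx hxL hbig (cross_comm hc)
      · -- a < x < b : base must be hull or top
        have hax : a < x := by omega
        have hxb : x < b := by omega
        rcases hB with ⟨h1, h2⟩ | ⟨h1, h2, h3⟩ | ⟨h1, h2⟩
        · omega
        · subst h1
          exact noncross_hull_W hL hLe (Nat.even_iff.2 h2) h3 (by omega) (by omega)
        · subst h1; subst h2
          exact noncross_top_qW hL hLe (by omega) (by omega)

/-- base W-pair vs arbitrary q-pair never cross -/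
lemma base_noncross_Wq {L a b x : ℕ} (hL : 14 ≤ L) (hLe : Even L) (hB : BPw L x)
    (hab : a < b) (hbL : b ≤ L) :
    ¬ Cross s(qpt x, wpt L) s(qpt a, qpt b) := by
  rcases hB with h | h
  · -- (0, W)
    subst h
    rcases Nat.eq_zero_or_pos a with rfl | hapos
    · exact noncross_share (oriWq_ne hL hLe (by omega) hbL (by omega))
    · rcases Nat.lt_or_ge b L with hblt | hbge
      · exact noncrossW_left hL hLe hapos hab hbL (by omega)
      · have hbeq : b = L := by omega
        rw [hbeq]
        exact noncrossW_left0L hL hLe hapos (by omega)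
  · -- (L, W)
    rw [h]
    rcases Nat.lt_or_ge b L with hblt | hbge
    · rcases Nat.eq_zero_or_pos a with rfl | hapos
      · exact noncrossW_topright hL hLe (by omega) hblt
      · exact noncrossW_right hL hLe hab hblt le_rfl (by omega)
    · have hbeq : b = L := by omega
      rw [hbeq, sym2_comm (qpt a) (qpt L)]
      exact noncross_share (oriWq_ne hL hLe le_rfl (by omega) (by omega))

/-- the base edges belong to every triangulation of SS L -/
lemma base_forced {L : ℕ} (hL : 14 ≤ L) (hLe : Even L) {E' : Set (Sym2 Pt)}
    (hT : IsTriangulation (SS L) E') :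
    (∀ a b, a < b → BPq L a b → s(qpt a, qpt b) ∈ E') ∧
    (∀ x, BPw L x → s(qpt x, wpt L) ∈ E') := by
  obtain ⟨⟨hES, hPW⟩, hMax⟩ := hT
  constructor
  · intro a b hab hB
    by_contra hnot
    have hbL : b ≤ L := by rcases hB with ⟨h1, h2⟩ | ⟨h1, h2, h3⟩ | ⟨h1, h2⟩ <;> omega
    apply hMax (qpt a) (qpt_mem_SS (by omega)) (qpt b) (qpt_mem_SS hbL)
      (qpt_ne (by omega)) hnot
    constructor
    · intro e he
      rcases Set.mem_insert_iff.1 he with rfl | he'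
      · constructor
        · rw [Sym2.isDiag_iff_proj_eq]
          exact fun h => (qpt_ne (by omega : a ≠ b) h).elim
        · intro p hp
          rcases Sym2.mem_iff.1 hp with rfl | rfl
          · exact qpt_mem_SS (by omega)
          · exact qpt_mem_SS hbL
      · exact hES e he'
    · intro e he f hf hne
      rcases Set.mem_insert_iff.1 he with rfl | he' <;>
        rcases Set.mem_insert_iff.1 hf with rfl | hf'
      · exact absurd rfl hne
      · -- new vs old
        rcases edge_shape hL hES hf' with ⟨x, y, hxy, hyL, rfl⟩ | ⟨x, hx, rfl⟩
        · refine base_noncross_qq hL hB hab hxy hyL ?_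
          rintro ⟨rfl, rfl⟩
          exact hnot hf'
        · exact base_noncross_qW hL hLe hB hab hx
      · -- old vs new
        intro hc
        have hc' := cross_comm hc
        rcases edge_shape hL hES he' with ⟨x, y, hxy, hyL, rfl⟩ | ⟨x, hx, rfl⟩
        · refine base_noncross_qq hL hB hab hxy hyL ?_ hc'
          rintro ⟨rfl, rfl⟩
          exact hnot he'
        · exact base_noncross_qW hL hLe hB hab hx hc'
      · exact hPW e he' f hf' hne
  · intro x hB
    by_contra hnot
    have hxL : x ≤ L := by rcases hB with rfl | rfl <;> omega
    apply hMax (qpt x) (qpt_mem_SS hxL) (wpt L) wpt_mem_SS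
      (fun h => wpt_ne_qpt hL h.symm) hnot
    constructor
    · intro e he
      rcases Set.mem_insert_iff.1 he with rfl | he'
      · constructor
        · rw [Sym2.isDiag_iff_proj_eq]
          exact fun h => (wpt_ne_qpt hL h.symm).elim
        · intro p hp
          rcases Sym2.mem_iff.1 hp with rfl | rfl
          · exact qpt_mem_SS hxL
          · exact wpt_mem_SS
      · exact hES e he'
    · intro e he f hf hne
      rcases Set.mem_insert_iff.1 he with rfl | he' <;>
        rcases Set.mem_insert_iff.1 hf with rfl | hf'
      · exact absurd rfl hne
      · rcases edge_shape hL hES hf' with ⟨a, b, hab, hbL, rfl⟩ | ⟨y, hy, rfl⟩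
        · exact base_noncross_Wq hL hLe hB hab hbL
        · refine TE_noncross_WW hL hLe hxL hy ?_
          intro h
          exact hne (by rw [h])
      · intro hc
        have hc' := cross_comm hc
        rcases edge_shape hL hES he' with ⟨a, b, hab, hbL, rfl⟩ | ⟨y, hy, rfl⟩
        · exact base_noncross_Wq hL hLe hB hab hbL hc'
        · refine TE_noncross_WW hL hLe hxL hy ?_ hc'
          intro h
          exact hne (by rw [h.symm])
      · exact hPW e he' f hf' hne

-- === chords and laminarity ===

def Fq (L : ℕ) (E' : Set (Sym2 Pt)) (a b : ℕ) : Prop :=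
  a < b ∧ b ≤ L ∧ s(qpt a, qpt b) ∈ E' ∧ ¬ BPq L a b

def Fw (L : ℕ) (E' : Set (Sym2 Pt)) (x : ℕ) : Prop :=
  x ≤ L ∧ s(qpt x, wpt L) ∈ E' ∧ ¬ BPw L x

lemma lam_qq {L : ℕ} {E' : Set (Sym2 Pt)}
    (hPW : ∀ e ∈ E', ∀ f ∈ E', e ≠ f → ¬ Cross e f)
    {a b c d : ℕ} (h1 : Fq L E' a c) (h2 : Fq L E' b d)
    (o1 : a < b) (o2 : b < c) (o3 : c < d) : False := by
  obtain ⟨hac, hcL, hmem1, hnb1⟩ := h1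
  obtain ⟨hbd, hdL, hmem2, hnb2⟩ := h2
  have hne : s(qpt a, qpt c) ≠ s(qpt b, qpt d) := by
    intro h; rcases sym2_qq_eq h with ⟨h1, h2⟩ | ⟨h1, h2⟩ <;> omega
  apply hPW _ hmem1 _ hmem2 hne
  refine cross_interleaved o1 o2 o3 ?_ ?_
  · rintro ⟨he, hb1, hc1⟩
    exact hnb1 (Or.inr (Or.inl ⟨hc1, Nat.even_iff.1 he, hcL⟩))
  · rintro ⟨he, hc1, hd1⟩
    exact hnb2 (Or.inr (Or.inl ⟨hd1, Nat.even_iff.1 he, hdL⟩))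

lemma lam_qW {L : ℕ} (hL : 14 ≤ L) (hLe : Even L) {E' : Set (Sym2 Pt)}
    (hPW : ∀ e ∈ E', ∀ f ∈ E', e ≠ f → ¬ Cross e f)
    {a c x : ℕ} (h1 : Fq L E' a c) (h2 : Fw L E' x)
    (o1 : a < x) (o2 : x < c) : False := by
  obtain ⟨hac, hcL, hmem1, hnb1⟩ := h1
  obtain ⟨hxL, hmem2, hnb2⟩ := h2
  apply hPW _ hmem1 _ hmem2 (sym2_qq_ne_qW hL)
  refine crossW hL hLe o1 o2 hcL ?_ ?_
  · rintro ⟨ha0, hcL'⟩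
    exact hnb1 (Or.inr (Or.inr ⟨ha0, hcL'⟩))
  · rintro ⟨he, hx1, hc1⟩
    exact hnb1 (Or.inr (Or.inl ⟨hc1, Nat.even_iff.1 he, hcL⟩))

/-- There is always a "light" even vertex untouched by any chord of E'. -/
lemma exists_light {L : ℕ} (hL : 14 ≤ L) (hLe : Even L) {E' : Set (Sym2 Pt)}
    (hPW : ∀ e ∈ E', ∀ f ∈ E', e ≠ f → ¬ Cross e f) :
    ∃ v, v % 2 = 0 ∧ 2 ≤ v ∧ (v + 2 ≤ L ∨ v = L) ∧
      (∀ a b, Fq L E' a b → v ≠ a ∧ v ≠ b) ∧ (∀ x, Fw L E' x → v ≠ x) := by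
  classical
  have hL2 : L % 2 = 0 := Nat.even_iff.1 hLe
  set P : ℕ → Prop := fun m =>
    (∃ a b, Fq L E' a b ∧ b - a = m) ∨ (∃ x, Fw L E' x ∧ L + 1 - x = m) with hP
  by_cases hch : ∃ m, P m
  · set m := Nat.find hch with hm
    have hspec := Nat.find_spec hch
    have hmin : ∀ m', m' < m → ¬ P m' := fun m' h => Nat.find_min hch h
    -- basic consequences of being a (non-base) chord
    have hq_len : ∀ a b, Fq L E' a b → 2 ≤ b - a := by
      intro a b ⟨hab, hbL, _, hnb⟩
      by_contra hcon
      exact hnb (Or.inl ⟨by omega, hbL⟩)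
    have hw_rng : ∀ x, Fw L E' x → 1 ≤ x ∧ x + 1 ≤ L := by
      intro x ⟨hxL, _, hnb⟩
      constructor
      · by_contra hcon; exact hnb (Or.inl (by omega))
      · have : x ≠ L := fun h => hnb (Or.inr h)
        omega
    rcases hspec with ⟨a, b, hF, hlen⟩ | ⟨x, hF, hlen⟩
    · -- minimal chord is a q-chord (a,b)
      obtain ⟨hab, hbL, hmem, hnb⟩ := hF
      have h2m : 2 ≤ b - a := hq_len a b ⟨hab, hbL, hmem, hnb⟩
      -- the chosen interior even vertex
      have hodd2 : b - a = 2 → a % 2 = 1 := by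
        intro h
        by_contra hcon
        exact hnb (Or.inr (Or.inl ⟨by omega, by omega, hbL⟩))
      obtain ⟨v, hv1, hv2, hv3⟩ : ∃ v, v % 2 = 0 ∧ a < v ∧ v < b := by
        rcases Nat.lt_or_ge (b - a) 3 with h | h
        · have he := hodd2 (by omega)
          exact ⟨a+1, by omega, by omega, by omega⟩
        · rcases Nat.even_or_odd (a+1) with he | ho
          · exact ⟨a+1, Nat.even_iff.1 he, by omega, by omega⟩
          · obtain ⟨u, hu⟩ := ho
            exact ⟨a+2, by omega, by omega, by omega⟩
      refine ⟨v, hv1, by omega, by omega, ?_, ?_⟩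
      · rintro c d hFcd
        obtain ⟨hcd, hdL, hmemcd, hnbcd⟩ := hFcd
        constructor
        · rintro rfl
          -- chord (v, d) with a < v < b
          rcases Nat.lt_or_ge b d with h | h
          · -- a < v < b < d : interleave
            exact (lam_qq hPW ⟨hab, hbL, hmem, hnb⟩ ⟨hcd, hdL, hmemcd, hnbcd⟩ hv2 hv3 h).elim
          · -- v, d both in [a, b] : smaller chord
            exact hmin (d - v) (by omega) (Or.inl ⟨v, d, ⟨hcd, hdL, hmemcd, hnbcd⟩, rfl⟩)
        · rintro rfl
          rcases Nat.lt_or_ge c a with h | h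
          · exact (lam_qq hPW ⟨hcd, hdL, hmemcd, hnbcd⟩ ⟨hab, hbL, hmem, hnb⟩ h hv2 hv3).elim
          · exact hmin (v - c) (by omega) (Or.inl ⟨c, v, ⟨hcd, hdL, hmemcd, hnbcd⟩, rfl⟩)
      · rintro x hFx
        rintro rfl
        exact (lam_qW hL hLe hPW ⟨hab, hbL, hmem, hnb⟩ hFx hv2 hv3).elim
    · -- minimal chord is a W-chord x
      obtain ⟨hxL, hmem, hnb⟩ := hF
      obtain ⟨hx1, hx2⟩ := hw_rng x ⟨hxL, hmem, hnb⟩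
      obtain ⟨v, hv1, hv2, hv3⟩ : ∃ v, v % 2 = 0 ∧ x < v ∧ v ≤ L := by
        rcases Nat.even_or_odd (x+1) with he | ho
        · exact ⟨x+1, Nat.even_iff.1 he, by omega, by omega⟩
        · obtain ⟨u, hu⟩ := ho
          exact ⟨x+2, by omega, by omega, by omega⟩
      refine ⟨v, hv1, by omega, by omega, ?_, ?_⟩
      · rintro c d hFcd
        obtain ⟨hcd, hdL, hmemcd, hnbcd⟩ := hFcd
        constructor
        · rintro rfl
          -- chord (v, d) : both ≥ x
          exact hmin (d - v) (by omega) (Or.inl ⟨v, d, ⟨hcd, hdL, hmemcd, hnbcd⟩, rfl⟩)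
        · rintro rfl
          rcases Nat.lt_or_ge c x with h | h
          · exact (lam_qW hL hLe hPW ⟨hcd, hdL, hmemcd, hnbcd⟩ ⟨hxL, hmem, hnb⟩ h hv2).elim
          · -- c ∈ [x, L] : smaller q-chord
            exact hmin (v - c) (by omega) (Or.inl ⟨c, v, ⟨hcd, hdL, hmemcd, hnbcd⟩, rfl⟩)
      · rintro y hFy
        rintro rfl
        obtain ⟨hy1, hy2⟩ := hw_rng v hFy
        exact hmin (L + 1 - v) (by omega) (Or.inr ⟨v, hFy, rfl⟩)
  · -- no chords at all
    push_neg at hch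
    refine ⟨2, by omega, le_rfl, by omega, ?_, ?_⟩
    · intro a b hF
      exact absurd (Or.inl ⟨a, b, hF, rfl⟩) (hch (b - a))
    · intro x hF
      exact absurd (Or.inr ⟨x, hF, rfl⟩) (hch (L + 1 - x))

-- === the cut ===

lemma BPq_TPq {L a b : ℕ} (h : BPq L a b) : TPq L a b := by
  rcases h with h | h | h
  · exact Or.inl h
  · exact Or.inr (Or.inl h)
  · exact Or.inr (Or.inr (Or.inl h))

lemma TPq_nbr_mid {L v a b : ℕ} (hL : 14 ≤ L) (hL2 : L % 2 = 0) (hv : v % 2 = 0)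
    (h2 : 2 ≤ v) (hvL : v + 2 ≤ L) (h : TPq L a b) :
    (a = v → b = v+1 ∨ b = v+2) ∧ (b = v → a = v-1 ∨ a = v-2) := by
  rcases h with ⟨h1, h2'⟩ | ⟨h1, h2', h3⟩ | ⟨h1, h2'⟩ | ⟨h1, h2', h3⟩ | ⟨h1, h2', h3, h4⟩ <;>
    constructor <;> intro hh <;> omega

lemma TPq_nbr_top {L a b : ℕ} (hL : 14 ≤ L) (hL2 : L % 2 = 0) (h : TPq L a b) :
    (b = L → a = L-1 ∨ a = L-2 ∨ a = 0) ∧ a ≠ L := by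
  have hlt := TPq_lt hL h
  rcases h with ⟨h1, h2'⟩ | ⟨h1, h2', h3⟩ | ⟨h1, h2'⟩ | ⟨h1, h2', h3⟩ | ⟨h1, h2', h3, h4⟩ <;>
    constructor <;> omega

lemma TPw_not_mid {L v : ℕ} (hL : 14 ≤ L) (hL2 : L % 2 = 0) (hv : v % 2 = 0)
    (h2 : 2 ≤ v) (hvL : v + 2 ≤ L) (h : TPw L v) : False := by
  rcases h with h | h | h | h <;> omega

/-- neighbours in T of a light middle vertex -/
lemma TE_nbr_mid {L v : ℕ} (hL : 14 ≤ L) (hL2 : L % 2 = 0) (hv : v % 2 = 0)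
    (h2 : 2 ≤ v) (hvL : v + 2 ≤ L) {u : Pt} (h : s(qpt v, u) ∈ TEdges L) :
    u = qpt (v-2) ∨ u = qpt (v-1) ∨ u = qpt (v+1) ∨ u = qpt (v+2) := by
  rcases h with ⟨a, b, hab, hq, he⟩ | ⟨x, hx, hw, he⟩
  · rcases Sym2.eq_iff.1 he with ⟨h1', h2'⟩ | ⟨h1', h2'⟩
    · have ha := qpt_inj h1'
      rcases (TPq_nbr_mid hL hL2 hv h2 hvL hq).1 ha.symm with hb | hb
      · subst hb; exact Or.inr (Or.inr (Or.inl h2'))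
      · subst hb; exact Or.inr (Or.inr (Or.inr h2'))
    · have hb := qpt_inj h1'
      rcases (TPq_nbr_mid hL hL2 hv h2 hvL hq).2 hb.symm with ha | ha
      · subst ha; exact Or.inr (Or.inl h2')
      · subst ha; exact Or.inl h2'
  · rcases Sym2.eq_iff.1 he with ⟨h1', h2'⟩ | ⟨h1', h2'⟩
    · have hxv := qpt_inj h1'
      exact absurd hw (fun hw' => TPw_not_mid hL hL2 hv h2 hvL (hxv ▸ hw'))
    · exact absurd h1'.symm (wpt_ne_qpt hL)

/-- neighbours in T of the light vertex L -/
lemma TE_nbr_top {L : ℕ} (hL : 14 ≤ L) (hL2 : L % 2 = 0) {u : Pt}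
    (h : s(qpt L, u) ∈ TEdges L) :
    u = qpt (L-1) ∨ u = qpt (L-2) ∨ u = qpt 0 ∨ u = wpt L := by
  rcases h with ⟨a, b, hab, hq, he⟩ | ⟨x, hx, hw, he⟩
  · rcases Sym2.eq_iff.1 he with ⟨h1', h2'⟩ | ⟨h1', h2'⟩
    · exact absurd (qpt_inj h1').symm (TPq_nbr_top hL hL2 hq).2
    · have hb := qpt_inj h1'
      rcases (TPq_nbr_top hL hL2 hq).1 hb.symm with ha | ha | ha
      · subst ha; exact Or.inl h2'
      · subst ha; exact Or.inr (Or.inl h2')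
      · subst ha; exact Or.inr (Or.inr (Or.inl h2'))
  · rcases Sym2.eq_iff.1 he with ⟨h1', h2'⟩ | ⟨h1', h2'⟩
    · exact Or.inr (Or.inr (Or.inr h2'))
    · exact absurd h1'.symm (wpt_ne_qpt hL)

/-- neighbours in E' of a light vertex (given no chords at it) -/
lemma E'_nbr {L v : ℕ} (hL : 14 ≤ L) (hLe : Even L) {E' : Set (Sym2 Pt)}
    (hES' : IsEdgeSetOn (SS L) E') (hvL : v ≤ L)
    (hlq : ∀ a b, Fq L E' a b → v ≠ a ∧ v ≠ b) (hlw : ∀ x, Fw L E' x → v ≠ x)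
    {u : Pt} (h : s(qpt v, u) ∈ E') :
    (∃ a b, a < b ∧ b ≤ L ∧ BPq L a b ∧ (a = v ∧ u = qpt b ∨ b = v ∧ u = qpt a)) ∨
    (BPw L v ∧ u = wpt L) := by
  rcases edge_shape hL hES' h with ⟨a, b, hab, hbL, he⟩ | ⟨x, hx, he⟩
  · have hB : BPq L a b := by
      by_contra hnb
      have hFq : Fq L E' a b := ⟨hab, hbL, he ▸ h, hnb⟩
      have := hlq a b hFq
      rcases Sym2.eq_iff.1 he with ⟨h1', h2'⟩ | ⟨h1', h2'⟩
      · exact this.1 (qpt_inj h1')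
      · exact this.2 (qpt_inj h1')
    rcases Sym2.eq_iff.1 he with ⟨h1', h2'⟩ | ⟨h1', h2'⟩
    · exact Or.inl ⟨a, b, hab, hbL, hB, Or.inl ⟨(qpt_inj h1').symm, h2'⟩⟩
    · exact Or.inl ⟨a, b, hab, hbL, hB, Or.inr ⟨(qpt_inj h1').symm, h2'⟩⟩
  · rcases Sym2.eq_iff.1 he with ⟨h1', h2'⟩ | ⟨h1', h2'⟩
    · have hxv : x = v := qpt_inj h1'.symm
      subst hxv
      have hB : BPw L x := by
        by_contra hnb
        exact hlw x ⟨hx, he ▸ h, hnb⟩ rfl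
      exact Or.inr ⟨hB, h2'⟩
    · exact absurd h1'.symm (wpt_ne_qpt hL)

lemma no_reach {G : SimpleGraph Pt} {X : Set Pt} {p w0 : Pt} (hp : p ∈ X) (hw : w0 ∈ X)
    (hpw : p ≠ w0) (hiso : ∀ u ∈ X, ¬ G.Adj p u) :
    ¬ (G.induce X).Reachable ⟨p, hp⟩ ⟨w0, hw⟩ := by
  rintro ⟨wlk⟩
  cases wlk with
  | nil => exact hpw rfl
  | cons hadj rest =>
    next b =>
      exact hiso b.1 b.2 hadj

lemma ncard_four_le (A B C D : Pt) : ({A, B, C, D} : Set Pt).ncard ≤ 4 := by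
  calc ({A, B, C, D} : Set Pt).ncard ≤ ({B, C, D} : Set Pt).ncard + 1 :=
        Set.ncard_insert_le _ _
    _ ≤ (({C, D} : Set Pt).ncard + 1) + 1 := by
        have := Set.ncard_insert_le B ({C, D} : Set Pt)
        omega
    _ ≤ ((({D} : Set Pt).ncard + 1) + 1) + 1 := by
        have := Set.ncard_insert_le C ({D} : Set Pt)
        omega
    _ ≤ 4 := by
        rw [Set.ncard_singleton]

lemma not_5conn {L : ℕ} (hL : 14 ≤ L) (hLe : Even L) {E' : Set (Sym2 Pt)}
    (hT' : IsTriangulation (SS L) E') :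
    ¬ KConnected 5 (SS L) (TEdges L ∪ E') := by
  classical
  have hL2 := Nat.even_iff.1 hLe
  obtain ⟨⟨hES', hPW'⟩, hMax'⟩ := hT'
  obtain ⟨v, hv, h2v, hvL, hlq, hlw⟩ := exists_light hL hLe hPW'
  rintro ⟨hcard, hconn⟩
  rcases hvL with hvmid | hveq
  · -- middle light vertex
    set C : Set Pt := {qpt (v-2), qpt (v-1), qpt (v+1), qpt (v+2)} with hC
    have hCS : C ⊆ SS L := by
      intro p hp
      simp only [hC, Set.mem_insert_iff, Set.mem_singleton_iff] at hp
      rcases hp with rfl | rfl | rfl | rfl <;> exact qpt_mem_SS (by omega)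
    have hCn : C.ncard < 5 := by
      rw [hC]
      have := ncard_four_le (qpt (v-2)) (qpt (v-1)) (qpt (v+1)) (qpt (v+2))
      omega
    have hvC : qpt v ∉ C := by
      simp only [hC, Set.mem_insert_iff, Set.mem_singleton_iff]
      push_neg
      exact ⟨qpt_ne (by omega), qpt_ne (by omega), qpt_ne (by omega), qpt_ne (by omega)⟩
    have hwC : wpt L ∉ C := by
      simp only [hC, Set.mem_insert_iff, Set.mem_singleton_iff]
      push_neg
      exact ⟨wpt_ne_qpt hL, wpt_ne_qpt hL, wpt_ne_qpt hL, wpt_ne_qpt hL⟩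
    have hp : qpt v ∈ SS L \ C := ⟨qpt_mem_SS (by omega), hvC⟩
    have hw : wpt L ∈ SS L \ C := ⟨wpt_mem_SS, hwC⟩
    have hiso : ∀ u ∈ SS L \ C, ¬ (SimpleGraph.fromEdgeSet (TEdges L ∪ E')).Adj (qpt v) u := by
      intro u hu hadj
      rw [SimpleGraph.fromEdgeSet_adj] at hadj
      apply hu.2
      rcases hadj.1 with h | h
      · rcases TE_nbr_mid hL hL2 hv h2v hvmid h with rfl | rfl | rfl | rfl <;>
          simp [hC]
      · rcases E'_nbr hL hLe hES' (by omega) hlq hlw h with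
          ⟨a, b, hab, hbL, hB, ⟨rfl, rfl⟩ | ⟨rfl, rfl⟩⟩ | ⟨hB, rfl⟩
        · rcases (TPq_nbr_mid hL hL2 hv h2v hvmid (BPq_TPq hB)).1 rfl with rfl | rfl <;>
            simp [hC]
        · rcases (TPq_nbr_mid hL hL2 hv h2v hvmid (BPq_TPq hB)).2 rfl with rfl | rfl <;>
            simp [hC]
        · rcases hB with h' | h' <;> omega
    have hreach := (hconn C hCS hCn).preconnected ⟨qpt v, hp⟩ ⟨wpt L, hw⟩
    exact no_reach hp hw (fun h => wpt_ne_qpt hL h.symm) hiso hreach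
  · -- light vertex L
    subst hveq
    set C : Set Pt := {qpt (v-1), qpt (v-2), qpt 0, wpt v} with hC
    have hCS : C ⊆ SS v := by
      intro p hp
      simp only [hC, Set.mem_insert_iff, Set.mem_singleton_iff] at hp
      rcases hp with rfl | rfl | rfl | rfl
      · exact qpt_mem_SS (by omega)
      · exact qpt_mem_SS (by omega)
      · exact qpt_mem_SS (by omega)
      · exact wpt_mem_SS
    have hCn : C.ncard < 5 := by
      rw [hC]
      have := ncard_four_le (qpt (v-1)) (qpt (v-2)) (qpt 0) (wpt v)
      omega
    have hvC : qpt v ∉ C := by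
      simp only [hC, Set.mem_insert_iff, Set.mem_singleton_iff]
      push_neg
      exact ⟨qpt_ne (by omega), qpt_ne (by omega), qpt_ne (by omega),
        fun h => wpt_ne_qpt hL h.symm⟩
    have hw2C : qpt 2 ∉ C := by
      simp only [hC, Set.mem_insert_iff, Set.mem_singleton_iff]
      push_neg
      exact ⟨qpt_ne (by omega), qpt_ne (by omega), qpt_ne (by omega),
        fun h => wpt_ne_qpt hL h.symm⟩
    have hp : qpt v ∈ SS v \ C := ⟨qpt_mem_SS le_rfl, hvC⟩
    have hw : qpt 2 ∈ SS v \ C := ⟨qpt_mem_SS (by omega), hw2C⟩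
    have hiso : ∀ u ∈ SS v \ C, ¬ (SimpleGraph.fromEdgeSet (TEdges v ∪ E')).Adj (qpt v) u := by
      intro u hu hadj
      rw [SimpleGraph.fromEdgeSet_adj] at hadj
      apply hu.2
      rcases hadj.1 with h | h
      · rcases TE_nbr_top hL hL2 h with rfl | rfl | rfl | rfl <;> simp [hC]
      · rcases E'_nbr hL hLe hES' le_rfl hlq hlw h with
          ⟨a, b, hab, hbL, hB, ⟨rfl, rfl⟩ | ⟨rfl, rfl⟩⟩ | ⟨hB, rfl⟩
        · exact absurd rfl (TPq_nbr_top hL hL2 (BPq_TPq hB)).2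
        · rcases (TPq_nbr_top hL hL2 (BPq_TPq hB)).1 rfl with rfl | rfl | rfl <;> simp [hC]
        · simp [hC]
    have hreach := (hconn C hCS hCn).preconnected ⟨qpt v, hp⟩ ⟨qpt 2, hw⟩
    exact no_reach hp hw (qpt_ne (by omega)) hiso hreach

-- === connectivity of T ===

section Conn

variable {L : ℕ} {C : Set Pt}

/-- the induced graph on the survivors -/
noncomputable def IG (L : ℕ) (C : Set Pt) : SimpleGraph ↑(SS L \ C) :=
  (SimpleGraph.fromEdgeSet (TEdges L)).induce (SS L \ C)

lemma alive_mem {j : ℕ} (hj : j ≤ L) (h : qpt j ∉ C) : qpt j ∈ SS L \ C :=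
  ⟨qpt_mem_SS hj, h⟩

lemma adj_qq (hL : 14 ≤ L) {i j : ℕ} (hi : qpt i ∈ SS L \ C) (hj : qpt j ∈ SS L \ C)
    (hij : i < j) (hT : TPq L i j) : (IG L C).Adj ⟨qpt i, hi⟩ ⟨qpt j, hj⟩ := by
  show (SimpleGraph.fromEdgeSet (TEdges L)).Adj (qpt i) (qpt j)
  rw [SimpleGraph.fromEdgeSet_adj]
  exact ⟨mem_TE_qq hij hT, qpt_ne (by omega)⟩

lemma adj_qW (hL : 14 ≤ L) {x : ℕ} (hx : qpt x ∈ SS L \ C) (hw : wpt L ∈ SS L \ C)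
    (hxL : x ≤ L) (hT : TPw L x) : (IG L C).Adj ⟨qpt x, hx⟩ ⟨wpt L, hw⟩ := by
  show (SimpleGraph.fromEdgeSet (TEdges L)).Adj (qpt x) (wpt L)
  rw [SimpleGraph.fromEdgeSet_adj]
  exact ⟨mem_TE_qW hxL hT, fun h => wpt_ne_qpt hL h.symm⟩

/-- squared-path reachability -/
lemma reach_sq (hL : 14 ≤ L) (hLe : Even L) :
    ∀ n i j, i ≤ j → j ≤ L → j - i ≤ n →
    (hi : qpt i ∈ SS L \ C) → (hj : qpt j ∈ SS L \ C) →
    (∀ m, i ≤ m → m < j → ¬(qpt m ∈ C ∧ qpt (m+1) ∈ C)) →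
    (IG L C).Reachable ⟨qpt i, hi⟩ ⟨qpt j, hj⟩ := by
  have hL2 := Nat.even_iff.1 hLe
  intro n
  induction n with
  | zero =>
    intro i j h1 h2 h3 hi hj _
    have : i = j := by omega
    subst this
    exact SimpleGraph.Reachable.refl _
  | succ n ih =>
    intro i j h1 h2 h3 hi hj hgap
    rcases Nat.eq_or_lt_of_le h1 with rfl | hlt
    · exact SimpleGraph.Reachable.refl _
    · by_cases ha1 : qpt (i+1) ∈ C
      · -- skip to i+2
        have hne : i + 1 ≠ j := by
          intro h; rw [h] at ha1; exact hj.2 ha1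
        have hi2j : i + 2 ≤ j := by omega
        have ha2 : qpt (i+2) ∉ C := by
          intro h
          exact hgap (i+1) (by omega) (by omega) ⟨ha1, h⟩
        have hi2 : qpt (i+2) ∈ SS L \ C := alive_mem (by omega) ha2
        have hadj : (IG L C).Adj ⟨qpt i, hi⟩ ⟨qpt (i+2), hi2⟩ := by
          refine adj_qq hL hi hi2 (by omega) ?_
          rcases Nat.even_or_odd i with he | ho
          · exact Or.inr (Or.inl ⟨rfl, Nat.even_iff.1 he, by omega⟩)
          · have hio := Nat.odd_iff.1 ho
            refine Or.inr (Or.inr (Or.inr (Or.inl ⟨rfl, hio, by omega⟩)))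
        exact hadj.reachable.trans
          (ih (i+2) j hi2j h2 (by omega) hi2 hj (fun m hm1 hm2 => hgap m (by omega) hm2))
      · have hi1 : qpt (i+1) ∈ SS L \ C := alive_mem (by omega) ha1
        have hadj : (IG L C).Adj ⟨qpt i, hi⟩ ⟨qpt (i+1), hi1⟩ :=
          adj_qq hL hi hi1 (by omega) (Or.inl ⟨rfl, by omega⟩)
        exact hadj.reachable.trans
          (ih (i+1) j (by omega) h2 (by omega) hi1 hj (fun m hm1 hm2 => hgap m (by omega) hm2))

lemma four_le_ncard_of {A B D E : Pt} (h1 : A ≠ B) (h2 : A ≠ D) (h3 : A ≠ E)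
    (h4 : B ≠ D) (h5 : B ≠ E) (h6 : D ≠ E) (hsub : {A, B, D, E} ⊆ C)
    (hfin : C.Finite) : 4 ≤ C.ncard := by
  have hcard : ({A, B, D, E} : Set Pt).ncard = 4 := by
    rw [Set.ncard_insert_of_notMem (by simp [h1, h2, h3]),
      Set.ncard_insert_of_notMem (by simp [h4, h5]),
      Set.ncard_insert_of_notMem (by simp [h6]), Set.ncard_singleton]
  calc 4 = ({A, B, D, E} : Set Pt).ncard := hcard.symm
    _ ≤ C.ncard := Set.ncard_le_ncard hsub hfin

end Conn

section Conn2

variable {L : ℕ} {C : Set Pt}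

lemma alive4 (hC3 : C.ncard < 4) (hfin : C.Finite) {A B D E : Pt}
    (h1 : A ≠ B) (h2 : A ≠ D) (h3 : A ≠ E) (h4 : B ≠ D) (h5 : B ≠ E) (h6 : D ≠ E)
    (dA : A ∈ C) (dB : B ∈ C) (dD : D ∈ C) : E ∉ C := by
  intro dE
  have := four_le_ncard_of h1 h2 h3 h4 h5 h6
    (by
      simp only [Set.insert_subset_iff, Set.singleton_subset_iff]
      exact ⟨dA, dB, dD, dE⟩) hfin
  omega

/-- every alive odd vertex (and 0 and W) is adjacent to 1 -/
lemma odd_to_one (hL : 14 ≤ L) (hLe : Even L) (h1 : qpt 1 ∈ SS L \ C)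
    {t : ℕ} (ht : qpt t ∈ SS L \ C) (htL : t ≤ L) (hto : t % 2 = 1) :
    (IG L C).Reachable ⟨qpt t, ht⟩ ⟨qpt 1, h1⟩ := by
  have hL2 := Nat.even_iff.1 hLe
  rcases Nat.lt_or_ge t 3 with h | h
  · have : t = 1 := by omega
    subst this
    exact SimpleGraph.Reachable.refl _
  · rcases Nat.lt_or_ge t 5 with h' | h'
    · have : t = 3 := by omega
      subst this
      exact (adj_qq hL h1 ht (by omega)
        (Or.inr (Or.inr (Or.inr (Or.inl ⟨rfl, rfl, by omega⟩))))).reachable.symm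
    · exact (adj_qq hL h1 ht (by omega)
        (Or.inr (Or.inr (Or.inr (Or.inr ⟨rfl, hto, h', by omega⟩))))).reachable.symm

lemma caseA (hL : 14 ≤ L) (hLe : Even L) (hC3 : C.ncard < 4) (hfin : C.Finite)
    (h1 : qpt 1 ∈ SS L \ C) (w : ↑(SS L \ C)) :
    (IG L C).Reachable w ⟨qpt 1, h1⟩ := by
  have hL2 := Nat.even_iff.1 hLe
  obtain ⟨wv, hw⟩ := w
  rcases SS_cases hw.1 with ⟨j, hjL, rfl⟩ | rfl
  · -- q-point
    rcases Nat.even_or_odd j with hje | hjo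
    · -- even j
      have hje2 := Nat.even_iff.1 hje
      rcases Nat.eq_zero_or_pos j with rfl | hjpos
      · exact (adj_qq hL hw h1 (by omega) (Or.inl ⟨rfl, by omega⟩)).reachable
      have hj2 : 2 ≤ j := by omega
      by_cases da : qpt (j-1) ∈ C
      · by_cases hjtop : j = L
        · -- j = L, j-1 dead
          by_cases d0 : qpt 0 ∈ C
          · by_cases dW : wpt L ∈ C
            · -- j-1, 0, W dead: go j ~ j-2 ~ j-3 ~ 1
              have a2 : qpt (j-2) ∉ C :=
                alive4 hC3 hfin (qpt_ne (by omega)) (fun h => wpt_ne_qpt hL h.symm)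
                  (qpt_ne (by omega)) (fun h => wpt_ne_qpt hL h.symm)
                  (qpt_ne (by omega)) (wpt_ne_qpt hL) da d0 dW
              have a3 : qpt (j-3) ∉ C :=
                alive4 hC3 hfin (qpt_ne (by omega)) (fun h => wpt_ne_qpt hL h.symm)
                  (qpt_ne (by omega)) (fun h => wpt_ne_qpt hL h.symm)
                  (qpt_ne (by omega)) (wpt_ne_qpt hL) da d0 dW
              have m2 : qpt (j-2) ∈ SS L \ C := alive_mem (by omega) a2
              have m3 : qpt (j-3) ∈ SS L \ C := alive_mem (by omega) a3
              refine ((adj_qq hL m2 hw (by omega)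
                (Or.inr (Or.inl ⟨by omega, by omega, by omega⟩))).reachable.symm).trans ?_
              refine ((adj_qq hL m3 m2 (by omega) (Or.inl ⟨by omega, by omega⟩)).reachable.symm).trans ?_
              exact odd_to_one hL hLe h1 m3 (by omega) (by omega)
            · -- W alive : j ~ W ~ 1
              have mW : wpt L ∈ SS L \ C := ⟨wpt_mem_SS, dW⟩
              refine ((adj_qW hL hw mW hjL (Or.inr (Or.inl hjtop))).reachable).trans ?_
              exact ((adj_qW hL h1 mW (by omega) (Or.inr (Or.inr (Or.inl rfl)))).reachable).symm
          · -- 0 alive : j ~ 0 ~ 1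
            have m0 : qpt 0 ∈ SS L \ C := alive_mem (by omega) d0
            refine ((adj_qq hL m0 hw (by omega)
              (Or.inr (Or.inr (Or.inl ⟨rfl, hjtop⟩)))).reachable.symm).trans ?_
            exact (adj_qq hL m0 h1 (by omega) (Or.inl ⟨rfl, by omega⟩)).reachable
        · -- j ≤ L-2 even, j-1 dead
          have hjL2 : j + 2 ≤ L := by omega
          by_cases db : qpt (j+1) ∈ C
          · -- both j-1, j+1 dead
            by_cases hj20 : j - 2 = 0
            · -- j = 2 : 0 is the left route
              by_cases d0 : qpt 0 ∈ C
              · -- dead j-1=1?? impossible since 1 alive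
                exfalso
                have : j = 2 := by omega
                subst this
                exact h1.2 da
              · have m0 : qpt 0 ∈ SS L \ C := alive_mem (by omega) d0
                refine ((adj_qq hL m0 hw (by omega)
                  (Or.inr (Or.inl ⟨by omega, by omega, by omega⟩))).reachable.symm).trans ?_
                exact (adj_qq hL m0 h1 (by omega) (Or.inl ⟨rfl, by omega⟩)).reachable
            · -- j ≥ 4
              by_cases dc : qpt (j-2) ∈ C
              · -- three dead: j-1, j+1, j-2 : right route
                have a2 : qpt (j+2) ∉ C :=
                  alive4 hC3 hfin (qpt_ne (by omega)) (qpt_ne (by omega)) (qpt_ne (by omega))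
                    (qpt_ne (by omega)) (qpt_ne (by omega)) (qpt_ne (by omega)) da db dc
                have m2 : qpt (j+2) ∈ SS L \ C := alive_mem (by omega) a2
                by_cases hjtop2 : j + 2 = L
                · -- go j ~ L ~ W ~ 1
                  have aW : wpt L ∉ C :=
                    alive4 hC3 hfin (qpt_ne (by omega)) (qpt_ne (by omega))
                      (wpt_ne_qpt hL).symm (qpt_ne (by omega)) (wpt_ne_qpt hL).symm
                      (wpt_ne_qpt hL).symm da db dc
                  have mW : wpt L ∈ SS L \ C := ⟨wpt_mem_SS, aW⟩
                  refine ((adj_qq hL hw m2 (by omega)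
                    (Or.inr (Or.inl ⟨rfl, hje2, by omega⟩))).reachable).trans ?_
                  refine ((adj_qW hL m2 mW (by omega) (Or.inr (Or.inl hjtop2))).reachable).trans ?_
                  exact ((adj_qW hL h1 mW (by omega) (Or.inr (Or.inr (Or.inl rfl)))).reachable).symm
                · -- j+3 ≤ L-1 : j ~ j+2 ~ j+3 ~ 1
                  have a3 : qpt (j+3) ∉ C :=
                    alive4 hC3 hfin (qpt_ne (by omega)) (qpt_ne (by omega)) (qpt_ne (by omega))
                      (qpt_ne (by omega)) (qpt_ne (by omega)) (qpt_ne (by omega)) da db dc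
                  have m3 : qpt (j+3) ∈ SS L \ C := alive_mem (by omega) a3
                  refine ((adj_qq hL hw m2 (by omega)
                    (Or.inr (Or.inl ⟨rfl, hje2, by omega⟩))).reachable).trans ?_
                  refine ((adj_qq hL m2 m3 (by omega) (Or.inl ⟨rfl, by omega⟩)).reachable).trans ?_
                  exact odd_to_one hL hLe h1 m3 (by omega) (by omega)
              · -- j-2 alive (and ≥ 2)
                by_cases dd : qpt (j-3) ∈ C
                · -- three dead: j-1, j+1, j-3 : right route
                  have a2 : qpt (j+2) ∉ C :=
                    alive4 hC3 hfin (qpt_ne (by omega)) (qpt_ne (by omega)) (qpt_ne (by omega))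
                      (qpt_ne (by omega)) (qpt_ne (by omega)) (qpt_ne (by omega)) da db dd
                  have m2 : qpt (j+2) ∈ SS L \ C := alive_mem (by omega) a2
                  by_cases hjtop2 : j + 2 = L
                  · have aW : wpt L ∉ C :=
                      alive4 hC3 hfin (qpt_ne (by omega)) (qpt_ne (by omega))
                        (wpt_ne_qpt hL).symm (qpt_ne (by omega)) (wpt_ne_qpt hL).symm
                        (wpt_ne_qpt hL).symm da db dd
                    have mW : wpt L ∈ SS L \ C := ⟨wpt_mem_SS, aW⟩
                    refine ((adj_qq hL hw m2 (by omega)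
                      (Or.inr (Or.inl ⟨rfl, hje2, by omega⟩))).reachable).trans ?_
                    refine ((adj_qW hL m2 mW (by omega) (Or.inr (Or.inl hjtop2))).reachable).trans ?_
                    exact ((adj_qW hL h1 mW (by omega) (Or.inr (Or.inr (Or.inl rfl)))).reachable).symm
                  · have a3 : qpt (j+3) ∉ C :=
                      alive4 hC3 hfin (qpt_ne (by omega)) (qpt_ne (by omega)) (qpt_ne (by omega))
                        (qpt_ne (by omega)) (qpt_ne (by omega)) (qpt_ne (by omega)) da db dd
                    have m3 : qpt (j+3) ∈ SS L \ C := alive_mem (by omega) a3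
                    refine ((adj_qq hL hw m2 (by omega)
                      (Or.inr (Or.inl ⟨rfl, hje2, by omega⟩))).reachable).trans ?_
                    refine ((adj_qq hL m2 m3 (by omega) (Or.inl ⟨rfl, by omega⟩)).reachable).trans ?_
                    exact odd_to_one hL hLe h1 m3 (by omega) (by omega)
                · -- j ~ j-2 ~ j-3 ~ 1
                  have m2 : qpt (j-2) ∈ SS L \ C := alive_mem (by omega) dc
                  have m3 : qpt (j-3) ∈ SS L \ C := alive_mem (by omega) dd
                  refine ((adj_qq hL m2 hw (by omega)
                    (Or.inr (Or.inl ⟨by omega, by omega, by omega⟩))).reachable.symm).trans ?_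
                  refine ((adj_qq hL m3 m2 (by omega) (Or.inl ⟨by omega, by omega⟩)).reachable.symm).trans ?_
                  exact odd_to_one hL hLe h1 m3 (by omega) (by omega)
          · -- j+1 alive
            have m1 : qpt (j+1) ∈ SS L \ C := alive_mem (by omega) db
            refine ((adj_qq hL hw m1 (by omega) (Or.inl ⟨rfl, by omega⟩)).reachable).trans ?_
            exact odd_to_one hL hLe h1 m1 (by omega) (by omega)
      · -- j-1 alive
        have m1 : qpt (j-1) ∈ SS L \ C := alive_mem (by omega) da
        refine ((adj_qq hL m1 hw (by omega) (Or.inl ⟨by omega, by omega⟩)).reachable.symm).trans ?_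
        exact odd_to_one hL hLe h1 m1 (by omega) (by omega)
    · -- odd j : direct
      exact odd_to_one hL hLe h1 hw hjL (Nat.odd_iff.1 hjo)
  · -- W
    exact ((adj_qW hL h1 hw (by omega) (Or.inr (Or.inr (Or.inl rfl)))).reachable).symm

end Conn2

section Conn3

variable {L : ℕ} {C : Set Pt}

lemma caseB (hL : 14 ≤ L) (hLe : Even L) (hC3 : C.ncard < 4) (hfin : C.Finite)
    (d1 : qpt 1 ∈ C) :
    ∃ hub : ↑(SS L \ C), ∀ w, (IG L C).Reachable w hub := by
  have hL2 := Nat.even_iff.1 hLe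
  by_cases hpair : ∃ m, 2 ≤ m ∧ m + 1 ≤ L ∧ qpt m ∈ C ∧ qpt (m+1) ∈ C
  · -- B2 : an adjacent dead pair in [2, L]
    obtain ⟨m, hm2, hmL, dm, dm1⟩ := hpair
    have aliveOther : ∀ t, t ≠ 1 → t ≠ m → t ≠ m + 1 → qpt t ∉ C := by
      intro t h1 h2 h3
      exact alive4 hC3 hfin (qpt_ne (by omega)) (qpt_ne (by omega)) (qpt_ne (by omega))
        (qpt_ne (by omega)) (qpt_ne (by omega)) (qpt_ne (by omega)) d1 dm dm1
    have aliveW : wpt L ∉ C :=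
      alive4 hC3 hfin (qpt_ne (by omega)) (qpt_ne (by omega))
        (fun h => wpt_ne_qpt hL h.symm) (qpt_ne (by omega))
        (fun h => wpt_ne_qpt hL h.symm) (fun h => wpt_ne_qpt hL h.symm) d1 dm dm1
    have alive0 : qpt 0 ∉ C := aliveOther 0 (by omega) (by omega) (by omega)
    have m0 : qpt 0 ∈ SS L \ C := alive_mem (by omega) alive0
    refine ⟨⟨qpt 0, m0⟩, ?_⟩
    rintro ⟨wv, hwm⟩
    rcases SS_cases hwm.1 with ⟨j, hjL, rfl⟩ | rfl
    · have hj1 : j ≠ 1 := fun h => hwm.2 (h ▸ d1)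
      have hjm : j ≠ m := fun h => hwm.2 (h ▸ dm)
      have hjm1 : j ≠ m + 1 := fun h => hwm.2 (h ▸ dm1)
      rcases Nat.eq_zero_or_pos j with rfl | hjpos
      · exact SimpleGraph.Reachable.refl _
      have hj2 : 2 ≤ j := by omega
      rcases Nat.lt_or_ge j m with hjlt | hjge
      · -- j ∈ [2, m-1]
        have alive2 : qpt 2 ∉ C := aliveOther 2 (by omega) (by omega) (by omega)
        have m2 : qpt 2 ∈ SS L \ C := alive_mem (by omega) alive2
        have hr : (IG L C).Reachable ⟨qpt 2, m2⟩ ⟨qpt j, hwm⟩ := by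
          refine reach_sq hL hLe L 2 j hj2 hjL (by omega) m2 hwm ?_
          intro m' hm'1 hm'2 ⟨hd1, hd2⟩
          exact aliveOther m' (by omega) (by omega) (by omega) hd1
        refine hr.symm.trans ?_
        exact ((adj_qq hL m0 m2 (by omega) (Or.inr (Or.inl ⟨rfl, rfl, by omega⟩))).reachable).symm
      · -- j ∈ [m+2, L]
        have hjge2 : m + 2 ≤ j := by omega
        have aliveL : qpt L ∉ C := aliveOther L (by omega) (by omega) (by omega)
        have mL : qpt L ∈ SS L \ C := alive_mem le_rfl aliveL
        have hr : (IG L C).Reachable ⟨qpt j, hwm⟩ ⟨qpt L, mL⟩ := by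
          refine reach_sq hL hLe L j L hjL le_rfl (by omega) hwm mL ?_
          intro m' hm'1 hm'2 ⟨hd1, hd2⟩
          exact aliveOther m' (by omega) (by omega) (by omega) hd1
        refine hr.trans ?_
        exact ((adj_qq hL m0 mL (by omega) (Or.inr (Or.inr (Or.inl ⟨rfl, rfl⟩)))).reachable).symm
    · -- W ~ 0
      exact ((adj_qW hL m0 hwm (by omega) (Or.inl rfl)).reachable).symm
  · -- B1 : no adjacent dead pair in [2, L]
    push_neg at hpair
    obtain ⟨t₀, ht₀, at₀⟩ : ∃ t, (t = 2 ∨ t = 4 ∨ t = 6) ∧ qpt t ∉ C := by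
      by_cases d2 : qpt 2 ∈ C
      · by_cases d4 : qpt 4 ∈ C
        · refine ⟨6, by omega, ?_⟩
          exact alive4 hC3 hfin (qpt_ne (by omega)) (qpt_ne (by omega)) (qpt_ne (by omega))
            (qpt_ne (by omega)) (qpt_ne (by omega)) (qpt_ne (by omega)) d1 d2 d4
        · exact ⟨4, by omega, d4⟩
      · exact ⟨2, by omega, d2⟩
    have ht₀L : t₀ ≤ L := by omega
    have ht₀2 : 2 ≤ t₀ := by omega
    have mt : qpt t₀ ∈ SS L \ C := alive_mem ht₀L at₀
    have sqr : ∀ i j, 2 ≤ i → i ≤ j → j ≤ L →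
        (hi : qpt i ∈ SS L \ C) → (hj : qpt j ∈ SS L \ C) →
        (IG L C).Reachable ⟨qpt i, hi⟩ ⟨qpt j, hj⟩ := by
      intro i j h2i hij hjL hi hj
      refine reach_sq hL hLe L i j hij hjL (by omega) hi hj ?_
      intro m' hm'1 hm'2 ⟨hd1, hd2⟩
      exact hpair m' (by omega) (by omega) hd1 hd2
    refine ⟨⟨qpt t₀, mt⟩, ?_⟩
    rintro ⟨wv, hwm⟩
    rcases SS_cases hwm.1 with ⟨j, hjL, rfl⟩ | rfl
    · have hj1 : j ≠ 1 := fun h => hwm.2 (h ▸ d1)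
      rcases Nat.eq_zero_or_pos j with rfl | hjpos
      · -- j = 0
        by_cases d2' : qpt 2 ∈ C
        · have ht₀ne : t₀ ≠ 2 := fun h => at₀ (h ▸ d2')
          by_cases dL : qpt L ∈ C
          · -- dead 1, 2, L : route 0 ~ W ~ L-1 ~> t₀
            have aW : wpt L ∉ C :=
              alive4 hC3 hfin (qpt_ne (by omega)) (qpt_ne (by omega))
                (fun h => wpt_ne_qpt hL h.symm) (qpt_ne (by omega))
                (fun h => wpt_ne_qpt hL h.symm) (fun h => wpt_ne_qpt hL h.symm) d1 d2' dL
            have aL1 : qpt (L-1) ∉ C :=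
              alive4 hC3 hfin (qpt_ne (by omega)) (qpt_ne (by omega)) (qpt_ne (by omega))
                (qpt_ne (by omega)) (qpt_ne (by omega)) (qpt_ne (by omega)) d1 d2' dL
            have mW : wpt L ∈ SS L \ C := ⟨wpt_mem_SS, aW⟩
            have mL1 : qpt (L-1) ∈ SS L \ C := alive_mem (by omega) aL1
            refine ((adj_qW hL hwm mW (by omega) (Or.inl rfl)).reachable).trans ?_
            refine (((adj_qW hL mL1 mW (by omega) (Or.inr (Or.inr (Or.inr (by omega))))).reachable).symm).trans ?_
            exact (sqr t₀ (L-1) ht₀2 (by omega) (by omega) mt mL1).symm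
          · -- L alive : 0 ~ L ~> t₀
            have mL : qpt L ∈ SS L \ C := alive_mem le_rfl dL
            refine ((adj_qq hL hwm mL (by omega)
              (Or.inr (Or.inr (Or.inl ⟨rfl, rfl⟩)))).reachable).trans ?_
            exact (sqr t₀ L ht₀2 (by omega) le_rfl mt mL).symm
        · -- 2 alive : 0 ~ 2 ~> t₀
          have m2 : qpt 2 ∈ SS L \ C := alive_mem (by omega) d2'
          refine ((adj_qq hL hwm m2 (by omega)
            (Or.inr (Or.inl ⟨rfl, rfl, by omega⟩))).reachable).trans ?_
          exact (sqr 2 t₀ (by omega) (by omega) ht₀L m2 mt)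
      · -- j ≥ 2
        have hj2 : 2 ≤ j := by omega
        rcases le_or_gt j t₀ with h | h
        · exact sqr j t₀ hj2 h ht₀L hwm mt
        · exact (sqr t₀ j ht₀2 (by omega) hjL mt hwm).symm
    · -- W
      by_cases dL : qpt L ∈ C
      · -- L dead ⇒ L-1 alive (no adjacent dead pair)
        have aL1 : qpt (L-1) ∉ C := by
          intro h
          exact hpair (L-1) (by omega) (by omega) h (by rw [show L - 1 + 1 = L by omega]; exact dL)
        have mL1 : qpt (L-1) ∈ SS L \ C := alive_mem (by omega) aL1
        refine (((adj_qW hL mL1 hwm (by omega) (Or.inr (Or.inr (Or.inr (by omega))))).reachable).symm).trans ?_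
        exact (sqr t₀ (L-1) ht₀2 (by omega) (by omega) mt mL1).symm
      · have mL : qpt L ∈ SS L \ C := alive_mem le_rfl dL
        refine (((adj_qW hL mL hwm le_rfl (Or.inr (Or.inl rfl))).reachable).symm).trans ?_
        exact (sqr t₀ L ht₀2 (by omega) le_rfl mt mL).symm

end Conn3

lemma T_4conn {L : ℕ} (hL : 14 ≤ L) (hLe : Even L) :
    KConnected 4 (SS L) (TEdges L) := by
  constructor
  · rw [SS_ncard hL]; omega
  · intro C hCS hCn
    have hfin : C.Finite := (SS_finite L).subset hCS
    rw [SimpleGraph.connected_iff_exists_forall_reachable]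
    by_cases d1 : qpt 1 ∈ C
    · obtain ⟨hub, hhub⟩ := caseB hL hLe hCn hfin d1
      exact ⟨hub, fun w => (hhub w).symm⟩
    · have h1 : qpt 1 ∈ SS L \ C := alive_mem (by omega) d1
      exact ⟨⟨qpt 1, h1⟩, fun w => (caseA hL hLe hCn hfin h1 w).symm⟩

theorem statement6 (N : ℕ) :
    ∃ (S : Set Pt) (E : Set (Sym2 Pt)), S.Finite ∧ N ≤ S.ncard ∧ InGenPos S ∧
      IsTriangulation S E ∧ KConnected 4 S E ∧
      ∀ E' : Set (Sym2 Pt), IsTriangulation S E' → ¬ KConnected 5 S (E ∪ E') := by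
  have hL : 14 ≤ 2*N+14 := by omega
  have hLe : Even (2*N+14) := ⟨N+7, by omega⟩
  refine ⟨SS (2*N+14), TEdges (2*N+14), SS_finite _, ?_, SS_genpos hL hLe,
    TE_triangulation hL hLe, T_4conn hL hLe, ?_⟩
  · rw [SS_ncard hL]; omega
  · intro E' hT'
    exact not_5conn hL hLe hT'
end

section
/- Let (S,E) be a fan on a set S of n ≥ 3 points in convex position. Then for every set E' of unordered pairs of distinct points of S, if (S, E ∪ E') is a biplane graph, then (S, E ∪ E') is not 4-connected. -/
noncomputable section
open Set

/-- Orientation determinant of three points. -/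
def Odet (p q r : Pt) : ℝ := (q.1-p.1)*(r.2-p.2) - (q.2-p.2)*(r.1-p.1)

lemma Odet_swap (p q r : Pt) : Odet p q r = - Odet p r q := by unfold Odet; ring

lemma Odet_cyc (p q r : Pt) : Odet p q r = Odet q r p := by unfold Odet; ring

lemma Odet_affine (p q a b : Pt) (l : ℝ) :
    Odet p q ((1-l) • a + l • b) = (1-l) * Odet p q a + l * Odet p q b := by
  unfold Odet
  simp [Prod.smul_fst, Prod.smul_snd, Prod.fst_add, Prod.snd_add, smul_eq_mul]
  ring

lemma Odet_self_comb (p q : Pt) (l : ℝ) : Odet p q ((1-l) • p + l • q) = 0 := by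
  rw [Odet_affine]; unfold Odet; ring

/-- If the third point is an affine combination `a + μ (b - a)` then ... helper -/
lemma comb_eq (a b : Pt) (l : ℝ) : (1-l) • a + l • b = a + l • (b - a) := by
  simp [smul_sub, sub_smul]; abel

lemma mem_openSegment_of (a b : Pt) (l : ℝ) (h0 : 0 < l) (h1 : l < 1) :
    (1-l) • a + l • b ∈ openSegment ℝ a b := by
  rw [openSegment_eq_image]
  exact ⟨l, ⟨h0, h1⟩, rfl⟩

/-- det = 0 with nonzero first vector gives proportionality -/
lemma collinear_ratio (a b : Pt) (h : Odet 0 a b = 0) (ha : a ≠ 0) :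
    ∃ r : ℝ, b = r • a := by
  have h' : a.1 * b.2 - a.2 * b.1 = 0 := by
    unfold Odet at h; simpa using h
  have hcomp : ∀ r : ℝ, b.1 = r * a.1 → b.2 = r * a.2 → b = r • a := by
    intro r h1 h2
    refine Prod.ext_iff.mpr ⟨?_, ?_⟩ <;> simp [Prod.smul_fst, Prod.smul_snd, smul_eq_mul, h1, h2]
  rcases eq_or_ne a.1 0 with h1 | h1
  · have h2 : a.2 ≠ 0 := by
      intro h2; exact ha (Prod.ext_iff.mpr ⟨h1, h2⟩)
    have hb1 : b.1 = 0 := by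
      rw [h1] at h'
      have : a.2 * b.1 = 0 := by linarith
      exact (mul_eq_zero.mp this).resolve_left h2
    refine ⟨b.2 / a.2, hcomp _ ?_ ?_⟩
    · rw [hb1, h1, mul_zero]
    · field_simp
  · refine ⟨b.1 / a.1, hcomp _ ?_ ?_⟩
    · field_simp
    · field_simp
      nlinarith [h']

lemma Odet_translate (p q r : Pt) : Odet p q r = Odet 0 (q - p) (r - p) := by
  unfold Odet; simp

/-- Main segment-crossing criterion. -/
lemma cross_of_orient (a b c d : Pt)
    (h1 : Odet a b c * Odet a b d < 0) (h2 : Odet c d a * Odet c d b < 0) :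
    (openSegment ℝ a b ∩ openSegment ℝ c d).Nonempty := by
  have hab : a ≠ b := by
    rintro rfl
    have : Odet c d a * Odet c d a < 0 := h2
    nlinarith [this]
  set A := Odet a b c with hA
  set B := Odet a b d with hB
  have hAB : A - B ≠ 0 := by
    rcases mul_neg_iff.mp h1 with ⟨hA', hB'⟩ | ⟨hA', hB'⟩ <;> intro h <;> nlinarith
  set l := A / (A - B) with hl
  have hl0 : 0 < l := by
    rcases mul_neg_iff.mp h1 with ⟨hA', hB'⟩ | ⟨hA', hB'⟩
    · exact div_pos hA' (by linarith)
    · exact div_pos_of_neg_of_neg hA' (by linarith)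
  have hl1 : l < 1 := by
    rcases mul_neg_iff.mp h1 with ⟨hA', hB'⟩ | ⟨hA', hB'⟩
    · rw [div_lt_one (by linarith)]; linarith
    · rw [div_lt_one_iff]
      exact Or.inr (Or.inr ⟨by linarith, by linarith⟩)
  set x := (1-l) • c + l • d with hx
  have hxcd : x ∈ openSegment ℝ c d := mem_openSegment_of c d l hl0 hl1
  have hOabx : Odet a b x = 0 := by
    rw [hx, Odet_affine]
    have hl' : l * (Odet a b c - Odet a b d) = Odet a b c := by
      rw [hl]; exact div_mul_cancel₀ _ hAB
    show (1-l) * Odet a b c + l * Odet a b d = 0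
    linear_combination -hl'
  -- x is on line ab
  have hcol : Odet 0 (b - a) (x - a) = 0 := by rw [← Odet_translate a]; exact hOabx
  obtain ⟨mu, hmu⟩ := collinear_ratio (b-a) (x-a) hcol (sub_ne_zero.mpr (Ne.symm hab))
  have hxrep : x = (1-mu) • a + mu • b := by
    rw [comb_eq]; rw [← hmu]; abel
  have hOcdx : Odet c d x = 0 := by rw [hx]; exact Odet_self_comb c d l
  have hmueq : (1-mu) * Odet c d a + mu * Odet c d b = 0 := by
    rw [← Odet_affine, ← hxrep]; exact hOcdx
  have hmu0 : 0 < mu := by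
    rcases mul_neg_iff.mp h2 with ⟨hP, hQ⟩ | ⟨hP, hQ⟩ <;> nlinarith
  have hmu1 : mu < 1 := by
    rcases mul_neg_iff.mp h2 with ⟨hP, hQ⟩ | ⟨hP, hQ⟩ <;> nlinarith
  exact ⟨x, by rw [hxrep]; exact mem_openSegment_of a b mu hmu0 hmu1, hxcd⟩

end

lemma openSeg_sub_hull {a b q : Pt} (T : Set Pt) (ha : a ∈ T) (hb : b ∈ T)
    (hq : q ∈ openSegment ℝ a b) : q ∈ convexHull ℝ T :=
  segment_subset_convexHull ha hb (openSegment_subset_segment ℝ a b hq)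

lemma exists_zero_comb (P Q : ℝ) (hP : P < 0) (hQ : 0 < Q) :
    ∃ l : ℝ, 0 < l ∧ l < 1 ∧ (1-l)*P + l*Q = 0 := by
  refine ⟨P/(P-Q), div_pos_of_neg_of_neg hP (by linarith), ?_, ?_⟩
  · rw [div_lt_one_iff]
    exact Or.inr (Or.inr ⟨by linarith, by linarith⟩)
  · have h : P - Q ≠ 0 := by linarith
    field_simp [h]
    ring

set_option maxHeartbeats 1000000 in
lemma fan_enum (S : Set Pt) (hfin : S.Finite) (hconv : InConvexPos S) (v₀ : Pt)
    (hv₀ : v₀ ∈ S) (hex : ∃ p ∈ S, p ≠ v₀) :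
    ∃ (m : ℕ) (v : ℕ → Pt),
      m + 1 = S.ncard ∧
      (∀ i, i < m → v i ∈ S ∧ v i ≠ v₀) ∧
      (∀ p ∈ S, p ≠ v₀ → ∃ i, i < m ∧ v i = p) ∧
      (∀ i j, i < m → j < m → v i = v j → i = j) ∧
      (∀ i j, i < j → j < m → 0 < Odet v₀ (v i) (v j)) ∧
      (∀ i j k, i < j → j < k → k < m → 0 < Odet (v i) (v j) (v k)) := by
  classical
  -- separating functional
  have hsub : (S \ {v₀}).Finite := hfin.subset Set.diff_subset
  have hcl : IsClosed (convexHull ℝ (S \ {v₀})) := (hsub.isCompact_convexHull (𝕜 := ℝ)).isClosed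
  obtain ⟨f, u0, hfu0, hu0⟩ :=
    geometric_hahn_banach_point_closed (convex_convexHull ℝ _) hcl (hconv v₀ hv₀)
  have hfS : ∀ p ∈ S, p ≠ v₀ → f v₀ < f p := by
    intro p hp hpne
    have : p ∈ convexHull ℝ (S \ {v₀}) := subset_convexHull ℝ _ ⟨hp, hpne⟩
    exact lt_trans hfu0 (hu0 p this)
  set α : ℝ := f (1,0) with hα
  set β : ℝ := f (0,1) with hβ
  have hf : ∀ y : Pt, f y = α * y.1 + β * y.2 := by
    intro y
    have hy : y = y.1 • ((1:ℝ),(0:ℝ)) + y.2 • ((0:ℝ),(1:ℝ)) := by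
      refine Prod.ext_iff.mpr ⟨?_, ?_⟩ <;> simp
    conv_lhs => rw [hy]
    rw [map_add, map_smul, map_smul]
    simp [smul_eq_mul, ← hα, ← hβ]
    ring
  set φ : Pt → ℝ := fun p => α*(p.1-v₀.1) + β*(p.2-v₀.2) with hφ
  set ψ : Pt → ℝ := fun p => -β*(p.1-v₀.1) + α*(p.2-v₀.2) with hψ
  have hφf : ∀ p : Pt, φ p = f p - f v₀ := by
    intro p; rw [hφ]; simp only []
    rw [hf p, hf v₀]; ring
  have hφpos : ∀ p ∈ S, p ≠ v₀ → 0 < φ p := by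
    intro p hp hne; rw [hφf]; have := hfS p hp hne; linarith
  set K : ℝ := α^2 + β^2 with hK
  have hKpos : 0 < K := by
    obtain ⟨p, hp, hpne⟩ := hex
    have h1 : 0 < φ p := hφpos p hp hpne
    rcases eq_or_ne α 0 with hA | hA
    · rcases eq_or_ne β 0 with hB | hB
      · exfalso; rw [hφ] at h1; simp only [] at h1; rw [hA, hB] at h1; simp at h1
      · rw [hK, hA]; positivity
    · rw [hK]; positivity
  have hdet : ∀ p q : Pt, K * Odet v₀ p q = φ p * ψ q - ψ p * φ q := by
    intro p q; rw [hK, hφ, hψ]; simp only []; unfold Odet; ring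
  set τ : Pt → ℝ := fun p => ψ p / φ p with hτ
  have hOiff : ∀ p ∈ S, p ≠ v₀ → ∀ q ∈ S, q ≠ v₀ → (τ p < τ q ↔ 0 < Odet v₀ p q) := by
    intro p hp hpn q hq hqn
    have h1 := hφpos p hp hpn
    have h2 := hφpos q hq hqn
    rw [hτ]; simp only []
    rw [div_lt_div_iff₀ h1 h2]
    constructor
    · intro h
      have : 0 < K * Odet v₀ p q := by rw [hdet]; nlinarith
      nlinarith
    · intro h
      have : 0 < K * Odet v₀ p q := by positivity
      rw [hdet] at this; nlinarith
  -- injectivity of τ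
  have hninj : ∀ p ∈ S, p ≠ v₀ → ∀ q ∈ S, q ≠ v₀ → τ p = τ q → p = q := by
    intro p hp hpn q hq hqn heq
    by_contra hne
    have h1 := hφpos p hp hpn
    have h2 := hφpos q hq hqn
    have hO : Odet v₀ p q = 0 := by
      have e1 : ψ p * φ q = ψ q * φ p := by
        have := heq; rw [hτ] at this; simp only [] at this
        field_simp at this; linarith
      have : K * Odet v₀ p q = 0 := by rw [hdet]; linarith
      have hK' := hKpos; nlinarith [this]
    have hO0 : Odet 0 (p - v₀) (q - v₀) = 0 := by rw [← Odet_translate]; exact hO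
    have hpu : p - v₀ ≠ 0 := sub_ne_zero.mpr hpn
    obtain ⟨r, hr⟩ := collinear_ratio _ _ hO0 hpu
    have hφlin : φ q = r * φ p := by
      have h1' : q.1 - v₀.1 = r * (p.1 - v₀.1) := by
        have := congrArg Prod.fst hr; simpa [smul_eq_mul] using this
      have h2' : q.2 - v₀.2 = r * (p.2 - v₀.2) := by
        have := congrArg Prod.snd hr; simpa [smul_eq_mul] using this
      rw [hφ]; simp only []; rw [h1', h2']; ring
    have hrpos : 0 < r := by nlinarith
    have hrne1 : r ≠ 1 := by
      intro h; rw [h, one_smul] at hr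
      exact hne (sub_left_inj.mp hr).symm
    rcases lt_or_gt_of_ne hrne1 with hrlt | hrgt
    · -- q on open segment v₀ p
      have hqseg : q ∈ openSegment ℝ v₀ p := by
        have : (1-r) • v₀ + r • p = q := by
          rw [comb_eq]; rw [← hr]; abel
        rw [← this]; exact mem_openSegment_of _ _ r hrpos hrlt
      exact hconv q hq (openSeg_sub_hull (S \ {q}) ⟨hv₀, Ne.symm hqn⟩ ⟨hp, hne⟩ hqseg)
    · -- p on open segment v₀ q
      have hpseg : p ∈ openSegment ℝ v₀ q := by
        have hinv : p - v₀ = (1/r) • (q - v₀) := by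
          rw [hr, smul_smul]
          rw [one_div_mul_cancel (by linarith), one_smul]
        have : (1-(1/r)) • v₀ + (1/r) • q = p := by
          rw [comb_eq]; rw [← hinv]; abel
        rw [← this]
        exact mem_openSegment_of _ _ _ (by positivity) (by rw [div_lt_one (by linarith)]; linarith)
      exact hconv p hp (openSeg_sub_hull (S \ {p}) ⟨hv₀, Ne.symm hpn⟩ ⟨hq, Ne.symm hne⟩ hpseg)
  -- enumeration
  set D : Finset Pt := hfin.toFinset.erase v₀ with hD
  have hDmem : ∀ p, p ∈ D ↔ p ∈ S ∧ p ≠ v₀ := by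
    intro p; rw [hD, Finset.mem_erase, Set.Finite.mem_toFinset]; tauto
  set m : ℕ := D.card with hm
  have hmcard : m + 1 = S.ncard := by
    rw [hm, hD, Finset.card_erase_of_mem (Set.Finite.mem_toFinset hfin |>.mpr hv₀)]
    rw [Set.ncard_eq_toFinset_card S hfin]
    have : 0 < hfin.toFinset.card :=
      Finset.card_pos.mpr ⟨v₀, (Set.Finite.mem_toFinset hfin).mpr hv₀⟩
    omega
  have hinjD : Set.InjOn τ ↑D := by
    intro p hp q hq h
    rw [Finset.mem_coe, hDmem] at hp hq
    exact hninj p hp.1 hp.2 q hq.1 hq.2 h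
  set T : Finset ℝ := D.image τ with hT
  have hTcard : T.card = m := by rw [hT, Finset.card_image_of_injOn hinjD]
  set iso := T.orderEmbOfFin hTcard with hiso
  have hvex : ∀ i : Fin m, ∃ p ∈ D, τ p = iso i := by
    intro i
    have h1 : iso i ∈ T := Finset.orderEmbOfFin_mem T hTcard i
    rw [hT] at h1
    exact Finset.mem_image.mp h1
  set v : ℕ → Pt := fun i => if h : i < m then (hvex ⟨i, h⟩).choose else v₀ with hv
  have hvspec : ∀ i (h : i < m), v i ∈ D ∧ τ (v i) = iso ⟨i, h⟩ := by
    intro i h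
    rw [hv]; simp only [dif_pos h]
    exact ⟨(hvex ⟨i, h⟩).choose_spec.1, (hvex ⟨i, h⟩).choose_spec.2⟩
  have hvS : ∀ i, i < m → v i ∈ S ∧ v i ≠ v₀ := by
    intro i h; exact (hDmem _).mp (hvspec i h).1
  have hvmono : ∀ i j, i < j → j < m → τ (v i) < τ (v j) := by
    intro i j hij hj
    have hi : i < m := lt_trans hij hj
    rw [(hvspec i hi).2, (hvspec j hj).2]
    have : (⟨i, hi⟩ : Fin m) < ⟨j, hj⟩ := Fin.mk_lt_mk.mpr hij
    exact iso.strictMono this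
  have hP1 : ∀ i j, i < j → j < m → 0 < Odet v₀ (v i) (v j) := by
    intro i j hij hj
    have hi : i < m := lt_trans hij hj
    have h1 := hvS i hi; have h2 := hvS j hj
    exact (hOiff _ h1.1 h1.2 _ h2.1 h2.2).mp (hvmono i j hij hj)
  have hvinj : ∀ i j, i < m → j < m → v i = v j → i = j := by
    intro i j hi hj heq
    by_contra hne
    rcases Nat.lt_or_ge i j with h | h
    · exact absurd (congrArg τ heq) (ne_of_lt (hvmono i j h hj))
    · have : j < i := by omega
      exact absurd (congrArg τ heq.symm) (ne_of_lt (hvmono j i this hi))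
  have hvsurj : ∀ p ∈ S, p ≠ v₀ → ∃ i, i < m ∧ v i = p := by
    intro p hp hpn
    have hpD : p ∈ D := (hDmem p).mpr ⟨hp, hpn⟩
    have hpT : τ p ∈ T := by rw [hT]; exact Finset.mem_image_of_mem τ hpD
    have hrange : τ p ∈ Set.range iso := by
      rw [hiso, Finset.range_orderEmbOfFin]; exact hpT
    obtain ⟨i, hi⟩ := hrange
    refine ⟨i.val, i.isLt, ?_⟩
    have heq : τ (v i.val) = τ p := by
      rw [(hvspec i.val i.isLt).2, ← hi]
    exact hninj _ (hvS i.val i.isLt).1 (hvS i.val i.isLt).2 p hp hpn heq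
  -- P2
  have hP2 : ∀ i j k, i < j → j < k → k < m → 0 < Odet (v i) (v j) (v k) := by
    intro i j k hij hjk hk
    have hi : i < m := by omega
    have hj : j < m := by omega
    have hiS := hvS i hi; have hjS := hvS j hj; have hkS := hvS k hk
    have hA : Odet v₀ (v j) (v i) < 0 := by
      have := hP1 i j hij hj; rw [Odet_swap] at this; linarith
    have hB : 0 < Odet v₀ (v j) (v k) := hP1 j k hjk hk
    obtain ⟨l, hl0, hl1, hlz⟩ := exists_zero_comb _ _ hA hB
    set x : Pt := (1-l) • (v i) + l • (v k) with hx
    have hOx : Odet v₀ (v j) x = 0 := by rw [hx, Odet_affine]; linarith [hlz]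
    have hxseg : x ∈ openSegment ℝ (v i) (v k) := mem_openSegment_of _ _ l hl0 hl1
    have hO0 : Odet 0 (v j - v₀) (x - v₀) = 0 := by rw [← Odet_translate]; exact hOx
    obtain ⟨mu, hmu⟩ := collinear_ratio _ _ hO0 (sub_ne_zero.mpr hjS.2)
    have hφx : φ x = (1-l) * φ (v i) + l * φ (v k) := by
      rw [hφ, hx]; simp only []
      simp [Prod.smul_fst, Prod.smul_snd, Prod.fst_add, Prod.snd_add, smul_eq_mul]
      ring
    have hφxpos : 0 < φ x := by
      have h1 := hφpos _ hiS.1 hiS.2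
      have h2 := hφpos _ hkS.1 hkS.2
      rw [hφx]; nlinarith
    have hφmu : φ x = mu * φ (v j) := by
      have h1' : x.1 - v₀.1 = mu * ((v j).1 - v₀.1) := by
        have := congrArg Prod.fst hmu; simpa [smul_eq_mul] using this
      have h2' : x.2 - v₀.2 = mu * ((v j).2 - v₀.2) := by
        have := congrArg Prod.snd hmu; simpa [smul_eq_mul] using this
      rw [hφ]; simp only []; rw [h1', h2']; ring
    have hφj := hφpos _ hjS.1 hjS.2
    have hmupos : 0 < mu := by nlinarith
    -- rule out mu = 1 and mu > 1
    have hvine : v i ≠ v j := fun h => absurd (hvinj i j hi hj h) (by omega)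
    have hvkne : v k ≠ v j := fun h => absurd (hvinj k j hk hj h) (by omega)
    have hmult1 : mu < 1 := by
      rcases lt_trichotomy mu 1 with h | h | h
      · exact h
      · exfalso
        have hxj : x = v j := by
          rw [h, one_smul] at hmu
          exact sub_left_inj.mp hmu
        rw [hxj] at hxseg
        exact hconv (v j) hjS.1
          (openSeg_sub_hull (S \ {v j}) ⟨hiS.1, hvine⟩ ⟨hkS.1, hvkne⟩ hxseg)
      · exfalso
        -- v j ∈ openSegment v₀ x
        have hinv : v j - v₀ = (1/mu) • (x - v₀) := by
          rw [hmu, smul_smul, one_div_mul_cancel (by linarith), one_smul]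
        have hjseg : v j ∈ openSegment ℝ v₀ x := by
          have : (1-(1/mu)) • v₀ + (1/mu) • x = v j := by
            rw [comb_eq, ← hinv]; abel
          rw [← this]
          exact mem_openSegment_of _ _ _ (by positivity)
            (by rw [div_lt_one (by linarith)]; linarith)
        have hxhull : x ∈ convexHull ℝ ({v₀, v i, v k} : Set Pt) :=
          openSeg_sub_hull ({v₀, v i, v k} : Set Pt) (by simp) (by simp) hxseg
        have hv₀hull : v₀ ∈ convexHull ℝ ({v₀, v i, v k} : Set Pt) :=
          subset_convexHull ℝ _ (by simp)
        have hjhull : v j ∈ convexHull ℝ ({v₀, v i, v k} : Set Pt) :=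
          (convex_convexHull ℝ _).openSegment_subset hv₀hull hxhull hjseg
        have hsub3 : ({v₀, v i, v k} : Set Pt) ⊆ S \ {v j} := by
          intro z hz
          rcases hz with h | h | h
          · exact ⟨h ▸ hv₀, h ▸ (Ne.symm hjS.2)⟩
          · exact ⟨h ▸ hiS.1, h ▸ hvine⟩
          · exact ⟨h ▸ hkS.1, h ▸ hvkne⟩
        exact hconv (v j) hjS.1 (convexHull_mono hsub3 hjhull)
    -- now 0 < mu < 1 : conclude orientation
    have hmune : mu ≠ 0 := by linarith
    have hinv : v j - v₀ = (1/mu) • (x - v₀) := by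
      rw [hmu, smul_smul, one_div_mul_cancel hmune, one_smul]
    set ρ : ℝ := 1/mu with hρ
    have hρgt : 1 < ρ := by rw [hρ]; rw [lt_div_iff₀ hmupos]; linarith
    have hjcomb : v j = (1-ρ) • v₀ + ρ • x := by
      rw [comb_eq, ← hinv]; abel
    have hOx0 : Odet (v i) (v k) x = 0 := by rw [hx]; exact Odet_self_comb _ _ _
    have hOv₀ : Odet (v i) (v k) v₀ = Odet v₀ (v i) (v k) := by
      unfold Odet; ring
    have hOkj : Odet (v i) (v k) (v j) = (1-ρ) * Odet (v i) (v k) v₀ + ρ * Odet (v i) (v k) x := by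
      rw [hjcomb, Odet_affine]
    have hneg : Odet (v i) (v k) (v j) < 0 := by
      rw [hOkj, hOx0, hOv₀]
      have := hP1 i k (by omega) hk
      nlinarith
    rw [Odet_swap] at hneg
    linarith
  exact ⟨m, v, hmcard, hvS, hvsurj, hvinj, hP1, hP2⟩

lemma cross_star_gen (u p q r : Pt) (hpq : 0 < Odet u p q) (hqr : 0 < Odet u q r)
    (hpr : 0 < Odet u p r) (hpqr : 0 < Odet p q r) : Cross s(p, r) s(u, q) := by
  have h1 : Odet p r u * Odet p r q < 0 := by
    have e1 : Odet p r u = Odet u p r := by unfold Odet; ring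
    have e2 : Odet p r q = - Odet p q r := by unfold Odet; ring
    rw [e1, e2]; nlinarith
  have h2 : Odet u q p * Odet u q r < 0 := by
    have e1 : Odet u q p = - Odet u p q := by unfold Odet; ring
    rw [e1]; nlinarith
  exact cross_of_orient p r u q h1 h2

lemma cross_chord_gen (a b c d : Pt) (h1 : 0 < Odet a b c) (h2 : 0 < Odet a b d)
    (h3 : 0 < Odet a c d) (h4 : 0 < Odet b c d) : Cross s(a, c) s(b, d) := by
  have e1 : Odet a c b * Odet a c d < 0 := by
    have q1 : Odet a c b = - Odet a b c := by unfold Odet; ring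
    rw [q1]; nlinarith
  have e2 : Odet b d a * Odet b d c < 0 := by
    have q1 : Odet b d a = Odet a b d := by unfold Odet; ring
    have q2 : Odet b d c = - Odet b c d := by unfold Odet; ring
    rw [q1, q2]; nlinarith
  exact cross_of_orient a c b d e1 e2

lemma not_connected_of_sep (A : Set (Sym2 Pt)) (T L : Set Pt) (x y : Pt)
    (hx : x ∈ T) (hy : y ∈ T) (hxL : x ∈ L) (hyL : y ∉ L)
    (hno : ∀ a b : Pt, a ∈ T → a ∈ L → b ∈ T → b ∉ L → s(a, b) ∉ A) :
    ¬ ((SimpleGraph.fromEdgeSet A).induce T).Connected := by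
  intro hconn
  obtain ⟨w⟩ := hconn.preconnected ⟨x, hx⟩ ⟨y, hy⟩
  have key : ∀ (a b : ↥T), ((SimpleGraph.fromEdgeSet A).induce T).Walk a b →
      (a : Pt) ∈ L → (b : Pt) ∉ L → False := by
    intro a b w
    induction w with
    | nil => intro h1 h2; exact h2 h1
    | @cons u v' c hadj p ih =>
      intro h1 h2
      by_cases hv : (v' : Pt) ∈ L
      · exact ih hv h2
      · have hadj' : (SimpleGraph.fromEdgeSet A).Adj u v' := by simpa using hadj
        have hmem : s((u : Pt), (v' : Pt)) ∈ A := by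
          rw [SimpleGraph.fromEdgeSet_adj] at hadj'
          exact hadj'.1
        exact hno u v' u.2 h1 v'.2 hv hmem
  exact key _ _ w hxL hyL

set_option maxHeartbeats 2000000 in
/-- A fan cannot be augmented into a 4-connected biplane graph. -/
theorem statement8 (S : Set Pt) (hfin : S.Finite)
    (E : Set (Sym2 Pt)) (hfan : IsFan S E)
    (E' : Set (Sym2 Pt)) (hE' : IsEdgeSetOn S E')
    (hbi : IsBiplaneGraph S (E ∪ E')) :
    ¬ KConnected 4 S (E ∪ E') := by
  classical
  intro hK
  obtain ⟨hn, hConn⟩ := hK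
  obtain ⟨hconv, _h3, v₀, hv₀S, hEeq⟩ := hfan
  obtain ⟨hEdgeAll, E₁, E₂, hUn, ⟨hE₁S, hP₁⟩, ⟨hE₂S, hP₂⟩⟩ := hbi
  set A := E ∪ E' with hA
  have hstarE : ∀ p ∈ S, p ≠ v₀ → s(v₀, p) ∈ A := by
    intro p hp hne
    have : s(v₀, p) ∈ E := by rw [hEeq]; exact Or.inr ⟨p, hp, hne, rfl⟩
    exact Or.inl this
  have hex : ∃ p ∈ S, p ≠ v₀ := Set.exists_ne_of_one_lt_ncard (by omega) v₀
  obtain ⟨m, v, hmcard, hvS, hvsurj, hvinj, hP1o, hP2o⟩ := fan_enum S hfin hconv v₀ hv₀S hex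
  have hm4 : 4 ≤ m := by omega
  -- specialized crossing lemmas
  have crossStar : ∀ w k z, w < k → k < z → z < m → Cross s(v w, v z) s(v₀, v k) := by
    intro w k z h1 h2 h3
    exact cross_star_gen v₀ (v w) (v k) (v z) (hP1o w k h1 (by omega)) (hP1o k z h2 h3)
      (hP1o w z (by omega) h3) (hP2o w k z h1 h2 h3)
  have crossChord : ∀ i j k l, i < j → j < k → k < l → l < m →
      Cross s(v i, v k) s(v j, v l) := by
    intro i j k l h1 h2 h3 h4
    exact cross_chord_gen (v i) (v j) (v k) (v l) (hP2o i j k h1 h2 (by omega))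
      (hP2o i j l h1 (by omega) h4) (hP2o i k l (by omega) h3 h4) (hP2o j k l h2 h3 h4)
  -- star edges are in A
  have hstarA : ∀ k, k < m → s(v₀, v k) ∈ A := fun k hk =>
    hstarE (v k) (hvS k hk).1 (hvS k hk).2
  have hstar12 : ∀ k, k < m → s(v₀, v k) ∈ E₁ ∪ E₂ := by
    intro k hk; rw [← hUn]; exact hstarA k hk
  -- an edge between two v's is distinct from a star edge
  have hne_star : ∀ w z k, w < m → z < m → s(v w, v z) ≠ s(v₀, v k) := by
    intro w z k hw hz h
    rcases Sym2.eq_iff.mp h with ⟨h1, _⟩ | ⟨_, h2⟩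
    · exact (hvS w hw).2 h1
    · exact (hvS z hz).2 h2
  -- main exclusion: an edge crossing a star edge cannot share its class
  have hexcl1 : ∀ e ∈ E₁, ∀ f ∈ E₁, e ≠ f → ¬ Cross e f := hP₁
  have hexcl2 : ∀ e ∈ E₂, ∀ f ∈ E₂, e ≠ f → ¬ Cross e f := hP₂
  -- CASE ANALYSIS
  by_cases hboth : ∃ k, 1 ≤ k ∧ k + 2 ≤ m ∧ s(v₀, v k) ∈ E₁ ∧ s(v₀, v k) ∈ E₂
  · -- 2-cut {v₀, v k}
    obtain ⟨k, hk1, hk2, hkE₁, hkE₂⟩ := hboth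
    have hkm : k < m := by omega
    set C : Set Pt := {v₀, v k} with hC
    have hCsub : C ⊆ S := by
      intro z hz; rcases hz with h | h
      · exact h ▸ hv₀S
      · exact h ▸ (hvS k hkm).1
    have hCcard : C.ncard < 4 := by
      rw [hC]
      have := Set.ncard_insert_le v₀ ({v k} : Set Pt)
      have h2 : ({v k} : Set Pt).ncard = 1 := Set.ncard_singleton _
      omega
    have hconn := hConn C hCsub hCcard
    set L : Set Pt := {p | ∃ j, j < k ∧ v j = p} with hL
    have hmem : ∀ i, i < m → i ≠ k → v i ∈ S \ C := by
      intro i hi hik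
      refine ⟨(hvS i hi).1, ?_⟩
      rintro (h | h)
      · exact (hvS i hi).2 h
      · exact hik (hvinj i k hi hkm h)
    refine not_connected_of_sep A (S \ C) L (v 0) (v (m-1))
      (hmem 0 (by omega) (by omega)) (hmem (m-1) (by omega) (by omega))
      ⟨0, by omega, rfl⟩ ?_ ?_ hconn
    · rintro ⟨j, hj1, hj2⟩
      have := hvinj j (m-1) (by omega) (by omega) hj2
      omega
    · rintro a b ⟨haS, haC⟩ ⟨w, hwk, rfl⟩ hbT hbL hab
      have hbne : b ≠ v₀ := by
        intro h; exact hbT.2 (by rw [h]; exact Or.inl rfl)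
      obtain ⟨z, hz, rfl⟩ := hvsurj b hbT.1 hbne
      have hzk : z ≠ k := by
        intro h; exact hbT.2 (by rw [h]; exact Or.inr rfl)
      have hzgt : k < z := by
        rcases Nat.lt_or_ge z k with h | h
        · exact absurd ⟨z, h, rfl⟩ hbL
        · omega
      have hcross := crossStar w k z hwk hzgt hz
      have hne := hne_star w z k (by omega) hz
      rcases (show s(v w, v z) ∈ E₁ ∪ E₂ by rw [← hUn]; exact hab) with h | h
      · exact hexcl1 _ h _ hkE₁ hne hcross
      · exact hexcl2 _ h _ hkE₂ hne hcross
  · -- all interior stars pure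
    push_neg at hboth
    have hpure : ∀ k, 1 ≤ k → k + 2 ≤ m → (s(v₀, v k) ∉ E₁ → s(v₀, v k) ∈ E₂) := by
      intro k h1 h2 h3
      rcases hstar12 k (by omega) with h | h
      · exact absurd h h3
      · exact h
    by_cases hconst : ∀ k, 1 ≤ k → k + 2 ≤ m →
        (s(v₀, v k) ∈ E₁ ↔ s(v₀, v 1) ∈ E₁)
    · -- constant case: all chords in one class
      obtain ⟨Eb, hEbplane, hchordb⟩ :
          ∃ Eb, (∀ e ∈ Eb, ∀ f ∈ Eb, e ≠ f → ¬ Cross e f) ∧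
            (∀ w z, w + 2 ≤ z → z < m → s(v w, v z) ∈ A → s(v w, v z) ∈ Eb) := by
        by_cases hγ : s(v₀, v 1) ∈ E₁
        · refine ⟨E₂, hP₂, ?_⟩
          intro w z hwz hz hmemA
          have hint : 1 ≤ w + 1 ∧ (w+1) + 2 ≤ m := ⟨by omega, by omega⟩
          have hstw : s(v₀, v (w+1)) ∈ E₁ := (hconst (w+1) hint.1 hint.2).mpr hγ
          have hcross := crossStar w (w+1) z (by omega) (by omega) hz
          have hne := hne_star w z (w+1) (by omega) hz
          rcases (show s(v w, v z) ∈ E₁ ∪ E₂ by rw [← hUn]; exact hmemA) with h | h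
          · exact absurd hcross (hP₁ _ h _ hstw hne)
          · exact h
        · have hγ2 : s(v₀, v 1) ∈ E₂ := hpure 1 (by omega) (by omega) hγ
          refine ⟨E₁, hP₁, ?_⟩
          intro w z hwz hz hmemA
          have hstw : s(v₀, v (w+1)) ∉ E₁ := by
            intro h
            exact hγ ((hconst (w+1) (by omega) (by omega)).mp h)
          have hstw2 : s(v₀, v (w+1)) ∈ E₂ := hpure (w+1) (by omega) (by omega) hstw
          have hcross := crossStar w (w+1) z (by omega) (by omega) hz
          have hne := hne_star w z (w+1) (by omega) hz
          rcases (show s(v w, v z) ∈ E₁ ∪ E₂ by rw [← hUn]; exact hmemA) with h | h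
          · exact h
          · exact absurd hcross (hP₂ _ h _ hstw2 hne)
      by_cases hCH : ∃ s t, s + 2 ≤ t ∧ t < m ∧ s(v s, v t) ∈ A ∧ ¬(s = 0 ∧ t = m - 1)
      · obtain ⟨s, t, hst, htm, hmemA, hnotfull⟩ := hCH
        set C : Set Pt := {v₀, v s, v t} with hC
        have hsm : s < m := by omega
        have hCsub : C ⊆ S := by
          intro z hz; rcases hz with h | h | h
          · exact h ▸ hv₀S
          · exact h ▸ (hvS s hsm).1
          · exact h ▸ (hvS t htm).1
        have hCcard : C.ncard < 4 := by
          rw [hC]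
          have h1 := Set.ncard_insert_le v₀ ({v s, v t} : Set Pt)
          have h2 := Set.ncard_insert_le (v s) ({v t} : Set Pt)
          have h3 : ({v t} : Set Pt).ncard = 1 := Set.ncard_singleton _
          omega
        have hconn := hConn C hCsub hCcard
        set L : Set Pt := {p | ∃ j, s < j ∧ j < t ∧ v j = p} with hL
        have hmem : ∀ i, i < m → i ≠ s → i ≠ t → v i ∈ S \ C := by
          intro i hi his hit
          refine ⟨(hvS i hi).1, ?_⟩
          rintro (h | h | h)
          · exact (hvS i hi).2 h
          · exact his (hvinj i s hi hsm h)
          · exact hit (hvinj i t hi htm h)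
        have hedge_no : ∀ a b : Pt, a ∈ S \ C → a ∈ L → b ∈ S \ C → b ∉ L → s(a, b) ∉ A := by
          rintro a b ⟨haS, haC⟩ ⟨w, hsw, hwt, rfl⟩ hbT hbL hab
          have hbne : b ≠ v₀ := fun h => hbT.2 (by rw [h]; exact Or.inl rfl)
          obtain ⟨z, hz, rfl⟩ := hvsurj b hbT.1 hbne
          have hzs : z ≠ s := fun h => hbT.2 (by rw [h]; exact Or.inr (Or.inl rfl))
          have hzt : z ≠ t := fun h => hbT.2 (by rw [h]; exact Or.inr (Or.inr rfl))
          have hzout : z < s ∨ t < z := by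
            rcases Nat.lt_or_ge z s with h | h
            · exact Or.inl h
            · rcases Nat.lt_or_ge z t with h2 | h2
              · exfalso; exact hbL ⟨z, by omega, by omega, rfl⟩
              · exact Or.inr (by omega)
          have hstEb : s(v s, v t) ∈ Eb := hchordb s t hst htm hmemA
          rcases hzout with hzlt | hzgt
          · -- chord (z, w) crosses (s, t)
            have hch : s(v z, v w) ∈ Eb := by
              apply hchordb z w (by omega) (by omega)
              rw [Sym2.eq_swap]; exact hab
            have hcr : Cross s(v z, v w) s(v s, v t) :=
              crossChord z s w t (by omega) (by omega) (by omega) htm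
            have hne : s(v z, v w) ≠ s(v s, v t) := by
              intro h
              rcases Sym2.eq_iff.mp h with ⟨h1, _⟩ | ⟨h1, _⟩
              · exact absurd (hvinj z s hz hsm h1) (by omega)
              · exact absurd (hvinj z t hz htm h1) (by omega)
            exact hEbplane _ hch _ hstEb hne hcr
          · -- chord (w, z) crosses (s, t)
            have hch : s(v w, v z) ∈ Eb := hchordb w z (by omega) hz hab
            have hcr : Cross s(v s, v t) s(v w, v z) :=
              crossChord s w t z hsw hwt hzgt hz
            have hne : s(v w, v z) ≠ s(v s, v t) := by
              intro h
              rcases Sym2.eq_iff.mp h with ⟨h1, _⟩ | ⟨h1, _⟩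
              · exact absurd (hvinj w s (by omega) hsm h1) (by omega)
              · exact absurd (hvinj w t (by omega) htm h1) (by omega)
            exact hEbplane _ hstEb _ hch (Ne.symm hne) hcr
        rcases Nat.eq_zero_or_pos s with hs0 | hspos
        · -- s = 0, so t < m - 1 ; separate using y = v (m-1)
          have htlt : t < m - 1 := by
            rcases Nat.lt_or_ge t (m-1) with h | h
            · exact h
            · exfalso; exact hnotfull ⟨hs0, by omega⟩
          exact hedge_no (v (s+1)) (v (m-1))
            (hmem (s+1) (by omega) (by omega) (by omega))
            ⟨s+1, by omega, by omega, rfl⟩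
            (hmem (m-1) (by omega) (by omega) (by omega))
            (by rintro ⟨j, hj1, hj2, hj3⟩
                have := hvinj j (m-1) (by omega) (by omega) hj3
                omega)
            (by exact absurd (hConn C hCsub hCcard) (not_connected_of_sep A (S \ C) L
                (v (s+1)) (v (m-1))
                (hmem (s+1) (by omega) (by omega) (by omega))
                (hmem (m-1) (by omega) (by omega) (by omega))
                ⟨s+1, by omega, by omega, rfl⟩
                (by rintro ⟨j, hj1, hj2, hj3⟩
                    have := hvinj j (m-1) (by omega) (by omega) hj3
                    omega)
                hedge_no))
        · -- s > 0 : use y = v 0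
          exact absurd (hConn C hCsub hCcard) (not_connected_of_sep A (S \ C) L
            (v (s+1)) (v 0)
            (hmem (s+1) (by omega) (by omega) (by omega))
            (hmem 0 (by omega) (by omega) (by omega))
            ⟨s+1, by omega, by omega, rfl⟩
            (by rintro ⟨j, hj1, hj2, hj3⟩
                have := hvinj j 0 (by omega) (by omega) hj3
                omega)
            hedge_no)
      · -- every chord is (0, m-1) : isolate v 2 by removing {v₀, v 1, v 3}
        push_neg at hCH
        set C : Set Pt := {v₀, v 1, v 3} with hC
        have hCsub : C ⊆ S := by
          intro z hz; rcases hz with h | h | h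
          · exact h ▸ hv₀S
          · exact h ▸ (hvS 1 (by omega)).1
          · exact h ▸ (hvS 3 (by omega)).1
        have hCcard : C.ncard < 4 := by
          rw [hC]
          have h1 := Set.ncard_insert_le v₀ ({v 1, v 3} : Set Pt)
          have h2 := Set.ncard_insert_le (v 1) ({v 3} : Set Pt)
          have h3 : ({v 3} : Set Pt).ncard = 1 := Set.ncard_singleton _
          omega
        have hmem : ∀ i, i < m → i ≠ 1 → i ≠ 3 → v i ∈ S \ C := by
          intro i hi h1 h3
          refine ⟨(hvS i hi).1, ?_⟩
          rintro (h | h | h)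
          · exact (hvS i hi).2 h
          · exact h1 (hvinj i 1 hi (by omega) h)
          · exact h3 (hvinj i 3 hi (by omega) h)
        refine absurd (hConn C hCsub hCcard) (not_connected_of_sep A (S \ C) {v 2}
          (v 2) (v 0)
          (hmem 2 (by omega) (by omega) (by omega))
          (hmem 0 (by omega) (by omega) (by omega))
          rfl
          (by intro h
              have := hvinj 0 2 (by omega) (by omega) h
              omega)
          ?_)
        rintro a b ⟨haS, haC⟩ haL hbT hbL hab
        have ha2 : a = v 2 := haL
        have hbne : b ≠ v₀ := fun h => hbT.2 (by rw [h]; exact Or.inl rfl)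
        obtain ⟨z, hz, rfl⟩ := hvsurj b hbT.1 hbne
        have hz1 : z ≠ 1 := fun h => hbT.2 (by rw [h]; exact Or.inr (Or.inl rfl))
        have hz3 : z ≠ 3 := fun h => hbT.2 (by rw [h]; exact Or.inr (Or.inr rfl))
        have hz2 : z ≠ 2 := by
          intro h
          exact hbL (by rw [h]; exact ha2 ▸ rfl)
        subst ha2
        rcases Nat.lt_or_ge z 2 with hlt | hge
        · -- z = 0 : chord (0, 2)
          have hz0 : z = 0 := by omega
          subst hz0
          have := hCH 0 2 (by omega) (by omega) (by rw [Sym2.eq_swap]; exact hab)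
          omega
        · -- z ≥ 4 : chord (2, z)
          have hz4 : 4 ≤ z := by omega
          have := hCH 2 z (by omega) hz hab
          omega
    · -- nonconstant case: find adjacent differing interior stars
      push_neg at hconst
      obtain ⟨k₀, hk₀1, hk₀2, hk₀ne⟩ := hconst
      have hstep : ∃ j, 1 ≤ j ∧ j + 3 ≤ m ∧
          ¬(s(v₀, v j) ∈ E₁ ↔ s(v₀, v (j+1)) ∈ E₁) := by
        by_contra hstep
        push_neg at hstep
        have hmono : ∀ d, 1 + d + 2 ≤ m → (s(v₀, v (1+d)) ∈ E₁ ↔ s(v₀, v 1) ∈ E₁) := by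
          intro d
          induction d with
          | zero => intro _; rfl
          | succ n ih =>
            intro hd
            have h1 : 1 + n + 2 ≤ m := by omega
            have h2 := ih h1
            have h3 := hstep (1+n) (by omega) (by omega)
            have : (1 + (n+1)) = (1 + n) + 1 := by omega
            rw [this]
            exact Iff.trans (Iff.symm h3) h2
        have : s(v₀, v k₀) ∈ E₁ ↔ s(v₀, v 1) ∈ E₁ := by
          have hk : k₀ = 1 + (k₀ - 1) := by omega
          rw [hk]
          exact hmono (k₀ - 1) (by omega)
        rcases hk₀ne with ⟨h1, h2⟩ | ⟨h1, h2⟩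
        · exact h2 (this.mp h1)
        · exact h1 (this.mpr h2)
      obtain ⟨j, hj1, hj3, hjne⟩ := hstep
      -- 3-cut {v₀, v j, v (j+1)}
      set C : Set Pt := {v₀, v j, v (j+1)} with hC
      have hjm : j < m := by omega
      have hj1m : j + 1 < m := by omega
      have hCsub : C ⊆ S := by
        intro z hz; rcases hz with h | h | h
        · exact h ▸ hv₀S
        · exact h ▸ (hvS j hjm).1
        · exact h ▸ (hvS (j+1) hj1m).1
      have hCcard : C.ncard < 4 := by
        rw [hC]
        have h1 := Set.ncard_insert_le v₀ ({v j, v (j+1)} : Set Pt)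
        have h2 := Set.ncard_insert_le (v j) ({v (j+1)} : Set Pt)
        have h3 : ({v (j+1)} : Set Pt).ncard = 1 := Set.ncard_singleton _
        omega
      set L : Set Pt := {p | ∃ w, w < j ∧ v w = p} with hL
      have hmem : ∀ i, i < m → i ≠ j → i ≠ j+1 → v i ∈ S \ C := by
        intro i hi h1 h2
        refine ⟨(hvS i hi).1, ?_⟩
        rintro (h | h | h)
        · exact (hvS i hi).2 h
        · exact h1 (hvinj i j hi hjm h)
        · exact h2 (hvinj i (j+1) hi hj1m h)
      refine absurd (hConn C hCsub hCcard) (not_connected_of_sep A (S \ C) L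
        (v 0) (v (m-1))
        (hmem 0 (by omega) (by omega) (by omega))
        (hmem (m-1) (by omega) (by omega) (by omega))
        ⟨0, by omega, rfl⟩
        (by rintro ⟨w, hw1, hw2⟩
            have := hvinj w (m-1) (by omega) (by omega) hw2
            omega)
        ?_)
      rintro a b ⟨haS, haC⟩ ⟨w, hwj, rfl⟩ hbT hbL hab
      have hbne : b ≠ v₀ := fun h => hbT.2 (by rw [h]; exact Or.inl rfl)
      obtain ⟨z, hz, rfl⟩ := hvsurj b hbT.1 hbne
      have hzj : z ≠ j := fun h => hbT.2 (by rw [h]; exact Or.inr (Or.inl rfl))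
      have hzj1 : z ≠ j+1 := fun h => hbT.2 (by rw [h]; exact Or.inr (Or.inr rfl))
      have hzgt : j + 1 < z := by
        rcases Nat.lt_or_ge z j with h | h
        · exact absurd ⟨z, h, rfl⟩ hbL
        · omega
      -- the edge crosses both star j and star (j+1), which are in different pure classes
      have hcross1 := crossStar w j z hwj (by omega) hz
      have hcross2 := crossStar w (j+1) z (by omega) hzgt hz
      have hne1 := hne_star w z j (by omega) hz
      have hne2 := hne_star w z (j+1) (by omega) hz
      rcases (show s(v w, v z) ∈ E₁ ∪ E₂ by rw [← hUn]; exact hab) with h | h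
      · by_cases hj' : s(v₀, v j) ∈ E₁
        · exact hexcl1 _ h _ hj' hne1 hcross1
        · have hj1' : s(v₀, v (j+1)) ∈ E₁ := by tauto
          exact hexcl1 _ h _ hj1' hne2 hcross2
      · by_cases hj' : s(v₀, v j) ∈ E₁
        · have hj1'not : s(v₀, v (j+1)) ∉ E₁ := by tauto
          have hj1' : s(v₀, v (j+1)) ∈ E₂ := hpure (j+1) (by omega) (by omega) hj1'not
          exact hexcl2 _ h _ hj1' hne2 hcross2
        · have hj2 : s(v₀, v j) ∈ E₂ := hpure j (by omega) (by omega) hj'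
          exact hexcl2 _ h _ hj2 hne1 hcross1
end

section
/- Let (S,E) be a wheel on a finite set S of points in general position. Then for every triangulation (S,E') of S, the biplane graph (S, E ∪ E') is not 4-connected. -/
noncomputable section
namespace S9aux

def xp (a b p : Pt) : ℝ := (b.1 - a.1) * (p.2 - a.2) - (b.2 - a.2) * (p.1 - a.1)

lemma xp_self_left (a b : Pt) : xp a b a = 0 := by simp [xp]
lemma xp_self_right (a b : Pt) : xp a b b = 0 := by simp [xp]; ring
lemma xp_swap (a b p : Pt) : xp b a p = - xp a b p := by simp [xp]; ring
lemma xp_rot (o p q : Pt) : xp o q p = - xp o p q := by simp [xp]; ring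

lemma xp_affine {s t : ℝ} (h : s + t = 1) (a b u w : Pt) :
    xp a b (s • u + t • w) = s * xp a b u + t * xp a b w := by
  have ht : t = 1 - s := by linarith
  subst ht
  simp only [xp, Prod.fst_add, Prod.snd_add, Prod.smul_fst, Prod.smul_snd, smul_eq_mul]
  ring

lemma collinear_of_xp_eq_zero {a b r : Pt} (h : xp a b r = 0) :
    Collinear ℝ ({a, b, r} : Set Pt) := by
  by_cases hab : b = a
  · rw [hab]
    rw [Set.insert_idem]
    exact collinear_pair ℝ a r
  · have hmem : a ∈ ({a, b, r} : Set Pt) := by simp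
    rw [collinear_iff_of_mem hmem]
    refine ⟨b - a, ?_⟩
    intro z hz
    have h2 : (b.1 - a.1) * (r.2 - a.2) = (b.2 - a.2) * (r.1 - a.1) := by
      simp only [xp] at h; linarith
    rcases hz with rfl | rfl | rfl
    · exact ⟨0, by simp⟩
    · exact ⟨1, by simp⟩
    · by_cases h1 : b.1 - a.1 ≠ 0
      · refine ⟨(z.1 - a.1)/(b.1 - a.1), ?_⟩
        have hx : ((z.1 - a.1)/(b.1 - a.1)) • (b - a) +ᵥ a =
            (((z.1 - a.1)/(b.1 - a.1)) * (b.1 - a.1) + a.1,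
             ((z.1 - a.1)/(b.1 - a.1)) * (b.2 - a.2) + a.2) := by
          ext <;> simp [Prod.smul_fst, Prod.smul_snd]
        rw [hx]
        ext
        · simp; field_simp; ring
        · simp; field_simp; linear_combination h2
      · push_neg at h1
        have h2' : b.2 - a.2 ≠ 0 := by
          intro hh
          exact hab (by ext <;> [linarith; linarith])
        refine ⟨(z.2 - a.2)/(b.2 - a.2), ?_⟩
        have hz1 : z.1 = a.1 := by
          have := h2
          rw [h1] at this
          simp at this
          rcases this with h' | h'
          · exact absurd h' h2'
          · linarith
        have hx : ((z.2 - a.2)/(b.2 - a.2)) • (b - a) +ᵥ a =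
            (((z.2 - a.2)/(b.2 - a.2)) * (b.1 - a.1) + a.1,
             ((z.2 - a.2)/(b.2 - a.2)) * (b.2 - a.2) + a.2) := by
          ext <;> simp [Prod.smul_fst, Prod.smul_snd]
        rw [hx]
        ext
        · simp [h1, hz1]
        · simp; field_simp; ring

lemma xp_ne_zero {S : Set Pt} (hgen : InGenPos S) {a b p : Pt}
    (ha : a ∈ S) (hb : b ∈ S) (hp : p ∈ S) (hab : a ≠ b) (hap : a ≠ p) (hbp : b ≠ p) :
    xp a b p ≠ 0 :=
  fun h => hgen a ha b hb p hp hab hap hbp (collinear_of_xp_eq_zero h)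

/-- Point on the line through `a,b` is an affine combination of `a,b`. -/
lemma exists_line_param {a b y : Pt} (hab : a ≠ b) (hy : xp a b y = 0) :
    ∃ μ : ℝ, y = (1 - μ) • a + μ • b := by
  have h2 : (b.1 - a.1) * (y.2 - a.2) = (b.2 - a.2) * (y.1 - a.1) := by
    simp only [xp] at hy; linarith
  by_cases h1 : b.1 - a.1 ≠ 0
  · refine ⟨(y.1 - a.1)/(b.1 - a.1), ?_⟩
    ext
    · simp only [Prod.fst_add, Prod.smul_fst, smul_eq_mul]
      field_simp
      ring
    · simp only [Prod.snd_add, Prod.smul_snd, smul_eq_mul]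
      field_simp
      linear_combination h2
  · push_neg at h1
    have h2' : b.2 - a.2 ≠ 0 := by
      intro hh; exact hab (by ext <;> [linarith; linarith])
    have hy1 : y.1 = a.1 := by
      rw [h1] at h2; simp at h2
      rcases h2 with h' | h'
      · exact absurd h' h2'
      · linarith
    refine ⟨(y.2 - a.2)/(b.2 - a.2), ?_⟩
    ext
    · simp only [Prod.fst_add, Prod.smul_fst, smul_eq_mul]
      have hb1 : b.1 = a.1 := by linarith
      rw [hb1, hy1]; ring
    · simp only [Prod.snd_add, Prod.smul_snd, smul_eq_mul]
      field_simp
      ring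

/-- Key geometric lemma: if `v,x` lie strictly on opposite sides of the line `ab`,
with all four points in a convex-position set `H`, then the open segments cross. -/
lemma seg_cross {H : Set Pt} (hconv : InConvexPos H)
    {a b v x : Pt} (ha : a ∈ H) (hb : b ∈ H) (hv : v ∈ H) (hx : x ∈ H)
    (hab : a ≠ b) (hva : v ≠ a) (hvb : v ≠ b) (hxa : x ≠ a) (hxb : x ≠ b) (hvx : v ≠ x)
    (h1 : 0 < xp a b v) (h2 : xp a b x < 0) :
    ((openSegment ℝ v x) ∩ (openSegment ℝ a b)).Nonempty := by
  set α : ℝ := xp a b v with hα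
  set β : ℝ := -xp a b x with hβ
  have hαpos : 0 < α := h1
  have hβpos : 0 < β := by simp [hβ]; linarith
  have hsum : 0 < α + β := by linarith
  set s : ℝ := β / (α + β) with hs
  set t : ℝ := α / (α + β) with ht
  have hst : s + t = 1 := by rw [hs, ht, ← add_div, add_comm β α, div_self (ne_of_gt hsum)]
  have hspos : 0 < s := div_pos hβpos hsum
  have htpos : 0 < t := div_pos hαpos hsum
  set y : Pt := s • v + t • x with hy
  have hyseg : y ∈ openSegment ℝ v x := ⟨s, t, hspos, htpos, hst, rfl⟩
  have hy0 : xp a b y = 0 := by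
    rw [hy, xp_affine hst]
    rw [hs, ht, ← hα]
    have : xp a b x = -β := by simp [hβ]
    rw [this]
    field_simp
    ring
  obtain ⟨μ, hμ⟩ := exists_line_param hab hy0
  have hymem : y ∈ convexHull ℝ ({v, x} : Set Pt) :=
    (openSegment_subset_segment ℝ v x).trans
      (segment_subset_convexHull (by simp) (by simp)) hyseg
  rcases le_or_gt μ 0 with hμ0 | hμpos
  · -- a ∈ conv {v, x, b} : contradiction with convex position
    exfalso
    have h1μ : (0:ℝ) < 1 - μ := by linarith
    have haseg : a ∈ segment ℝ y b := by
      refine ⟨1/(1-μ), -μ/(1-μ), by positivity, div_nonneg (by linarith) (le_of_lt h1μ), by field_simp; try ring, ?_⟩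
      rw [hμ]
      ext
      · simp only [Prod.fst_add, Prod.smul_fst, smul_eq_mul]
        field_simp
        try ring
      · simp only [Prod.snd_add, Prod.smul_snd, smul_eq_mul]
        field_simp
        try ring
    have hyc : y ∈ convexHull ℝ ({v, x, b} : Set Pt) :=
      convexHull_mono (by intro z hz; simp at hz ⊢; tauto) hymem
    have hbc : b ∈ convexHull ℝ ({v, x, b} : Set Pt) := subset_convexHull ℝ _ (by simp)
    have hac : a ∈ convexHull ℝ ({v, x, b} : Set Pt) :=
      (convex_convexHull ℝ _).segment_subset hyc hbc haseg
    have : a ∈ convexHull ℝ (H \ {a}) := by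
      refine convexHull_mono ?_ hac
      intro z hz
      simp only [Set.mem_insert_iff, Set.mem_singleton_iff] at hz
      rcases hz with rfl | rfl | rfl
      · exact ⟨hv, hva⟩
      · exact ⟨hx, hxa⟩
      · exact ⟨hb, Ne.symm hab⟩
    exact hconv a ha this
  rcases lt_or_ge μ 1 with hμ1 | hμ1
  · -- genuine crossing
    refine ⟨y, hyseg, ?_⟩
    exact ⟨1 - μ, μ, by linarith, hμpos, by ring, hμ.symm⟩
  · -- b ∈ conv {v, x, a}
    exfalso
    have hμpos' : (0:ℝ) < μ := by linarith
    have hbseg : b ∈ segment ℝ a y := by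
      refine ⟨(μ-1)/μ, 1/μ, div_nonneg (by linarith) (by linarith), by positivity, by field_simp; try ring, ?_⟩
      rw [hμ]
      ext
      · simp only [Prod.fst_add, Prod.smul_fst, smul_eq_mul]
        field_simp
        try ring
      · simp only [Prod.snd_add, Prod.smul_snd, smul_eq_mul]
        field_simp
        try ring
    have hyc : y ∈ convexHull ℝ ({v, x, a} : Set Pt) :=
      convexHull_mono (by intro z hz; simp at hz ⊢; tauto) hymem
    have hac : a ∈ convexHull ℝ ({v, x, a} : Set Pt) := subset_convexHull ℝ _ (by simp)
    have hbc : b ∈ convexHull ℝ ({v, x, a} : Set Pt) :=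
      (convex_convexHull ℝ _).segment_subset hac hyc hbseg
    have : b ∈ convexHull ℝ (H \ {b}) := by
      refine convexHull_mono ?_ hbc
      intro z hz
      simp only [Set.mem_insert_iff, Set.mem_singleton_iff] at hz
      rcases hz with rfl | rfl | rfl
      · exact ⟨hv, hvb⟩
      · exact ⟨hx, hxb⟩
      · exact ⟨ha, hab⟩
    exact hconv b hb this

/-- A point in the interior of the convex hull lies in the hull of the other points. -/
lemma center_mem {S : Set Pt} {c : Pt} (hfin : S.Finite) (hne : (S \ {c} : Set Pt).Nonempty)
    (hc : c ∈ interior (convexHull ℝ S)) : c ∈ convexHull ℝ (S \ {c} : Set Pt) := by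
  by_contra h
  obtain ⟨f, u, hfu, hux⟩ := geometric_hahn_banach_closed_point
    (convex_convexHull ℝ _) ((hfin.diff : (S \ {c} : Set Pt).Finite).isClosed_convexHull (𝕜 := ℝ)) h
  have hhalf : convexHull ℝ S ⊆ {z | f z ≤ f c} := by
    apply convexHull_min
    · intro p hp
      by_cases hpc : p = c
      · simp [hpc]
      · have : f p < u := hfu p (subset_convexHull ℝ _ ⟨hp, hpc⟩)
        simp only [Set.mem_setOf_eq]
        linarith
    · exact convex_halfSpace_le ⟨f.map_add, f.map_smul⟩ _
  obtain ⟨p₀, hp₀⟩ := hne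
  have hfp₀ : f p₀ < u := hfu p₀ (subset_convexHull ℝ _ hp₀)
  set g : Pt := c - p₀ with hg
  have hfg : 0 < f g := by
    rw [hg, map_sub]; linarith
  obtain ⟨ε, hε, hball⟩ := Metric.mem_nhds_iff.1 (mem_interior_iff_mem_nhds.1 hc)
  set δ : ℝ := ε / (2 * (‖g‖ + 1)) with hδ
  have hgnorm : 0 < ‖g‖ + 1 := by positivity
  have hδpos : 0 < δ := by positivity
  have hz : c + δ • g ∈ Metric.ball c ε := by
    simp only [Metric.mem_ball, dist_eq_norm]
    have : c + δ • g - c = δ • g := by abel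
    rw [this, norm_smul]
    simp only [Real.norm_eq_abs, abs_of_pos hδpos]
    have he2 : δ * (‖g‖ + 1) = ε / 2 := by
      rw [hδ]; field_simp
    nlinarith
  have hzc : f (c + δ • g) ≤ f c := hhalf (hball hz)
  rw [map_add, map_smul] at hzc
  simp only [smul_eq_mul] at hzc
  nlinarith

lemma isHullEdge_symm {S : Set Pt} {u v : Pt} (h : IsHullEdge S u v) : IsHullEdge S v u := by
  obtain ⟨huv, hside⟩ := h
  refine ⟨huv.symm, ?_⟩
  have hset : (S \ {v, u} : Set Pt) = S \ {u, v} := by rw [Set.pair_comm]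
  have hxp : ∀ p : Pt, (u.1 - v.1) * (p.2 - v.2) - (u.2 - v.2) * (p.1 - v.1)
      = -((v.1 - u.1) * (p.2 - u.2) - (v.2 - u.2) * (p.1 - u.1)) := by
    intro p; ring
  rcases hside with h | h
  · right; intro p hp
    rw [hxp p]
    have := h p (hset ▸ hp)
    linarith
  · left; intro p hp
    rw [hxp p]
    have := h p (hset ▸ hp)
    linarith

lemma isHullEdge_xp {S : Set Pt} {u v : Pt} (h : IsHullEdge S u v)
    {y z : Pt} (hy : y ∈ S) (hz : z ∈ S) (hyu : y ≠ u) (hyv : y ≠ v)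
    (hzu : z ≠ u) (hzv : z ≠ v) : 0 < xp u v y * xp u v z := by
  have hy' : y ∈ S \ ({u, v} : Set Pt) := ⟨hy, by simp [hyu, hyv]⟩
  have hz' : z ∈ S \ ({u, v} : Set Pt) := ⟨hz, by simp [hzu, hzv]⟩
  rcases h.2 with h' | h'
  · exact mul_pos (h' y hy') (h' z hz')
  · exact mul_pos_of_neg_of_neg (h' y hy') (h' z hz')

/-- A point has at most two hull-edge partners. -/
lemma hull_partners {S : Set Pt} (hgen : InGenPos S) {v x y z : Pt}
    (hvS : v ∈ S) (hxS : x ∈ S) (hyS : y ∈ S) (hzS : z ∈ S)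
    (hxy : x ≠ y) (hxz : x ≠ z) (hyz : y ≠ z)
    (hx : IsHullEdge S v x) (hy : IsHullEdge S v y) (hz : IsHullEdge S v z) :
    False := by
  have hvx : v ≠ x := hx.1
  have hvy : v ≠ y := hy.1
  have hvz : v ≠ z := hz.1
  have h1 : 0 < xp v x y * xp v x z :=
    isHullEdge_xp hx hyS hzS (Ne.symm hvy) (Ne.symm hxy) (Ne.symm hvz) (Ne.symm hxz)
  have h2 : 0 < xp v y x * xp v y z :=
    isHullEdge_xp hy hxS hzS (Ne.symm hvx) hxy (Ne.symm hvz) (Ne.symm hyz)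
  have h3 : 0 < xp v z x * xp v z y :=
    isHullEdge_xp hz hxS hyS (Ne.symm hvx) hxz (Ne.symm hvy) hyz
  set A := xp v x y with hA
  set B := xp v y z with hB
  set C := xp v z x with hC
  have e1 : xp v x z = -C := by rw [hC, xp_rot]
  have e2 : xp v y x = -A := by rw [hA, xp_rot]
  have e3 : xp v z y = -B := by rw [hB, xp_rot]
  rw [e1] at h1
  rw [e2] at h2
  rw [e3] at h3
  nlinarith [h1, h2, h3, sq_nonneg A, sq_nonneg B, sq_nonneg C, mul_pos h1 h3]

/-- A chord: an edge of `E'` between two distinct hull points which is not a hull edge. -/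
def IsChord (S : Set Pt) (c : Pt) (E' : Set (Sym2 Pt)) (a b : Pt) : Prop :=
  a ∈ S ∧ a ≠ c ∧ b ∈ S ∧ b ≠ c ∧ a ≠ b ∧ s(a, b) ∈ E' ∧ ¬ IsHullEdge S a b

def PosSide (S : Set Pt) (c a b : Pt) : Set Pt :=
  {q | q ∈ S ∧ q ≠ c ∧ 0 < xp a b q}

lemma chord_symm {S : Set Pt} {c : Pt} {E' : Set (Sym2 Pt)} {a b : Pt}
    (h : IsChord S c E' a b) : IsChord S c E' b a := by
  obtain ⟨h1, h2, h3, h4, h5, h6, h7⟩ := h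
  exact ⟨h3, h4, h1, h2, h5.symm, Sym2.eq_swap ▸ h6, fun hh => h7 (isHullEdge_symm hh)⟩

lemma both_sides {S : Set Pt} {c : Pt} {E' : Set (Sym2 Pt)}
    (hfin : S.Finite) (hgen : InGenPos S) (hcS : c ∈ S)
    (hcint : c ∈ interior (convexHull ℝ S))
    {a b : Pt} (hch : IsChord S c E' a b) : (PosSide S c a b).Nonempty := by
  obtain ⟨haS, hac, hbS, hbc, hab, hE, hnh⟩ := hch
  by_contra hemp
  have hneg : ∀ q ∈ S, q ≠ c → xp a b q ≤ 0 := by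
    intro q hq hqc
    by_contra hpos
    exact hemp ⟨q, hq, hqc, by linarith⟩
  have hcvx : Convex ℝ {z : Pt | xp a b z ≤ 0} := by
    intro z1 h1 z2 h2 sc tc hsc htc hstc
    simp only [Set.mem_setOf_eq] at h1 h2 ⊢
    rw [xp_affine hstc]
    nlinarith
  have hhalf : convexHull ℝ (S \ {c} : Set Pt) ⊆ {z : Pt | xp a b z ≤ 0} := by
    apply convexHull_min _ hcvx
    rintro q ⟨hqS, hqc⟩
    simp only [Set.mem_singleton_iff] at hqc
    exact hneg q hqS hqc
  have hcmem : c ∈ convexHull ℝ (S \ {c} : Set Pt) :=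
    center_mem hfin ⟨a, haS, by simp [hac]⟩ hcint
  have hc0 : xp a b c ≤ 0 := hhalf hcmem
  have hcne : xp a b c ≠ 0 :=
    xp_ne_zero hgen haS hbS hcS hab hac hbc
  have hall : ∀ p ∈ S \ ({a, b} : Set Pt),
      (b.1 - a.1) * (p.2 - a.2) - (b.2 - a.2) * (p.1 - a.1) < 0 := by
    rintro p ⟨hpS, hpab⟩
    simp only [Set.mem_insert_iff, Set.mem_singleton_iff, not_or] at hpab
    obtain ⟨hpa, hpb⟩ := hpab
    have : xp a b p < 0 := by
      by_cases hpc : p = c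
      · rw [hpc]; exact lt_of_le_of_ne hc0 hcne
      · exact lt_of_le_of_ne (hneg p hpS hpc)
          (xp_ne_zero hgen haS hbS hpS hab (Ne.symm hpa) (Ne.symm hpb))
    simpa [xp] using this
  exact hnh ⟨hab, Or.inr hall⟩

lemma exists_chordfree {S : Set Pt} {c : Pt} {E' : Set (Sym2 Pt)}
    (hfin : S.Finite) (hgen : InGenPos S) (hconv : InConvexPos (S \ {c}))
    (hcS : c ∈ S) (hcint : c ∈ interior (convexHull ℝ S))
    (hplane : ∀ e ∈ E', ∀ f ∈ E', e ≠ f → ¬ Cross e f)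
    (hne : (S \ {c} : Set Pt).Nonempty) :
    ∃ v ∈ S, v ≠ c ∧ ∀ x, ¬ IsChord S c E' v x := by
  by_cases hch : ∃ a b, IsChord S c E' a b
  · obtain ⟨a', b', hab'⟩ := hch
    set N : Set ℕ := {n | ∃ a b, IsChord S c E' a b ∧ n = (PosSide S c a b).ncard} with hN
    have hNne : N.Nonempty := ⟨_, a', b', hab', rfl⟩
    obtain ⟨a, b, hab, hm⟩ := Nat.sInf_mem hNne
    obtain ⟨v, hvS, hvc, hvpos⟩ := both_sides hfin hgen hcS hcint hab
    refine ⟨v, hvS, hvc, fun x hx => ?_⟩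
    obtain ⟨haS, hac, hbS, hbc, habne, habE, habnh⟩ := hab
    obtain ⟨-, -, hxS, hxc, hvx, hvxE, hvxnh⟩ := hx
    have hva : v ≠ a := fun h => by rw [h, xp_self_left] at hvpos; exact lt_irrefl 0 hvpos
    have hvb : v ≠ b := fun h => by rw [h, xp_self_right] at hvpos; exact lt_irrefl 0 hvpos
    have hxnonneg : 0 ≤ xp a b x := by
      by_cases hxa : x = a
      · rw [hxa, xp_self_left]
      by_cases hxb : x = b
      · rw [hxb, xp_self_right]
      rcases lt_or_ge (xp a b x) 0 with hneg | hpos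
      · exfalso
        obtain ⟨y, hy1, hy2⟩ := seg_cross hconv ⟨haS, by simp [hac]⟩ ⟨hbS, by simp [hbc]⟩
            ⟨hvS, by simp [hvc]⟩ ⟨hxS, by simp [hxc]⟩
            habne hva hvb hxa hxb hvx hvpos hneg
        refine hplane s(v,x) hvxE s(a,b) habE ?_ ⟨y, ?_, ?_⟩
        · intro he
          rcases Sym2.eq_iff.1 he with ⟨h1, h2⟩ | ⟨h1, h2⟩
          · exact hva h1
          · exact hvb h1
        · simpa [openSeg] using hy1
        · simpa [openSeg] using hy2
      · exact hpos
    obtain ⟨o, hoS, hoc, hov, hox, hoxp⟩ :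
        ∃ o, o ∈ S ∧ o ≠ c ∧ o ≠ v ∧ o ≠ x ∧ xp a b o = 0 := by
      by_cases hxa : x = a
      · refine ⟨b, hbS, hbc, Ne.symm hvb, ?_, xp_self_right a b⟩
        rw [hxa]; exact Ne.symm habne
      · exact ⟨a, haS, hac, Ne.symm hva, Ne.symm hxa, xp_self_left a b⟩
    have hd0 : xp v x o ≠ 0 :=
      xp_ne_zero hgen hvS hxS hoS hvx (Ne.symm hov) (Ne.symm hox)
    obtain ⟨p, q, hpq, hpqchord, hpqo⟩ :
        ∃ p q, ((p = v ∧ q = x) ∨ (p = x ∧ q = v)) ∧ IsChord S c E' p q ∧ xp p q o < 0 := by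
      rcases lt_or_gt_of_ne hd0 with hneg | hpos
      · exact ⟨v, x, Or.inl ⟨rfl, rfl⟩, ⟨hvS, hvc, hxS, hxc, hvx, hvxE, hvxnh⟩, hneg⟩
      · refine ⟨x, v, Or.inr ⟨rfl, rfl⟩,
          chord_symm ⟨hvS, hvc, hxS, hxc, hvx, hvxE, hvxnh⟩, ?_⟩
        rw [xp_swap]; linarith
    have hTne := both_sides hfin hgen hcS hcint hpqchord
    have hTN : (PosSide S c p q).ncard ∈ N := ⟨p, q, hpqchord, rfl⟩
    have hmin : (PosSide S c a b).ncard ≤ (PosSide S c p q).ncard := by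
      exact le_trans (le_of_eq hm.symm) (Nat.sInf_le hTN)
    have hsub : PosSide S c p q ⊆ (PosSide S c a b) \ {v} := by
      rintro q' ⟨hq'S, hq'c, hq'pos⟩
      have hq'o : q' ≠ o := fun h => by rw [h] at hq'pos; linarith
      have hq'p : q' ≠ p := fun h => by
        rw [h, xp_self_left] at hq'pos; exact lt_irrefl 0 hq'pos
      have hq'q : q' ≠ q := fun h => by
        rw [h, xp_self_right] at hq'pos; exact lt_irrefl 0 hq'pos
      have hpS : p ∈ S := by rcases hpq with ⟨rfl, rfl⟩ | ⟨rfl, rfl⟩ <;> assumption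
      have hqS : q ∈ S := by rcases hpq with ⟨rfl, rfl⟩ | ⟨rfl, rfl⟩ <;> assumption
      have hpc : p ≠ c := by rcases hpq with ⟨rfl, rfl⟩ | ⟨rfl, rfl⟩ <;> assumption
      have hqc : q ≠ c := by rcases hpq with ⟨rfl, rfl⟩ | ⟨rfl, rfl⟩ <;> assumption
      have hpqne : p ≠ q := by
        rcases hpq with ⟨rfl, rfl⟩ | ⟨rfl, rfl⟩; exacts [hvx, Ne.symm hvx]
      have hop : o ≠ p := by
        rcases hpq with ⟨rfl, rfl⟩ | ⟨rfl, rfl⟩; exacts [hov, hox]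
      have hoq : o ≠ q := by
        rcases hpq with ⟨rfl, rfl⟩ | ⟨rfl, rfl⟩; exacts [hox, hov]
      obtain ⟨y, hy1, hy2⟩ := seg_cross hconv ⟨hpS, by simp [hpc]⟩ ⟨hqS, by simp [hqc]⟩
          ⟨hq'S, by simp [hq'c]⟩ ⟨hoS, by simp [hoc]⟩
          hpqne hq'p hq'q hop hoq hq'o hq'pos hpqo
      obtain ⟨s1, t1, hs1, ht1, hst1, hy1eq⟩ := hy2
      have hyval : 0 < xp a b y := by
        rw [← hy1eq, xp_affine hst1]
        rcases hpq with ⟨rfl, rfl⟩ | ⟨rfl, rfl⟩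
        · nlinarith [mul_pos hs1 hvpos, mul_nonneg (le_of_lt ht1) hxnonneg]
        · nlinarith [mul_pos ht1 hvpos, mul_nonneg (le_of_lt hs1) hxnonneg]
      obtain ⟨s2, t2, hs2, ht2, hst2, hy2eq⟩ := hy1
      have hyval2 : xp a b y = s2 * xp a b q' + t2 * xp a b o := by
        rw [← hy2eq, xp_affine hst2]
      rw [hoxp, mul_zero, add_zero] at hyval2
      have hq'ab : 0 < xp a b q' := by
        rcases lt_or_ge 0 (xp a b q') with h' | h'
        · exact h'
        · nlinarith
      have hq'v : q' ≠ v := by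
        rcases hpq with ⟨rfl, rfl⟩ | ⟨rfl, rfl⟩; exacts [hq'p, hq'q]
      exact ⟨⟨hq'S, hq'c, hq'ab⟩, by simp [hq'v]⟩
    have hPfin : (PosSide S c a b).Finite := hfin.subset (fun z hz => hz.1)
    have hlt : (PosSide S c p q).ncard < (PosSide S c a b).ncard :=
      lt_of_le_of_lt (Set.ncard_le_ncard hsub hPfin.diff)
        (Set.ncard_diff_singleton_lt_of_mem ⟨hvS, hvc, hvpos⟩ hPfin)
    omega
  · push_neg at hch
    obtain ⟨v, hv⟩ := hne
    exact ⟨v, hv.1, by simpa using hv.2, fun x => hch v x⟩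

end S9aux
end

open S9aux in
/-- A wheel cannot be augmented by a second triangulation into a
4-connected biplane graph. -/
theorem statement9 (S : Set Pt) (hfin : S.Finite) (hgen : InGenPos S)
    (E : Set (Sym2 Pt)) (hwheel : IsWheel S E)
    (E' : Set (Sym2 Pt)) (htri' : IsTriangulation S E') :
    ¬ KConnected 4 S (E ∪ E') := by
  intro hK
  obtain ⟨c, hcS, hcint, huniq, hconvpos, hE⟩ := hwheel
  obtain ⟨⟨hE'edge, hE'plane⟩, -⟩ := htri'
  have hS5 : 4 < S.ncard := hK.1
  have hne : (S \ {c} : Set Pt).Nonempty := by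
    rcases Set.eq_empty_or_nonempty (S \ {c}) with h | h
    · exfalso
      have hsub : S ⊆ {c} := by
        intro z hz
        by_contra hzc
        exact (h ▸ (Set.notMem_empty z)) ⟨hz, hzc⟩
      have := Set.ncard_le_ncard hsub (Set.finite_singleton c)
      rw [Set.ncard_singleton] at this
      omega
    · exact h
  obtain ⟨v, hvS, hvc, hvchordfree⟩ :=
    exists_chordfree hfin hgen hconvpos hcS hcint hE'plane hne
  -- hull-edge partners of v
  obtain ⟨u₁, u₂, hpart⟩ :
      ∃ u₁ u₂ : Pt, ∀ x, x ∈ S → IsHullEdge S v x → x = u₁ ∨ x = u₂ := by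
    by_cases h1 : ∃ u, u ∈ S ∧ IsHullEdge S v u
    · obtain ⟨u₁, hu₁S, hu₁⟩ := h1
      by_cases h2 : ∃ u, u ∈ S ∧ u ≠ u₁ ∧ IsHullEdge S v u
      · obtain ⟨u₂, hu₂S, hu₂ne, hu₂⟩ := h2
        refine ⟨u₁, u₂, fun x hxS hx => ?_⟩
        by_contra hcon
        push_neg at hcon
        exact hull_partners hgen hvS hxS hu₁S hu₂S hcon.1 hcon.2
          (Ne.symm hu₂ne) hx hu₁ hu₂
      · push_neg at h2
        refine ⟨u₁, u₁, fun x hxS hx => Or.inl ?_⟩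
        by_contra hxx
        exact h2 x hxS hxx hx
    · push_neg at h1
      exact ⟨v, v, fun x hxS hx => absurd hx (h1 x hxS)⟩
  set C : Set Pt := {x | s(v, x) ∈ E ∪ E'} with hCdef
  have hCsub : C ⊆ ({u₁, u₂, c} : Set Pt) := by
    intro x hx
    simp only [hCdef, Set.mem_setOf_eq] at hx
    simp only [Set.mem_insert_iff, Set.mem_singleton_iff]
    rcases hx with hx | hx
    · rw [hE] at hx
      rcases hx with ⟨u', hu'S, v', hv'S, heq, hhull⟩ | ⟨p, hpS, hpc, heq⟩
      · rcases Sym2.eq_iff.1 heq with ⟨h1, h2⟩ | ⟨h1, h2⟩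
        · rw [← h1, ← h2] at hhull
          rw [← h2] at hv'S
          rcases hpart x hv'S hhull with h | h
          · exact Or.inl h
          · exact Or.inr (Or.inl h)
        · rw [← h2, ← h1] at hhull
          rw [← h2] at hu'S
          rcases hpart x hu'S (isHullEdge_symm hhull) with h | h
          · exact Or.inl h
          · exact Or.inr (Or.inl h)
      · rcases Sym2.eq_iff.1 heq with ⟨h1, h2⟩ | ⟨h1, h2⟩
        · exact absurd h1 hvc
        · exact Or.inr (Or.inr h2)
    · have hxS : x ∈ S := (hE'edge _ hx).2 x (Sym2.mem_mk_right v x)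
      have hxv : v ≠ x := by
        intro h
        exact (hE'edge _ hx).1 (h ▸ Sym2.mk_isDiag_iff.2 rfl)
      by_cases hxc : x = c
      · exact Or.inr (Or.inr hxc)
      · by_cases hh1 : IsHullEdge S v x
        · rcases hpart x hxS hh1 with h | h
          · exact Or.inl h
          · exact Or.inr (Or.inl h)
        · exfalso
          exact hvchordfree x ⟨hvS, hvc, hxS, hxc, hxv, hx, hh1⟩
  have hCS : C ⊆ S := by
    intro x hx
    simp only [hCdef, Set.mem_setOf_eq] at hx
    rcases hx with hx | hx
    · rw [hE] at hx
      rcases hx with ⟨u', hu'S, v', hv'S, heq, hhull⟩ | ⟨p, hpS, hpc, heq⟩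
      · rcases Sym2.eq_iff.1 heq with ⟨h1, h2⟩ | ⟨h1, h2⟩
        · exact h2 ▸ hv'S
        · exact h2 ▸ hu'S
      · rcases Sym2.eq_iff.1 heq with ⟨h1, h2⟩ | ⟨h1, h2⟩
        · exact h2 ▸ hpS
        · exact h2 ▸ hcS
    · exact (hE'edge _ hx).2 x (Sym2.mem_mk_right v x)
  have hvnotC : v ∉ C := by
    intro hv
    simp only [hCdef, Set.mem_setOf_eq] at hv
    have hdiag : (s(v, v) : Sym2 Pt).IsDiag := Sym2.mk_isDiag_iff.2 rfl
    rcases hv with hv | hv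
    · rw [hE] at hv
      rcases hv with ⟨u', hu'S, v', hv'S, heq, hhull⟩ | ⟨p, hpS, hpc, heq⟩
      · rcases Sym2.eq_iff.1 heq with ⟨h1, h2⟩ | ⟨h1, h2⟩ <;>
          exact hhull.1 (h1 ▸ h2 ▸ rfl)
      · rcases Sym2.eq_iff.1 heq with ⟨h1, h2⟩ | ⟨h1, h2⟩
        · exact hvc h1
        · exact hvc h2
    · exact (hE'edge _ hv).1 hdiag
  have hCcard : C.ncard < 4 := by
    have h3 : ({u₁, u₂, c} : Set Pt).ncard ≤ 3 := by
      calc ({u₁, u₂, c} : Set Pt).ncard ≤ ({u₂, c} : Set Pt).ncard + 1 :=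
            Set.ncard_insert_le _ _
        _ ≤ (({c} : Set Pt).ncard + 1) + 1 := by
            have := Set.ncard_insert_le u₂ ({c} : Set Pt)
            omega
        _ = 3 := by rw [Set.ncard_singleton]
    have := Set.ncard_le_ncard hCsub (Set.toFinite _)
    omega
  have hconn := hK.2 C hCS hCcard
  -- find another vertex y
  obtain ⟨y, hyS, hynotC, hyv⟩ : ∃ y, y ∈ S ∧ y ∉ C ∧ y ≠ v := by
    by_contra hcon
    push_neg at hcon
    have hsub : S ⊆ insert v ({u₁, u₂, c} : Set Pt) := by
      intro z hz
      by_cases hzC : z ∈ C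
      · exact Set.mem_insert_of_mem _ (hCsub hzC)
      · exact (hcon z hz hzC) ▸ Set.mem_insert _ _
    have h4 : (insert v ({u₁, u₂, c} : Set Pt)).ncard ≤ 4 := by
      have h1 := Set.ncard_insert_le v ({u₁, u₂, c} : Set Pt)
      have h2 := Set.ncard_insert_le u₁ ({u₂, c} : Set Pt)
      have h3 := Set.ncard_insert_le u₂ ({c} : Set Pt)
      have h4 := Set.ncard_singleton (c : Pt)
      omega
    have := Set.ncard_le_ncard hsub (Set.toFinite _)
    omega
  have hv' : v ∈ S \ C := ⟨hvS, hvnotC⟩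
  have hy' : y ∈ S \ C := ⟨hyS, hynotC⟩
  have hvy : (⟨v, hv'⟩ : ↥(S \ C)) ≠ ⟨y, hy'⟩ := by
    intro h
    exact hyv (congrArg Subtype.val h).symm
  obtain ⟨w⟩ := hconn.preconnected ⟨v, hv'⟩ ⟨y, hy'⟩
  have hnnil : ¬ w.Nil := SimpleGraph.Walk.not_nil_of_ne hvy
  have hadj := w.adj_snd hnnil
  have hadj' : (SimpleGraph.fromEdgeSet (E ∪ E')).Adj v ((w.getVert 1 : ↥(S \ C)) : Pt) := hadj
  rw [SimpleGraph.fromEdgeSet_adj] at hadj'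
  have hmem : ((w.getVert 1 : ↥(S \ C)) : Pt) ∈ C := by
    simp only [hCdef, Set.mem_setOf_eq]
    exact hadj'.1
  exact (w.getVert 1).2.2 hmem
end
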